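/- arXiv:1307.0767 — 5 statements merged into one kernel-verified Lean document; each statement's English description precedes it below -/
import Mathlib

section
/- Let A ⊆ ℕ with BD(A) = α > 0, and let (I_n) be a sequence of intervals in ℕ with |I_n| → ∞ and lim_{n→∞} |A ∩ I_n|/|I_n| = α. Then there is a set L ⊆ ℕ satisfying: (i) limsup_{n→∞} |L ∩ I_n|/|I_n| ≥ α; and (ii) for every finite F ⊆ L, the set A ∩ ⋂_{x∈F} (A − x) is infinite, where A − x := {a ∈ ℕ : a + x ∈ A}. -/
open Filter Finset
open scoped Classical
set_option maxHeartbeats 1000000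

/-- The (upper) Banach density of a set `A ⊆ ℕ`:
`BD(A) = lim_{n→∞} sup_{m∈ℕ} |A ∩ [m, m+n]| / n`. -/
noncomputable def banachDensity (A : Set ℕ) : ℝ :=
  Filter.atTop.limsup fun n : ℕ =>
    ⨆ m : ℕ, (Nat.card ↥(A ∩ Set.Icc m (m + n)) : ℝ) / n



noncomputable def cnt (B : Set ℕ) (u v : ℕ) : ℕ :=
  ((Finset.Icc u v).filter (fun x => x ∈ B)).card

lemma cnt_bridge (B : Set ℕ) (u v : ℕ) :
    Nat.card ↥(B ∩ Set.Icc u v) = cnt B u v := by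
  rw [Nat.card_coe_set_eq]
  have h : B ∩ Set.Icc u v = ↑((Finset.Icc u v).filter (fun x => x ∈ B)) := by
    ext x; simp [Set.mem_Icc, and_comm]
  rw [h, Set.ncard_coe_finset]; rfl

lemma cnt_le_card (B : Set ℕ) (u v : ℕ) : cnt B u v ≤ (Finset.Icc u v).card :=
  Finset.card_filter_le _ _

lemma cnt_window_le (B : Set ℕ) (x k : ℕ) : cnt B x (x + k) ≤ k + 1 := by
  have := cnt_le_card B x (x + k)
  rw [Nat.card_Icc] at this
  omega

lemma cnt_mono_set {B C : Set ℕ} (h : B ⊆ C) (u v : ℕ) : cnt B u v ≤ cnt C u v := by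
  apply Finset.card_le_card
  intro x hx
  simp only [Finset.mem_filter] at hx ⊢
  exact ⟨hx.1, h hx.2⟩

lemma cnt_mono_Icc (B : Set ℕ) {u v u' v' : ℕ} (h1 : u' ≤ u) (h2 : v ≤ v') :
    cnt B u v ≤ cnt B u' v' := by
  apply Finset.card_le_card
  intro x hx
  simp only [Finset.mem_filter, Finset.mem_Icc] at hx ⊢
  exact ⟨⟨h1.trans hx.1.1, hx.1.2.trans h2⟩, hx.2⟩

lemma cnt_split (B : Set ℕ) (u v w : ℕ) : cnt B u v ≤ cnt B u w + cnt B w v := by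
  calc cnt B u v ≤ ((Finset.Icc u w ∪ Finset.Icc w v).filter (fun x => x ∈ B)).card := by
        apply Finset.card_le_card
        intro x hx
        simp only [Finset.mem_filter, Finset.mem_Icc, Finset.mem_union] at hx ⊢
        refine ⟨?_, hx.2⟩
        omega
    _ ≤ _ := by
        rw [Finset.filter_union]
        exact Finset.card_union_le _ _

lemma sum_Icc_shift (f : ℕ → ℕ) (x k : ℕ) :
    ∑ t ∈ Finset.Icc x (x + k), f t = ∑ i ∈ Finset.range (k + 1), f (x + i) := by
  have h : Finset.Icc x (x + k) = Finset.map (addLeftEmbedding x) (Finset.Icc 0 k) := by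
    rw [Finset.map_add_left_Icc, Nat.add_zero]
  rw [h, Finset.sum_map]
  rw [Nat.range_eq_Icc_zero_sub_one _ (Nat.succ_ne_zero k)]
  norm_num

lemma cnt_as_sum (B : Set ℕ) (x k : ℕ) :
    cnt B x (x + k) = ∑ i ∈ Finset.range (k + 1), (if (x + i) ∈ B then 1 else 0) := by
  rw [cnt, Finset.card_filter, sum_Icc_shift]

/-- double counting -/
lemma dc (B : Set ℕ) (u P a' k : ℕ) :
    (k + 1) * cnt B (u + a' + k) (u + a' + P) ≤
      ∑ m ∈ Finset.Icc u (u + P), cnt B (m + a') (m + a' + k) := by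
  have h1 : ∀ m ∈ Finset.Icc u (u + P), cnt B (m + a') (m + a' + k)
      = ∑ i ∈ Finset.range (k + 1), (if (m + a' + i) ∈ B then 1 else 0) := by
    intro m _; exact cnt_as_sum B (m + a') k
  rw [Finset.sum_congr rfl h1, Finset.sum_comm]
  have h2 : ∀ i ∈ Finset.range (k + 1),
      cnt B (u + a' + k) (u + a' + P) ≤
        ∑ m ∈ Finset.Icc u (u + P), (if (m + a' + i) ∈ B then 1 else 0) := by
    intro i hi
    simp only [Finset.mem_range] at hi
    have h3 : ∑ m ∈ Finset.Icc u (u + P), (if (m + a' + i) ∈ B then 1 else 0)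
        = cnt B (u + a' + i) (u + a' + i + P) := by
      rw [sum_Icc_shift (fun m => if (m + a' + i) ∈ B then 1 else 0) u P, cnt_as_sum]
      apply Finset.sum_congr rfl
      intro r _
      have : u + r + a' + i = u + a' + i + r := by omega
      rw [this]
    rw [h3]
    exact cnt_mono_Icc B (by omega) (by omega)
  calc (k + 1) * cnt B (u + a' + k) (u + a' + P)
      = ∑ _i ∈ Finset.range (k + 1), cnt B (u + a' + k) (u + a' + P) := by
        rw [Finset.sum_const, Finset.card_range, smul_eq_mul]
    _ ≤ _ := Finset.sum_le_sum h2

/-- block decomposition upper bound -/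
lemma cnt_le_blocks (B : Set ℕ) (m n k : ℕ) :
    cnt B m (m + n) ≤ ∑ i ∈ Finset.range (n / (k + 1) + 1),
      cnt B (m + i * (k + 1)) (m + i * (k + 1) + k) := by
  unfold cnt
  calc #(filter (fun x => x ∈ B) (Finset.Icc m (m + n)))
      ≤ #(filter (fun x => x ∈ B) ((Finset.range (n / (k + 1) + 1)).biUnion
          (fun i => Finset.Icc (m + i * (k + 1)) (m + i * (k + 1) + k)))) := by
        apply Finset.card_le_card
        intro x hx
        simp only [Finset.mem_filter, Finset.mem_Icc, Finset.mem_biUnion,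
          Finset.mem_range] at hx ⊢
        refine ⟨⟨(x - m) / (k + 1), ?_, ?_, ?_⟩, hx.2⟩
        · have := Nat.div_le_div_right (c := k + 1) (by omega : x - m ≤ n)
          omega
        · have h1 := Nat.div_mul_le_self (x - m) (k + 1)
          omega
        · have h2 := Nat.div_add_mod' (x - m) (k + 1)
          have h3 := Nat.mod_lt (x - m) (show 0 < k + 1 by omega)
          have hxm : m ≤ x := hx.1.1
          omega
    _ ≤ _ := by
        rw [Finset.filter_biUnion]
        exact Finset.card_biUnion_le

section facts
variable {A : Set ℕ} {α : ℝ}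

lemma bd_pt (A : Set ℕ) (n m : ℕ) : ((cnt A m (m + n) : ℝ)) / n ≤ 2 := by
  rcases Nat.eq_zero_or_pos n with h | h
  · subst h; simp
  · rw [div_le_iff₀ (by positivity)]
    have h1 : (cnt A m (m + n) : ℝ) ≤ n + 1 := by
      exact_mod_cast cnt_window_le A m n
    have h2 : (1 : ℝ) ≤ n := by exact_mod_cast h
    linarith

lemma bd_bdd (A : Set ℕ) (n : ℕ) :
    BddAbove (Set.range fun m => (cnt A m (m + n) : ℝ) / n) := by
  refine ⟨2, ?_⟩
  rintro x ⟨m, rfl⟩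
  exact bd_pt A n m

lemma bd_eq (A : Set ℕ) : banachDensity A
    = Filter.atTop.limsup (fun n => ⨆ m, (cnt A m (m + n) : ℝ) / n) := by
  unfold banachDensity
  congr 1
  funext n
  congr 1
  funext m
  rw [cnt_bridge]

lemma SB_le (A : Set ℕ) (n : ℕ) : (⨆ m, (cnt A m (m + n) : ℝ) / n) ≤ 2 :=
  ciSup_le (bd_pt A n)

lemma SB_nonneg (A : Set ℕ) (n : ℕ) : 0 ≤ (⨆ m, (cnt A m (m + n) : ℝ) / n) :=
  Real.iSup_nonneg (fun m => by positivity)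

lemma SB_bddunder (A : Set ℕ) :
    IsBoundedUnder (· ≤ ·) Filter.atTop (fun n => ⨆ m, (cnt A m (m + n) : ℝ) / n) :=
  Filter.isBoundedUnder_of ⟨2, fun n => SB_le A n⟩

lemma factU (hα : banachDensity A = α) {ε : ℝ} (hε : 0 < ε) :
    ∃ N : ℕ, ∀ k, N ≤ k → ∀ x, (cnt A x (x + k) : ℝ) ≤ (α + ε) * k := by
  have h : Filter.atTop.limsup (fun n => ⨆ m, (cnt A m (m + n) : ℝ) / n) < α + ε := by
    rw [← bd_eq, hα]; linarith
  have h2 := Filter.eventually_lt_of_limsup_lt h (SB_bddunder A)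
  rw [Filter.eventually_atTop] at h2
  obtain ⟨N, hN⟩ := h2
  refine ⟨max N 1, fun k hk x => ?_⟩
  have h3 : (cnt A x (x + k) : ℝ) / k ≤ ⨆ m, (cnt A m (m + k) : ℝ) / k :=
    le_ciSup (bd_bdd A k) x
  have h4 := hN k (le_trans (le_max_left _ _) hk)
  have hk1 : (1 : ℝ) ≤ k := by
    have : 1 ≤ k := le_trans (le_max_right _ _) hk
    exact_mod_cast this
  have h5 : (cnt A x (x + k) : ℝ) / k < α + ε := lt_of_le_of_lt h3 h4
  rw [div_lt_iff₀ (by linarith)] at h5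
  linarith

lemma factL (hα : banachDensity A = α) {ε : ℝ} (hε : 0 < ε) (N : ℕ) :
    ∃ n, N ≤ n ∧ 1 ≤ n ∧ ∃ x, (α - ε) * n < (cnt A x (x + n) : ℝ) := by
  have h : α - ε < Filter.atTop.limsup (fun n => ⨆ m, (cnt A m (m + n) : ℝ) / n) := by
    rw [← bd_eq, hα]; linarith
  have hcb : Filter.IsCoboundedUnder (· ≤ ·) Filter.atTop
      (fun n => ⨆ m, (cnt A m (m + n) : ℝ) / n) :=
    Filter.IsBoundedUnder.isCoboundedUnder_le (Filter.isBoundedUnder_of ⟨0, fun n => SB_nonneg A n⟩)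
  have h2 := Filter.frequently_lt_of_lt_limsup hcb h
  have h3 := (h2.and_eventually (Filter.eventually_ge_atTop (max N 1))).exists
  obtain ⟨n, hn1, hn2⟩ := h3
  refine ⟨n, le_trans (le_max_left _ _) hn2, le_trans (le_max_right _ _) hn2, ?_⟩
  rw [lt_ciSup_iff (bd_bdd A n)] at hn1
  obtain ⟨x, hx⟩ := hn1
  refine ⟨x, ?_⟩
  have hn1' : (1:ℕ) ≤ n := le_trans (le_max_right _ _) hn2
  have hnr : (0:ℝ) < n := by exact_mod_cast hn1'
  rw [lt_div_iff₀ hnr] at hx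
  linarith

lemma factC (hα : banachDensity A = α) (hpos : 0 < α) {δ : ℝ} (hδ : 0 < δ) :
    ∃ C : ℝ, 0 ≤ C ∧ ∀ x k, (cnt A x (x + k) : ℝ) ≤ (α + δ) * k + C := by
  obtain ⟨N, hN⟩ := factU hα hδ
  refine ⟨(N:ℝ) + 1, add_nonneg (Nat.cast_nonneg N) zero_le_one, fun x k => ?_⟩
  rcases le_or_gt N k with h | h
  · have := hN k h x
    have hC : (0:ℝ) ≤ (N:ℝ) + 1 := add_nonneg (Nat.cast_nonneg N) zero_le_one
    linarith
  · have h1 : (cnt A x (x + k) : ℝ) ≤ k + 1 := by exact_mod_cast cnt_window_le A x k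
    have h2 : (k:ℝ) + 1 ≤ N + 1 := by
      have : (k:ℝ) ≤ N := by exact_mod_cast h.le
      linarith
    nlinarith [(Nat.cast_nonneg k : (0:ℝ) ≤ (k:ℝ))]


lemma cnt_le_trunc (A : Set ℕ) (M u v : ℕ) :
    cnt A u v ≤ cnt (A ∩ {x | M ≤ x}) u v + M := by
  unfold cnt
  have h1 : (Finset.Icc u v).filter (fun x => x ∈ A)
      ⊆ (Finset.Icc u v).filter (fun x => x ∈ A ∩ {x | M ≤ x}) ∪ Finset.range M := by
    intro x hx
    simp only [Finset.mem_filter, Finset.mem_union, Finset.mem_range, Set.mem_inter_iff,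
      Set.mem_setOf_eq] at hx ⊢
    rcases le_or_gt M x with h | h
    · exact Or.inl ⟨hx.1, hx.2, h⟩
    · exact Or.inr h
  calc ((Finset.Icc u v).filter (fun x => x ∈ A)).card
      ≤ ((Finset.Icc u v).filter (fun x => x ∈ A ∩ {x | M ≤ x}) ∪ Finset.range M).card :=
        Finset.card_le_card h1
    _ ≤ _ := by
        refine le_trans (Finset.card_union_le _ _) ?_
        simp

lemma factF5 (hα : banachDensity A = α) (hpos : 0 < α) (M k : ℕ) :
    ∃ c, α * (k + 1) ≤ (cnt (A ∩ {x | M ≤ x}) c (c + k) : ℝ) := by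
  by_contra hcon
  push_neg at hcon
  set A2 := A ∩ {x | M ≤ x} with hA2
  have hx0 : (0:ℝ) < α * (k + 1) := by positivity
  set G : ℕ := ⌈α * (k + 1)⌉₊ - 1 with hG
  have hceil : 1 ≤ ⌈α * (k + 1)⌉₊ := Nat.one_le_iff_ne_zero.mpr (by
    intro h; have := Nat.ceil_pos.mpr hx0; omega)
  have hGlt : (G:ℝ) < α * (k + 1) := by
    have h1 : (⌈α * (k + 1)⌉₊ : ℝ) < α * (k + 1) + 1 := Nat.ceil_lt_add_one hx0.le
    have h2 : (G:ℝ) = (⌈α * (k + 1)⌉₊ : ℝ) - 1 := by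
      rw [hG]; push_cast [hceil]; ring
    linarith
  have hGb : ∀ c, cnt A2 c (c + k) ≤ G := by
    intro c
    have h1 : cnt A2 c (c + k) < ⌈α * (k + 1)⌉₊ := Nat.lt_ceil.mpr (hcon c)
    omega
  set ε : ℝ := (α * (k + 1) - G) / (2 * (k + 1)) with hε
  have hk1 : (0:ℝ) < (k:ℝ) + 1 := by positivity
  have hεpos : 0 < ε := by
    apply div_pos (by linarith) (by linarith)
  set N : ℕ := ⌈((G:ℝ) + M) / ε⌉₊ + 1 with hN
  obtain ⟨n, hnN, hn1, x, hxlt⟩ := factL hα hεpos N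
  -- upper bound the count
  have hchain : (cnt A x (x + n) : ℝ) ≤ ((n:ℝ) / (k + 1) + 1) * G + M := by
    have h1 : cnt A x (x + n) ≤ cnt A2 x (x + n) + M := cnt_le_trunc A M x (x + n)
    have h2 : cnt A2 x (x + n) ≤ ∑ i ∈ Finset.range (n / (k + 1) + 1),
        cnt A2 (x + i * (k + 1)) (x + i * (k + 1) + k) := cnt_le_blocks A2 x n k
    have h3 : ∑ i ∈ Finset.range (n / (k + 1) + 1),
        cnt A2 (x + i * (k + 1)) (x + i * (k + 1) + k) ≤ (n / (k + 1) + 1) * G := by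
      refine le_trans (Finset.sum_le_card_nsmul _ _ G (fun i _ => hGb _)) ?_
      simp [Finset.card_range, mul_comm]
    have h4 : (cnt A x (x + n) : ℝ) ≤ ((n / (k + 1) + 1 : ℕ) : ℝ) * G + M := by
      have := le_trans h1 (Nat.add_le_add_right (le_trans h2 h3) M)
      exact_mod_cast this
    refine le_trans h4 ?_
    have h5 : ((n / (k + 1) + 1 : ℕ) : ℝ) ≤ (n:ℝ) / ((k:ℝ) + 1) + 1 := by
      push_cast
      have := Nat.cast_div_le (α := ℝ) (m := n) (n := k + 1)
      push_cast at this
      linarith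
    have hG0 : (0:ℝ) ≤ G := Nat.cast_nonneg G
    nlinarith
  -- derive contradiction
  have hnr : (0:ℝ) < n := by exact_mod_cast hn1
  have hgeq : (G:ℝ) = α * (k + 1) - 2 * ε * (k + 1) := by
    rw [hε]; field_simp; ring
  have hNn : ((G:ℝ) + M) / ε < n := by
    have h1 : ((G:ℝ) + M) / ε ≤ (⌈((G:ℝ) + M) / ε⌉₊ : ℝ) := Nat.le_ceil _
    have h2 : ((⌈((G:ℝ) + M) / ε⌉₊ : ℕ) : ℝ) + 1 ≤ (n:ℝ) := by
      have : N ≤ n := hnN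
      rw [hN] at this
      exact_mod_cast this
    linarith
  have hεn : (G:ℝ) + M < ε * n := by
    rw [div_lt_iff₀ hεpos] at hNn
    linarith
  have hkey : (α - ε) * n < ((n:ℝ) / (k + 1) + 1) * G + M := lt_of_lt_of_le hxlt hchain
  have hdiv : (n:ℝ) / (k + 1) * ((k:ℝ) + 1) = n := div_mul_cancel₀ _ (by linarith)
  nlinarith [div_nonneg hnr.le hk1.le]

end facts

noncomputable def epsf (γ : ℝ) (j : ℕ) : ℝ := γ / 2 ^ (j + 4)
noncomputable def etaf (γ : ℝ) (j : ℕ) : ℝ := epsf γ j * epsf γ j / 4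

lemma epsf_pos {γ : ℝ} (hγ : 0 < γ) (j : ℕ) : 0 < epsf γ j := by
  unfold epsf; positivity

lemma epsf_le_one {γ : ℝ} (hγ0 : 0 < γ) (hγ1 : γ ≤ 1) (j : ℕ) : epsf γ j ≤ 1 := by
  unfold epsf
  rw [div_le_one (by positivity)]
  calc γ ≤ 1 := hγ1
    _ ≤ 2 ^ (j + 4) := one_le_pow₀ (by norm_num)

lemma epsf_le_gamma {γ : ℝ} (hγ0 : 0 < γ) (j : ℕ) : epsf γ j ≤ γ := by
  unfold epsf
  rw [div_le_iff₀ (by positivity)]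
  nlinarith [one_le_pow₀ (show (1:ℝ) ≤ 2 by norm_num) (n := j + 4)]

lemma epsf_anti {γ : ℝ} (hγ : 0 < γ) {j r : ℕ} (h : j ≤ r) : epsf γ r ≤ epsf γ j := by
  unfold epsf
  apply div_le_div_of_nonneg_left hγ.le (by positivity)
  exact pow_le_pow_right₀ (by norm_num) (by omega)

lemma etaf_pos {γ : ℝ} (hγ : 0 < γ) (j : ℕ) : 0 < etaf γ j := by
  have := epsf_pos hγ j; unfold etaf; positivity

lemma etaf_le {γ : ℝ} (hγ0 : 0 < γ) (hγ1 : γ ≤ 1) (j : ℕ) : etaf γ j ≤ epsf γ j * epsf γ j := by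
  have := epsf_pos hγ0 j
  unfold etaf; nlinarith

lemma etaf_le_one {γ : ℝ} (hγ0 : 0 < γ) (hγ1 : γ ≤ 1) (j : ℕ) : etaf γ j ≤ 1 := by
  have h1 := epsf_pos hγ0 j
  have h2 := epsf_le_one hγ0 hγ1 j
  unfold etaf; nlinarith

lemma etaf_anti {γ : ℝ} (hγ0 : 0 < γ) {j r : ℕ} (h : j ≤ r) : etaf γ r ≤ etaf γ j := by
  have h1 := epsf_pos hγ0 r
  have h2 := epsf_pos hγ0 j
  have h3 := epsf_anti hγ0 h
  unfold etaf; nlinarith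

lemma etaf_le_quarter_gamma {γ : ℝ} (hγ0 : 0 < γ) (hγ1 : γ ≤ 1) (j : ℕ) : etaf γ j ≤ γ / 4 := by
  have h1 := epsf_pos hγ0 j
  have h2 := epsf_le_one hγ0 hγ1 j
  have h3 := epsf_le_gamma hγ0 j
  unfold etaf; nlinarith

section main
variable {A : Set ℕ} {α : ℝ}

lemma geom_bound {γ : ℝ} (hγ : 0 < γ) (r : ℕ) :
    ∑ j ∈ Finset.range (r + 1), epsf γ j ≤ γ / 8 := by
  have h1 : ∀ j ∈ Finset.range (r + 1), epsf γ j = γ / 16 * (1 / 2) ^ j := by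
    intro j _
    unfold epsf
    rw [pow_add, one_div, inv_pow]
    rw [div_eq_mul_inv, div_eq_mul_inv, mul_inv, show ((2:ℝ)^4)⁻¹ = (16:ℝ)⁻¹ by norm_num]
    ring
  rw [Finset.sum_congr rfl h1, ← Finset.mul_sum]
  have h2 : ∑ j ∈ Finset.range (r + 1), ((1:ℝ) / 2) ^ j ≤ 2 := by
    rw [geom_sum_eq (by norm_num : (1:ℝ)/2 ≠ 1)]
    have h3 : (0:ℝ) ≤ (1/2 : ℝ) ^ (r + 1) := by positivity
    have : ((1:ℝ)/2) ^ (r+1) - 1 = -(1 - (1/2)^(r+1)) := by ring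
    rw [this]
    rw [show ((1:ℝ)/2 - 1) = -(1/2) by norm_num, neg_div_neg_eq]
    rw [div_le_iff₀ (by norm_num)]
    linarith
  nlinarith

lemma main_nonempty (hα : banachDensity A = α) (hpos : 0 < α)
    {γ : ℝ} (hγ0 : 0 < γ) (hγα : γ ≤ α) (hγ1 : γ ≤ 1)
    (aj kj : ℕ → ℕ)
    (hwin : ∀ j m, (cnt A (m + aj j) (m + aj j + kj j) : ℝ) ≤ (α + etaf γ j) * (kj j))
    (r : ℕ) :
    ∃ m, m ∈ A ∧ r ≤ m ∧
      ∀ j ≤ r, (α - epsf γ j) * (kj j + 1) ≤ (cnt A (m + aj j) (m + aj j + kj j) : ℝ) := by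
  classical
  set δ : ℝ := etaf γ r with hδdef
  have hδpos : 0 < δ := etaf_pos hγ0 r
  have hδ1 : δ ≤ 1 := etaf_le_one hγ0 hγ1 r
  have hδγ4 : δ ≤ γ / 4 := etaf_le_quarter_gamma hγ0 hγ1 r
  obtain ⟨C, hC0, hC⟩ := factC hα hpos hδpos
  -- choose L
  have hev : ∀ c β : ℝ, 0 < β → ∀ᶠ (L : ℕ) in Filter.atTop, c ≤ β * L := by
    intro c β hβ
    filter_upwards [(tendsto_natCast_atTop_atTop (R := ℝ)).eventually_ge_atTop (c / β)] with L hL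
    rw [div_le_iff₀ hβ] at hL
    linarith
  have hevL : ∀ᶠ (L : ℕ) in Filter.atTop, (1 ≤ L ∧ 2 * C + 2 ≤ α * L) ∧
      ∀ j ∈ Finset.range (r + 1), aj j + kj j ≤ L ∧
        4 * ((α + 1) * (kj j + 1) + 2 * C) ≤ (epsf γ j) * (epsf γ j) * L := by
    refine Filter.Eventually.and (Filter.Eventually.and (Filter.eventually_ge_atTop 1) ?_) ?_
    · exact hev _ _ hpos
    · rw [Filter.eventually_all_finset]
      intro j _
      refine Filter.Eventually.and (Filter.eventually_ge_atTop _) ?_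
      have := epsf_pos hγ0 j
      exact hev _ _ (by positivity)
  obtain ⟨L, ⟨⟨hL1, hLC⟩, hLj'⟩⟩ := hevL.exists
  have hLj : ∀ j, j ≤ r → aj j + kj j ≤ L ∧
      4 * ((α + 1) * (kj j + 1) + 2 * C) ≤ (epsf γ j) * (epsf γ j) * L := by
    intro j hj; exact hLj' j (Finset.mem_range.mpr (by omega))
  set A2 : Set ℕ := A ∩ {x | r ≤ x} with hA2def
  have hA2sub : A2 ⊆ A := Set.inter_subset_left
  obtain ⟨c, hc⟩ := factF5 hα hpos r (2 * L)
  rw [← hA2def] at hc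
  set T : Finset ℕ := Finset.Icc c (c + L) with hTdef
  have hTcard : T.card = L + 1 := by rw [hTdef, Nat.card_Icc]; omega
  -- count of A2 in T is large
  have hg0 : (α - δ) * L - C ≤ ((T.filter (fun m => m ∈ A2)).card : ℝ) := by
    have h1 : cnt A2 c (c + 2 * L) ≤ cnt A2 c (c + L) + cnt A2 (c + L) (c + 2 * L) :=
      cnt_split A2 c (c + 2 * L) (c + L)
    have h2 : (cnt A2 (c + L) (c + 2 * L) : ℝ) ≤ (α + δ) * L + C := by
      have e : c + 2 * L = (c + L) + L := by omega
      rw [e]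
      exact le_trans (by exact_mod_cast cnt_mono_set hA2sub (c + L) (c + L + L)) (hC (c + L) L)
    have h3 : ((T.filter (fun m => m ∈ A2)).card : ℝ) = (cnt A2 c (c + L) : ℝ) := by
      have : (T.filter (fun m => m ∈ A2)).card = cnt A2 c (c + L) := by
        unfold cnt
        congr 1
        ext x
        simp [hTdef]
      exact_mod_cast this
    rw [h3]
    have h1' : (cnt A2 c (c + 2 * L) : ℝ) ≤ (cnt A2 c (c + L) : ℝ) + (cnt A2 (c + L) (c + 2 * L) : ℝ) := by
      exact_mod_cast h1
    have hcast : ((2 * L : ℕ) : ℝ) = 2 * (L : ℝ) := by push_cast; ring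
    rw [hcast] at hc
    nlinarith
  -- bad sets are small
  set Bad : ℕ → Finset ℕ := fun j => T.filter
    (fun m => (cnt A2 (m + aj j) (m + aj j + kj j) : ℝ) < (α - epsf γ j) * (kj j + 1)) with hBaddef
  have hBad : ∀ j, j ≤ r → ((Bad j).card : ℝ) ≤ epsf γ j * L := by
    intro j hj
    obtain ⟨hLj1, hLj2⟩ := hLj j hj
    set ε : ℝ := epsf γ j with hεdef
    set η : ℝ := etaf γ j with hηdef
    have hεpos : 0 < ε := epsf_pos hγ0 j
    have hηpos : 0 < η := etaf_pos hγ0 j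
    have hη1 : η ≤ 1 := etaf_le_one hγ0 hγ1 j
    have hδη : δ ≤ η := etaf_anti hγ0 hj
    have hηε : η = ε * ε / 4 := rfl
    set K : ℕ := kj j with hKdef
    set aJ : ℕ := aj j with haJdef
    set D : ℝ := (α + 1) * ((K:ℝ) + 1) + 2 * C with hDdef
    have hD0 : α + η ≤ D := by
      have : (0:ℝ) ≤ (K:ℝ) := Nat.cast_nonneg K
      rw [hDdef]; nlinarith
    -- lower bound for the middle count G
    set G : ℕ := cnt A2 (c + aJ + K) (c + aJ + L) with hGdef
    have hG : (α - δ) * L - D ≤ (G:ℝ) := by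
      have hs1 : cnt A2 c (c + 2 * L) ≤ cnt A2 c (c + (aJ + K)) + cnt A2 (c + (aJ + K)) (c + 2 * L) :=
        cnt_split A2 c (c + 2 * L) (c + (aJ + K))
      have hs2 : cnt A2 (c + (aJ + K)) (c + 2 * L)
          ≤ cnt A2 (c + (aJ + K)) (c + aJ + L) + cnt A2 (c + aJ + L) (c + 2 * L) :=
        cnt_split A2 (c + (aJ + K)) (c + 2 * L) (c + aJ + L)
      have hside1 : (cnt A2 c (c + (aJ + K)) : ℝ) ≤ (α + δ) * ((aJ:ℝ) + K) + C := by
        have hm : (cnt A2 c (c + (aJ + K)) : ℝ) ≤ (cnt A c (c + (aJ + K)) : ℝ) := by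
          exact_mod_cast cnt_mono_set hA2sub c (c + (aJ + K))
        have h := hC c (aJ + K)
        push_cast at h
        linarith
      have e3 : c + 2 * L = (c + aJ + L) + (L - aJ) := by omega
      have hside3 : (cnt A2 (c + aJ + L) (c + 2 * L) : ℝ) ≤ (α + δ) * ((L:ℝ) - aJ) + C := by
        rw [e3]
        have hm : (cnt A2 (c + aJ + L) ((c + aJ + L) + (L - aJ)) : ℝ)
            ≤ (cnt A (c + aJ + L) ((c + aJ + L) + (L - aJ)) : ℝ) := by
          exact_mod_cast cnt_mono_set hA2sub (c + aJ + L) ((c + aJ + L) + (L - aJ))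
        have h := hC (c + aJ + L) (L - aJ)
        have hcast : ((L - aJ : ℕ) : ℝ) = (L:ℝ) - (aJ:ℝ) := by
          have haJL : aJ ≤ L := by omega
          push_cast [haJL]
          ring
        rw [hcast] at h
        linarith
      have hmid : cnt A2 (c + (aJ + K)) (c + aJ + L) = G := by
        rw [hGdef]
        congr 1
        omega
      rw [hmid] at hs2
      have hs1' : (cnt A2 c (c + 2 * L) : ℝ)
          ≤ (cnt A2 c (c + (aJ + K)) : ℝ) + (G:ℝ) + (cnt A2 (c + aJ + L) (c + 2 * L) : ℝ) := by
        have := (Nat.cast_le (α := ℝ)).mpr (le_trans hs1 (Nat.add_le_add_left hs2 _))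
        push_cast at this
        linarith
      have hcast2 : ((2 * L : ℕ) : ℝ) = 2 * (L:ℝ) := by push_cast; ring
      rw [hcast2] at hc
      have hK0 : (0:ℝ) ≤ (K:ℝ) := Nat.cast_nonneg K
      have hKd : (0:ℝ) ≤ (1 - δ) * K := mul_nonneg (by linarith) hK0
      have hexp1 : (α + δ) * ((aJ:ℝ) + K) + (α + δ) * ((L:ℝ) - aJ)
          = α * L + δ * L + α * K + δ * K := by ring
      have hexp2 : ((α - δ) * (L:ℝ) - ((α + 1) * ((K:ℝ) + 1) + 2 * C))
          = α * L - δ * L - α * K - K - α - 1 - 2 * C := by ring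
      have hexp3 : α * (2 * (L:ℝ) + 1) = 2 * (α * L) + α := by ring
      have hKd' : δ * K ≤ K := by nlinarith
      rw [hDdef, hexp2]
      nlinarith [hc, hs1', hside1, hside3, hpos]
    -- double counting
    have hdc : ((K:ℝ) + 1) * (G:ℝ) ≤ ∑ m ∈ T, (cnt A2 (m + aJ) (m + aJ + K) : ℝ) := by
      have := dc A2 c L aJ K
      have hcast : ((∑ m ∈ Finset.Icc c (c + L), cnt A2 (m + aJ) (m + aJ + K) : ℕ) : ℝ)
          = ∑ m ∈ T, (cnt A2 (m + aJ) (m + aJ + K) : ℝ) := by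
        rw [hTdef]; push_cast; rfl
      calc ((K:ℝ) + 1) * (G:ℝ) = (((K + 1) * G : ℕ) : ℝ) := by push_cast; ring
        _ ≤ _ := by rw [← hcast]; exact_mod_cast this
    -- sum upper bound
    set B : ℕ := (Bad j).card with hBdef
    have hsum : ∑ m ∈ T, (cnt A2 (m + aJ) (m + aJ + K) : ℝ)
        ≤ (B:ℝ) * ((α - ε) * ((K:ℝ)+1)) + (((L:ℝ) + 1) - B) * ((α + η) * ((K:ℝ)+1)) := by
      have hsplit := (Finset.sum_filter_add_sum_filter_not T
        (fun m => (cnt A2 (m + aJ) (m + aJ + K) : ℝ) < (α - ε) * ((K:ℝ)+1))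
        (fun m => (cnt A2 (m + aJ) (m + aJ + K) : ℝ))).symm
      have h1 : ∑ m ∈ (Bad j), (cnt A2 (m + aJ) (m + aJ + K) : ℝ) ≤ (B:ℝ) * ((α - ε) * ((K:ℝ)+1)) := by
        have hb := Finset.sum_le_card_nsmul (Bad j) (fun m => (cnt A2 (m + aJ) (m + aJ + K) : ℝ))
          ((α - ε) * ((K:ℝ)+1)) (fun m hm => (Finset.mem_filter.mp hm).2.le)
        rw [nsmul_eq_mul] at hb
        rw [hBdef]
        exact hb
      have h2 : ∑ m ∈ T.filter (fun m => ¬ ((cnt A2 (m + aJ) (m + aJ + K) : ℝ) < (α - ε) * ((K:ℝ)+1))),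
            (cnt A2 (m + aJ) (m + aJ + K) : ℝ)
          ≤ ((T.filter (fun m => ¬ ((cnt A2 (m + aJ) (m + aJ + K) : ℝ) < (α - ε) * ((K:ℝ)+1)))).card : ℝ)
              * ((α + η) * ((K:ℝ)+1)) := by
        have hbnd : ∀ m ∈ T.filter (fun m => ¬ ((cnt A2 (m + aJ) (m + aJ + K) : ℝ) < (α - ε) * ((K:ℝ)+1))),
            (cnt A2 (m + aJ) (m + aJ + K) : ℝ) ≤ (α + η) * ((K:ℝ)+1) := by
          intro m _
          have ha : (cnt A2 (m + aJ) (m + aJ + K) : ℝ) ≤ (cnt A (m + aJ) (m + aJ + K) : ℝ) := by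
            exact_mod_cast cnt_mono_set hA2sub (m + aJ) (m + aJ + K)
          have hb := hwin j m
          have hc' : (0:ℝ) ≤ α + η := by linarith [hηpos.le, hpos.le]
          have hd : (cnt A (m + aJ) (m + aJ + K) : ℝ) ≤ (α + η) * ((K:ℝ) + 1) := by
            refine le_trans hb ?_
            nlinarith
          linarith
        have hb := Finset.sum_le_card_nsmul _ _ _ hbnd
        rw [nsmul_eq_mul] at hb
        exact hb
      set nB : ℕ := (T.filter (fun m => ¬ ((cnt A2 (m + aJ) (m + aJ + K) : ℝ) < (α - ε) * ((K:ℝ)+1)))).card with hnBdef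
      have hcards : B + nB = L + 1 := by
        rw [hBdef, hnBdef]
        rw [Finset.card_filter_add_card_filter_not]
        exact hTcard
      have hcards' : (nB : ℝ) = ((L:ℝ) + 1) - B := by
        have hq : (B:ℝ) + (nB:ℝ) = (L:ℝ) + 1 := by exact_mod_cast hcards
        linarith
      rw [hcards'] at h2
      have hBadeq : Bad j = T.filter (fun m => (cnt A2 (m + aJ) (m + aJ + K) : ℝ) < (α - ε) * ((K:ℝ)+1)) := rfl
      rw [← hBadeq] at hsplit
      rw [hsplit]
      exact add_le_add h1 h2
    -- Markov
    have hkpos : (0:ℝ) < (K:ℝ) + 1 := by positivity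
    have hstep : (G:ℝ) ≤ (B:ℝ) * (α - ε) + (((L:ℝ) + 1) - B) * (α + η) := by
      have h := le_trans hdc hsum
      have heq : (B:ℝ) * ((α - ε) * ((K:ℝ)+1)) + (((L:ℝ) + 1) - B) * ((α + η) * ((K:ℝ)+1))
          = ((K:ℝ)+1) * ((B:ℝ) * (α - ε) + (((L:ℝ) + 1) - B) * (α + η)) := by ring
      rw [heq] at h
      exact le_of_mul_le_mul_left h hkpos
    have hBL : (B:ℝ) ≤ ((L:ℝ) + 1) := by
      have : B ≤ T.card := by rw [hBdef, hBaddef]; exact Finset.card_filter_le _ _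
      rw [hTcard] at this
      exact_mod_cast this
    have hBe : (B:ℝ) * ε ≤ (L:ℝ) * (η + δ) + 2 * D := by
      have hexp : (B:ℝ) * (α - ε) + (((L:ℝ) + 1) - B) * (α + η)
          = ((L:ℝ) + 1) * (α + η) - (B:ℝ) * (ε + η) := by ring
      have hexp2 : ((L:ℝ) + 1) * (α + η) = (L:ℝ) * α + (L:ℝ) * η + α + η := by ring
      have hBη : (0:ℝ) ≤ (B:ℝ) * η := mul_nonneg (Nat.cast_nonneg B) hηpos.le
      have hBeη : (B:ℝ) * (ε + η) = (B:ℝ) * ε + (B:ℝ) * η := by ring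
      have hDexp : (L:ℝ) * (η + δ) = (L:ℝ) * η + (L:ℝ) * δ := by ring
      have hGexp : (α - δ) * (L:ℝ) = (L:ℝ) * α - (L:ℝ) * δ := by ring
      rw [hexp, hexp2, hBeη] at hstep
      rw [hGexp] at hG
      rw [hDexp]
      linarith
    -- conclude
    have h4D : 4 * D ≤ ε * ε * L := hLj2
    have hL0 : (0:ℝ) ≤ L := Nat.cast_nonneg L
    have hδε : δ ≤ ε * ε / 4 := hηε ▸ hδη
    have hsum2 : η + δ ≤ ε * ε / 2 := by rw [hηε]; linarith
    have hLmul : (L:ℝ) * (η + δ) ≤ (L:ℝ) * (ε * ε / 2) := mul_le_mul_of_nonneg_left hsum2 hL0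
    have h5 : (B:ℝ) * ε ≤ (ε * (L:ℝ)) * ε := by nlinarith [hBe, hLmul, h4D]
    have := le_of_mul_le_mul_right h5 hεpos
    linarith
  -- assemble
  set BadAll : Finset ℕ := (Finset.range (r+1)).biUnion Bad with hBadAlldef
  have hBadAll : (BadAll.card : ℝ) ≤ γ / 8 * L := by
    have h1 : BadAll.card ≤ ∑ j ∈ Finset.range (r+1), (Bad j).card := Finset.card_biUnion_le
    have h2 : ((∑ j ∈ Finset.range (r+1), (Bad j).card : ℕ) : ℝ)
        = ∑ j ∈ Finset.range (r+1), ((Bad j).card : ℝ) := by push_cast; rfl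
    have h3 : ∑ j ∈ Finset.range (r+1), ((Bad j).card : ℝ)
        ≤ ∑ j ∈ Finset.range (r+1), epsf γ j * L := by
      refine Finset.sum_le_sum (fun j hj => ?_)
      exact hBad j (by simpa using Nat.lt_succ_iff.mp (Finset.mem_range.mp hj))
    have h4 : ∑ j ∈ Finset.range (r+1), epsf γ j * L
        = (∑ j ∈ Finset.range (r+1), epsf γ j) * L := by rw [Finset.sum_mul]
    have h5 := geom_bound hγ0 r
    have hL0 : (0:ℝ) ≤ L := Nat.cast_nonneg L
    calc (BadAll.card : ℝ) ≤ ((∑ j ∈ Finset.range (r+1), (Bad j).card : ℕ) : ℝ) := by exact_mod_cast h1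
      _ = _ := h2
      _ ≤ _ := h3
      _ = _ := h4
      _ ≤ γ / 8 * L := by nlinarith
  set Good : Finset ℕ := (T.filter (fun m => m ∈ A2)) \ BadAll with hGooddef
  have hGoodcard : ((T.filter (fun m => m ∈ A2)).card : ℝ) ≤ (Good.card : ℝ) + (BadAll.card : ℝ) := by
    have h1 : (T.filter (fun m => m ∈ A2)) ⊆ Good ∪ BadAll := by
      intro x hx
      rw [Finset.mem_union, hGooddef, Finset.mem_sdiff]
      by_cases h : x ∈ BadAll
      · exact Or.inr h
      · exact Or.inl ⟨hx, h⟩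
    have h2 := le_trans (Finset.card_le_card h1) (Finset.card_union_le _ _)
    exact_mod_cast h2
  have hGoodpos : 0 < Good.card := by
    have hL0 : (1:ℝ) ≤ (L:ℝ) := by exact_mod_cast hL1
    have hL0' : (0:ℝ) ≤ (L:ℝ) := by linarith
    have hm1 : δ * (L:ℝ) ≤ γ / 4 * (L:ℝ) := mul_le_mul_of_nonneg_right hδγ4 hL0'
    have hm2 : γ * (L:ℝ) ≤ α * (L:ℝ) := mul_le_mul_of_nonneg_right hγα hL0'
    have hexp : (α - δ) * (L:ℝ) = α * (L:ℝ) - δ * (L:ℝ) := by ring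
    have key : (0:ℝ) < (Good.card : ℝ) := by nlinarith [hg0, hGoodcard, hBadAll, hLC, hγ0]
    exact_mod_cast key
  obtain ⟨m, hm⟩ := Finset.card_pos.mp hGoodpos
  rw [hGooddef, Finset.mem_sdiff] at hm
  obtain ⟨hm1, hm2⟩ := hm
  rw [Finset.mem_filter] at hm1
  obtain ⟨hmT, hmA2⟩ := hm1
  refine ⟨m, hmA2.1, hmA2.2, fun j hj => ?_⟩
  have hnotbad : m ∉ Bad j := by
    intro hbad
    exact hm2 (Finset.mem_biUnion.mpr ⟨j, Finset.mem_range.mpr (by omega), hbad⟩)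
  have : ¬ ((cnt A2 (m + aj j) (m + aj j + kj j) : ℝ) < (α - epsf γ j) * ((kj j : ℝ) + 1)) := by
    intro hlt
    exact hnotbad (by rw [hBaddef]; exact Finset.mem_filter.mpr ⟨hmT, hlt⟩)
  push_neg at this
  refine le_trans this ?_
  exact_mod_cast cnt_mono_set hA2sub (m + aj j) (m + aj j + kj j)
end main

section final
variable {A : Set ℕ} {α : ℝ}

theorem exists_L_of_intervals (A : Set ℕ) (α : ℝ) (hα : banachDensity A = α)
    (hpos : 0 < α) (a b : ℕ → ℕ)
    (hlen : Filter.Tendsto (fun n => (Finset.Icc (a n) (b n)).card)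
      Filter.atTop Filter.atTop)
    (hconv : Filter.Tendsto
      (fun n => (Nat.card ↥(A ∩ Set.Icc (a n) (b n)) : ℝ) / (Finset.Icc (a n) (b n)).card)
      Filter.atTop (nhds α)) :
    ∃ L : Set ℕ,
      α ≤ Filter.atTop.limsup
        (fun n => (Nat.card ↥(L ∩ Set.Icc (a n) (b n)) : ℝ) / (Finset.Icc (a n) (b n)).card) ∧
      ∀ F : Finset ℕ, ↑F ⊆ L → (A ∩ ⋂ x ∈ F, {y : ℕ | y + x ∈ A}).Infinite := by
  classical
  set γ : ℝ := min α 1 with hγdef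
  have hγ0 : 0 < γ := lt_min hpos one_pos
  have hγα : γ ≤ α := min_le_left _ _
  have hγ1 : γ ≤ 1 := min_le_right _ _
  -- choose windows
  have hchoose : ∀ j : ℕ, ∃ n : ℕ, ∃ k : ℕ, j ≤ n ∧ b n = a n + k ∧
      (Finset.Icc (a n) (b n)).card = k + 1 ∧
      (∀ m, (cnt A (m + a n) (m + a n + k) : ℝ) ≤ (α + etaf γ j) * k) := by
    intro j
    obtain ⟨N, hN⟩ := factU hα (etaf_pos hγ0 j)
    obtain ⟨n, hcard, hjn⟩ :=
      ((hlen.eventually_ge_atTop (N + 2)).and (Filter.eventually_ge_atTop j)).exists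
    have hab : a n ≤ b n := by
      by_contra h
      rw [Finset.Icc_eq_empty (by omega), Finset.card_empty] at hcard
      omega
    have hcc : (Finset.Icc (a n) (b n)).card = (b n - a n) + 1 := by
      rw [Nat.card_Icc]; omega
    refine ⟨n, b n - a n, hjn, by omega, hcc, ?_⟩
    intro m
    exact hN _ (by omega) (m + a n)
  choose nj kj hjn hbk hcard hwin using hchoose
  -- the filter and ultrafilter
  set W : ℕ → Set ℕ := fun j => {m : ℕ |
    (α - epsf γ j) * ((kj j : ℝ) + 1) ≤ (cnt A (m + a (nj j)) (m + a (nj j) + kj j) : ℝ)}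
    with hWdef
  set V : ℕ → Set ℕ := fun r => {m : ℕ | m ∈ A ∧ r ≤ m ∧ ∀ j ≤ r, m ∈ W j} with hVdef
  have hVne : ∀ r, (V r).Nonempty := by
    intro r
    obtain ⟨m, hmA, hmr, hm⟩ := main_nonempty hα hpos hγ0 hγα hγ1
      (fun j => a (nj j)) kj (fun j m => hwin j m) r
    exact ⟨m, hmA, hmr, fun j hj => hm j hj⟩
  have hVanti : ∀ r s : ℕ, r ≤ s → V s ⊆ V r := by
    intro r s hrs x hx
    exact ⟨hx.1, le_trans hrs hx.2.1, fun j hj => hx.2.2 j (le_trans hj hrs)⟩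
  have hdir : Directed (· ≥ ·) (fun r : ℕ => Filter.principal (V r)) := by
    intro r s
    exact ⟨max r s, Filter.principal_mono.mpr (hVanti r _ (le_max_left _ _)),
      Filter.principal_mono.mpr (hVanti s _ (le_max_right _ _))⟩
  haveI hFne : Filter.NeBot (⨅ r : ℕ, Filter.principal (V r)) :=
    Filter.iInf_neBot_of_directed hdir (fun r => Filter.principal_neBot_iff.mpr (hVne r))
  set p : Ultrafilter ℕ := Ultrafilter.of (⨅ r : ℕ, Filter.principal (V r)) with hpdef
  have hVp : ∀ r, V r ∈ p := fun r =>
    (Ultrafilter.of_le _) (Filter.mem_iInf_of_mem r (Filter.mem_principal_self _))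
  have hpA : A ∈ p := Filter.mem_of_superset (hVp 0) (fun x hx => hx.1)
  have hptail : ∀ r : ℕ, {x : ℕ | r ≤ x} ∈ p := fun r =>
    Filter.mem_of_superset (hVp r) (fun x hx => hx.2.1)
  have hpW : ∀ j, W j ∈ p := fun j =>
    Filter.mem_of_superset (hVp j) (fun x hx => hx.2.2 j le_rfl)
  have hpinf : ∀ S ∈ p, S.Infinite := by
    intro S hS
    by_contra hfin
    rw [Set.not_infinite] at hfin
    obtain ⟨r, hr⟩ := hfin.bddAbove
    have h2 : S ∩ {x : ℕ | r + 1 ≤ x} ∈ p := Filter.inter_mem hS (hptail (r + 1))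
    obtain ⟨x, hx1, hx2⟩ := Filter.nonempty_of_mem h2
    have := hr hx1
    simp only [Set.mem_setOf_eq] at hx2
    omega
  set LL : Set ℕ := {x : ℕ | {y : ℕ | y + x ∈ A} ∈ p} with hLLdef
  have hkey : ∀ j : ℕ,
      (α - epsf γ j) * ((kj j : ℝ) + 1) ≤ (Nat.card ↥(LL ∩ Set.Icc (a (nj j)) (b (nj j))) : ℝ) := by
    intro j
    set a' : ℕ := a (nj j) with ha'def
    set K : ℕ := kj j with hKdef
    set S' : Finset ℕ := (Finset.Icc a' (a' + K)).filter (fun x => x ∉ LL) with hS'def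
    have hU : (W j ∩ ⋂ x ∈ S', {y : ℕ | ¬ (y + x ∈ A)}) ∈ p := by
      refine Filter.inter_mem (hpW j) ((Filter.biInter_finset_mem S').mpr (fun x hx => ?_))
      have hxL : x ∉ LL := (Finset.mem_filter.mp hx).2
      have : {y : ℕ | y + x ∈ A} ∉ p := hxL
      have h2 : {y : ℕ | y + x ∈ A}ᶜ ∈ p := Ultrafilter.compl_mem_iff_notMem.mpr this
      exact h2
    obtain ⟨m, hmW, hmI⟩ := Filter.nonempty_of_mem hU
    have hcnt1 : cnt A (m + a') (m + a' + K) ≤ ((Finset.Icc a' (a' + K)).filter (fun x => x ∈ LL)).card := by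
      have hmap : Finset.Icc (m + a') (m + a' + K) = Finset.map (addLeftEmbedding m) (Finset.Icc a' (a' + K)) := by
        rw [Finset.map_add_left_Icc]
        congr 1
        omega
      unfold cnt
      rw [hmap, Finset.filter_map, Finset.card_map]
      apply Finset.card_le_card
      intro x hx
      rw [Finset.mem_filter] at hx ⊢
      refine ⟨hx.1, ?_⟩
      by_contra hxL
      have hxS' : x ∈ S' := Finset.mem_filter.mpr ⟨hx.1, hxL⟩
      have hmx : m ∈ {y : ℕ | ¬ (y + x ∈ A)} := by
        have := Set.mem_iInter₂.mp hmI x hxS'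
        exact this
      exact hmx hx.2
    have hbridge : Nat.card ↥(LL ∩ Set.Icc a' (b (nj j)))
        = ((Finset.Icc a' (a' + K)).filter (fun x => x ∈ LL)).card := by
      rw [hbk j, cnt_bridge]
      unfold cnt
      congr 1
    rw [hbridge]
    calc (α - epsf γ j) * ((K : ℝ) + 1) ≤ (cnt A (m + a') (m + a' + K) : ℝ) := hmW
      _ ≤ _ := by exact_mod_cast hcnt1
  refine ⟨LL, ?_, ?_⟩
  · -- part (i)
    set f : ℕ → ℝ := fun n =>
      (Nat.card ↥(LL ∩ Set.Icc (a n) (b n)) : ℝ) / ((Finset.Icc (a n) (b n)).card : ℝ) with hfdef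
    have hbound : ∀ n, f n ≤ 1 := by
      intro n
      rw [hfdef]
      rcases Nat.eq_zero_or_pos (Finset.Icc (a n) (b n)).card with h | h
      · simp [h]
      · rw [div_le_one (by exact_mod_cast h)]
        have := le_trans (Nat.le_of_eq (cnt_bridge LL (a n) (b n))) (cnt_le_card LL (a n) (b n))
        exact_mod_cast this
    have hbdd : Filter.IsBoundedUnder (· ≤ ·) Filter.atTop f :=
      Filter.isBoundedUnder_of ⟨1, hbound⟩
    have hfj : ∀ j : ℕ, α - epsf γ j ≤ f (nj j) := by
      intro j
      rw [hfdef]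
      have hc := hcard j
      rw [le_div_iff₀ (by rw [hc]; positivity)]
      have := hkey j
      rw [hc]
      push_cast
      push_cast at this
      linarith
    have hfreq : ∀ ε : ℝ, 0 < ε → α - ε ≤ Filter.atTop.limsup f := by
      intro ε hε
      refine Filter.le_limsup_of_frequently_le ?_ hbdd
      rw [Filter.frequently_atTop]
      intro N
      obtain ⟨j0, hj0⟩ := pow_unbounded_of_one_lt (γ / ε) (one_lt_two (α := ℝ))
      have hεj : epsf γ (max N j0) ≤ ε := by
        refine le_trans (epsf_anti hγ0 (le_max_right N j0)) ?_
        unfold epsf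
        rw [div_le_iff₀ (by positivity)]
        have h2 : (2:ℝ) ^ j0 ≤ 2 ^ (j0 + 4) := by
          apply pow_le_pow_right₀ (by norm_num)
          omega
        rw [div_lt_iff₀ hε] at hj0
        nlinarith
      refine ⟨nj (max N j0), le_trans (le_max_left N j0) (hjn _), ?_⟩
      have := hfj (max N j0)
      linarith
    by_contra hcon
    push_neg at hcon
    have := hfreq ((α - Filter.atTop.limsup f) / 2) (by linarith)
    linarith
  · -- part (ii)
    intro F hF
    have hmem : (A ∩ ⋂ x ∈ F, {y : ℕ | y + x ∈ A}) ∈ p := by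
      refine Filter.inter_mem hpA ((Filter.biInter_finset_mem F).mpr (fun x hx => ?_))
      exact hF hx
    exact hpinf _ hmem
end final
end

section
/- Let G be a countable amenable group and let A ⊆ G satisfy BD(A) > 0. Then for every ρ > 0 there is a finite subset Q of G such that BD(QA) > 1 − ρ, where QA := {qa : q ∈ Q, a ∈ A}. -/
open Filter Pointwise

/-- `F` is a (left) Følner sequence for `G`: a sequence of nonempty finite subsets of `G`
such that `|gF_n △ F_n| / |F_n| → 0` for every `g ∈ G`. -/
def IsFolnerSeq {G : Type*} [Group G] [DecidableEq G] (F : ℕ → Finset G) : Prop :=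
  (∀ n, (F n).Nonempty) ∧
    ∀ g : G, Filter.Tendsto
      (fun n => ((symmDiff (g • F n) (F n)).card : ℝ) / (F n).card)
      Filter.atTop (nhds 0)

/-- The density sequence `|A ∩ F_n| / |F_n|` of a set `A ⊆ G` along a sequence of
finite subsets of `G`. -/
noncomputable def folnerDensitySeq {G : Type*} [Group G] (A : Set G)
    (F : ℕ → Finset G) : ℕ → ℝ :=
  fun n => (Nat.card ↥(A ∩ (F n : Set G)) : ℝ) / (F n).card

/-- The (upper) Banach density of `A ⊆ G`:
`BD(A) = sup { limsup_n |A ∩ F_n| / |F_n| : (F_n) a Følner sequence for G }`. -/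
noncomputable def groupBanachDensity {G : Type*} [Group G] [DecidableEq G]
    (A : Set G) : ℝ :=
  sSup {x : ℝ | ∃ F : ℕ → Finset G, IsFolnerSeq F ∧
    x = Filter.atTop.limsup (folnerDensitySeq A F)}

section FatAux

variable {G : Type*} [Group G] [DecidableEq G]

noncomputable def filSet (S : Set G) (F : Finset G) : Finset G :=
  @Finset.filter G (· ∈ S) (fun _ => Classical.propDecidable _) F

lemma mem_filSet {S : Set G} {F : Finset G} {x : G} : x ∈ filSet S F ↔ x ∈ F ∧ x ∈ S := by
  simp [filSet, Finset.mem_filter]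

lemma card_filSet_le (S : Set G) (F : Finset G) : (filSet S F).card ≤ F.card :=
  Finset.card_le_card (fun x hx => (mem_filSet.1 hx).1)

lemma filSet_mono {S T : Set G} (h : S ⊆ T) (F : Finset G) : filSet S F ⊆ filSet T F :=
  fun x hx => mem_filSet.2 ⟨(mem_filSet.1 hx).1, h (mem_filSet.1 hx).2⟩

lemma folnerDensitySeq_eq (B : Set G) (F : ℕ → Finset G) (n : ℕ) :
    folnerDensitySeq B F n = ((filSet B (F n)).card : ℝ) / ((F n).card : ℝ) := by
  have h : Nat.card ↥(B ∩ (F n : Set G)) = (filSet B (F n)).card := by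
    rw [Nat.card_coe_set_eq,
      show B ∩ (F n : Set G) = ↑(filSet B (F n)) by
        ext y; simp only [Set.mem_inter_iff, Finset.coe_mem, Finset.mem_coe, mem_filSet]; tauto,
      Set.ncard_coe_finset]
  unfold folnerDensitySeq
  rw [h]

lemma folnerDensitySeq_nonneg (B : Set G) (F : ℕ → Finset G) (n : ℕ) :
    0 ≤ folnerDensitySeq B F n := by
  unfold folnerDensitySeq; positivity

lemma folnerDensitySeq_le_one (B : Set G) (F : ℕ → Finset G) (n : ℕ) :
    folnerDensitySeq B F n ≤ 1 := by
  rw [folnerDensitySeq_eq]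
  apply div_le_one_of_le₀
  · exact_mod_cast card_filSet_le B (F n)
  · positivity

lemma smul_filSet (g : G) (S : Set G) (F : Finset G) :
    g • filSet S F = filSet (g • S) (g • F) := by
  ext y
  simp only [mem_filSet, ← Finset.inv_smul_mem_iff, Set.mem_smul_set_iff_inv_smul_mem]

lemma card_filSet_sdiff_add (S T : Set G) (F : Finset G) :
    (filSet (T \ S) F).card + (filSet S F).card = (filSet (T ∪ S) F).card := by
  have hu : filSet (T ∪ S) F = filSet (T \ S) F ∪ filSet S F := by
    ext y
    simp only [mem_filSet, Finset.mem_union, Set.mem_union, Set.mem_diff]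
    tauto
  have hd : Disjoint (filSet (T \ S) F) (filSet S F) := by
    rw [Finset.disjoint_left]
    intro y hy hy'
    exact (mem_filSet.1 hy).2.2 (mem_filSet.1 hy').2
  rw [hu, Finset.card_union_of_disjoint hd]

lemma sdiff_subset_symmDiff (F F' : Finset G) : F \ F' ⊆ symmDiff F F' := by
  intro y hy
  rw [Finset.mem_sdiff] at hy
  exact Finset.mem_symmDiff.2 (Or.inl ⟨hy.1, hy.2⟩)

lemma card_filSet_smul_le (g : G) (X : Set G) (F : Finset G) :
    (filSet (g • X) F).card ≤ (filSet X F).card + (symmDiff (g⁻¹ • F) F).card := by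
  have h1 : filSet (g • X) F = g • filSet X (g⁻¹ • F) := by
    rw [smul_filSet, smul_inv_smul]
  have h2 : filSet X (g⁻¹ • F) ⊆ filSet X F ∪ (symmDiff (g⁻¹ • F) F) := by
    intro y hy
    rw [mem_filSet] at hy
    by_cases h : y ∈ F
    · exact Finset.mem_union_left _ (mem_filSet.2 ⟨h, hy.2⟩)
    · exact Finset.mem_union_right _
        (sdiff_subset_symmDiff _ _ (Finset.mem_sdiff.2 ⟨hy.1, h⟩))
  calc (filSet (g • X) F).card = (filSet X (g⁻¹ • F)).card := by
        rw [h1, Finset.card_smul_finset]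
    _ ≤ _ := (Finset.card_le_card h2).trans (Finset.card_union_le _ _)

lemma symmDiff_filSet_subset (g : G) (S : Set G) (F : Finset G) :
    symmDiff (g • filSet S F) (filSet S F) ⊆
      (filSet ((g • S) \ S) F ∪ filSet (S \ (g • S)) F) ∪ symmDiff (g • F) F := by
  intro y hy
  rw [Finset.mem_symmDiff] at hy
  have hmem : y ∈ g • filSet S F ↔ y ∈ g • F ∧ y ∈ g • S := by
    rw [smul_filSet, mem_filSet]
  simp only [Finset.mem_union, mem_filSet, Finset.mem_symmDiff, Set.mem_diff]
  rw [hmem, mem_filSet] at hy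
  by_cases hF : y ∈ F <;> by_cases hgF : y ∈ g • F <;> tauto

lemma core_bound (g : G) (S : Set G) (F : Finset G) {c η : ℝ}
    (h1 : (c - η) * (F.card : ℝ) < ((filSet S F).card : ℝ))
    (h2 : ((filSet ((g • S) ∪ S) F).card : ℝ) < (c + η) * F.card)
    (h3 : ((filSet ((g⁻¹ • S) ∪ S) F).card : ℝ) < (c + η) * F.card)
    (h4 : ((symmDiff (g • F) F).card : ℝ) < η * F.card)
    (h5 : ((symmDiff (g⁻¹ • F) F).card : ℝ) < η * F.card) :
    ((symmDiff (g • filSet S F) (filSet S F)).card : ℝ) ≤ 6 * η * F.card := by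
  have b1 : ((filSet ((g • S) \ S) F).card : ℝ) < 2 * η * F.card := by
    have e := card_filSet_sdiff_add S (g • S) F
    have e' : ((filSet ((g • S) \ S) F).card : ℝ) + (filSet S F).card
        = (filSet ((g • S) ∪ S) F).card := by exact_mod_cast e
    linarith
  have b2 : ((filSet (S \ (g • S)) F).card : ℝ) < 3 * η * F.card := by
    have key : S \ (g • S) = g • ((g⁻¹ • S) \ S) := by
      rw [Set.smul_set_sdiff, smul_inv_smul]
    have e := card_filSet_smul_le g ((g⁻¹ • S) \ S) F
    have e' : ((filSet (g • ((g⁻¹ • S) \ S)) F).card : ℝ)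
        ≤ ((filSet ((g⁻¹ • S) \ S) F).card : ℝ) + ((symmDiff (g⁻¹ • F) F).card : ℝ) := by
      exact_mod_cast e
    have b2' : ((filSet ((g⁻¹ • S) \ S) F).card : ℝ) < 2 * η * F.card := by
      have e2 := card_filSet_sdiff_add S (g⁻¹ • S) F
      have e2' : ((filSet ((g⁻¹ • S) \ S) F).card : ℝ) + (filSet S F).card
          = (filSet ((g⁻¹ • S) ∪ S) F).card := by exact_mod_cast e2
      linarith
    rw [key]
    linarith
  have hsub := Finset.card_le_card (symmDiff_filSet_subset g S F)
  have hsub2 : ((symmDiff (g • filSet S F) (filSet S F)).card : ℝ)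
      ≤ ((filSet ((g • S) \ S) F).card : ℝ) + (filSet (S \ (g • S)) F).card
        + (symmDiff (g • F) F).card := by
    have t1 := Finset.card_union_le (filSet ((g • S) \ S) F ∪ filSet (S \ (g • S)) F)
      (symmDiff (g • F) F)
    have t2 := Finset.card_union_le (filSet ((g • S) \ S) F) (filSet (S \ (g • S)) F)
    have : (symmDiff (g • filSet S F) (filSet S F)).card
        ≤ (filSet ((g • S) \ S) F).card + (filSet (S \ (g • S)) F).card
          + (symmDiff (g • F) F).card := le_trans hsub (by omega)
    exact_mod_cast this
  linarith

end FatAux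

theorem fattening_lemma {G : Type*} [Group G] [Countable G] [DecidableEq G]
    (A : Set G) (hG : ∃ F : ℕ → Finset G, IsFolnerSeq F)
    (hA : 0 < groupBanachDensity A) :
    ∀ ρ : ℝ, 0 < ρ → ∃ Q : Finset G,
      groupBanachDensity ((Q : Set G) * A) > 1 - ρ := by
  intro ρ hρ
  classical
  -- all limsup densities are in [0,1]
  have hlimsup_le_one : ∀ (B : Set G) (F : ℕ → Finset G),
      Filter.atTop.limsup (folnerDensitySeq B F) ≤ 1 := by
    intro B F
    apply Filter.limsup_le_of_le
    · exact Filter.IsBoundedUnder.isCoboundedUnder_le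
        (isBoundedUnder_of ⟨0, fun n => folnerDensitySeq_nonneg B F n⟩)
    · exact Filter.Eventually.of_forall (fun n => folnerDensitySeq_le_one B F n)
  have hbddBD : ∀ B : Set G, BddAbove {x : ℝ | ∃ F : ℕ → Finset G, IsFolnerSeq F ∧
      x = Filter.atTop.limsup (folnerDensitySeq B F)} := by
    intro B
    refine ⟨1, ?_⟩
    rintro y ⟨F, hF, rfl⟩
    exact hlimsup_le_one B F
  -- Step A : get a Følner sequence along which A has positive upper density
  obtain ⟨x, hxmem, hxpos⟩ : ∃ x ∈ {x : ℝ | ∃ F : ℕ → Finset G, IsFolnerSeq F ∧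
      x = Filter.atTop.limsup (folnerDensitySeq A F)}, 0 < x := by
    by_contra h
    push_neg at h
    have h2 : groupBanachDensity A ≤ 0 := Real.sSup_le (fun y hy => h y hy) le_rfl
    linarith
  obtain ⟨F0, hF0, hxeq⟩ := hxmem
  have hcardpos : ∀ n, (0:ℝ) < ((F0 n).card : ℝ) := by
    intro n
    exact_mod_cast Finset.card_pos.2 (hF0.1 n)
  -- the set of good times for A is infinite
  have hfreq : ∃ᶠ n in atTop, x / 2 < folnerDensitySeq A F0 n := by
    apply frequently_lt_of_lt_limsup
    · exact Filter.IsBoundedUnder.isCoboundedUnder_le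
        (isBoundedUnder_of ⟨0, fun n => folnerDensitySeq_nonneg A F0 n⟩)
    · rw [← hxeq]; linarith
  have hTinf : {n | x / 2 < folnerDensitySeq A F0 n}.Infinite :=
    Nat.frequently_atTop_iff_infinite.1 hfreq
  set T := {n | x / 2 < folnerDensitySeq A F0 n} with hTdef
  -- an ultrafilter containing T and all cofinite sets
  have hneB : (Filter.cofinite ⊓ Filter.principal T).NeBot := by
    rw [inf_principal_neBot_iff]
    intro Uset hU
    rw [Filter.mem_cofinite] at hU
    obtain ⟨y, hy⟩ := (hTinf.diff hU).nonempty
    exact ⟨y, by simpa using hy.2, hy.1⟩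
  haveI := hneB
  set U : Ultrafilter ℕ := Ultrafilter.of (Filter.cofinite ⊓ Filter.principal T) with hUdef
  have hUle : (U : Filter ℕ) ≤ Filter.cofinite ⊓ Filter.principal T := Ultrafilter.of_le _
  have hUatTop : (U : Filter ℕ) ≤ Filter.atTop := by
    calc (U : Filter ℕ) ≤ Filter.cofinite := hUle.trans inf_le_left
      _ = Filter.atTop := Nat.cofinite_eq_atTop
  have hUT : T ∈ (U : Filter ℕ) := le_principal_iff.mp (hUle.trans inf_le_right)
  -- ultrafilter limits of densities
  have hDex : ∀ Q : Finset G, ∃ L : ℝ, L ∈ Set.Icc (0:ℝ) 1 ∧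
      Tendsto (folnerDensitySeq ((Q : Set G) * A) F0) (U : Filter ℕ) (nhds L) := by
    intro Q
    obtain ⟨L, hL, hle⟩ := (isCompact_Icc (a := (0:ℝ)) (b := 1)).ultrafilter_le_nhds
      (U.map (folnerDensitySeq ((Q : Set G) * A) F0)) (by
        rw [le_principal_iff]
        simp only [Ultrafilter.mem_coe, Ultrafilter.mem_map]
        apply Filter.univ_mem'
        intro n
        exact ⟨folnerDensitySeq_nonneg _ F0 n, folnerDensitySeq_le_one _ F0 n⟩)
    refine ⟨L, hL, ?_⟩
    rwa [Ultrafilter.coe_map] at hle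
  choose D hD01 hDlim using hDex
  have hDmono : ∀ {P Q : Finset G}, P ⊆ Q → D P ≤ D Q := by
    intro P Q h
    refine le_of_tendsto_of_tendsto' (hDlim P) (hDlim Q) (fun n => ?_)
    rw [folnerDensitySeq_eq, folnerDensitySeq_eq]
    have hsub : ((P : Set G) * A) ⊆ ((Q : Set G) * A) :=
      Set.mul_subset_mul_right (by exact_mod_cast Finset.coe_subset.2 h)
    gcongr
    exact filSet_mono hsub (F0 n)
  -- the supremum of the ultrafilter densities of fattenings
  obtain ⟨c, hcdef⟩ : ∃ c : ℝ, c = sSup (Set.range D) := ⟨_, rfl⟩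
  have hbddD : BddAbove (Set.range D) := by
    refine ⟨1, ?_⟩
    rintro _ ⟨Q, rfl⟩
    exact (hD01 Q).2
  have hDlec : ∀ Q, D Q ≤ c := by
    intro Q
    rw [hcdef]
    exact le_csSup hbddD ⟨Q, rfl⟩
  -- c is positive
  have hone : (({1} : Finset G) : Set G) * A = A := by
    rw [Finset.coe_singleton, Set.singleton_one, one_mul]
  have hD1 : x / 2 ≤ D {1} := by
    apply ge_of_tendsto (hDlim {1})
    have hsup : ∀ n ∈ T, x / 2 ≤ folnerDensitySeq ((({1} : Finset G) : Set G) * A) F0 n := by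
      intro n hn
      rw [hone]
      exact le_of_lt hn
    exact Filter.mem_of_superset hUT hsup
  have hcpos : 0 < c := lt_of_lt_of_le (by linarith) (hD1.trans (hDlec {1}))
  obtain ⟨ρ', hρ'def⟩ : ∃ r : ℝ, r = min ρ (1/2) := ⟨_, rfl⟩
  have hρ'pos : 0 < ρ' := hρ'def ▸ lt_min hρ (by norm_num)
  have hρ'le : ρ' ≤ 1/2 := hρ'def ▸ min_le_right _ _
  have hρ'leρ : ρ' ≤ ρ := hρ'def ▸ min_le_left _ _
  obtain ⟨ε₁, hε₁def⟩ : ∃ e : ℝ, e = ρ' * c / 2 := ⟨_, rfl⟩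
  have hε₁pos : 0 < ε₁ := by
    rw [hε₁def]
    exact div_pos (mul_pos hρ'pos hcpos) (by norm_num)
  have hε₁le : ε₁ ≤ c / 4 := by
    rw [hε₁def]
    nlinarith [mul_nonneg (sub_nonneg.2 hρ'le) hcpos.le]
  -- the near-optimal finite set P
  obtain ⟨y, ⟨P, hPy⟩, hPgt⟩ := exists_lt_of_lt_csSup (Set.range_nonempty D)
    (show c - ε₁ < sSup (Set.range D) by rw [← hcdef]; linarith)
  rw [← hPy] at hPgt
  -- improving finite sets
  have hWex : ∀ j : ℕ, ∃ Q : Finset G, c - 1 / ((j:ℝ) + 1) < D Q := by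
    intro j
    have hlt : c - 1 / ((j:ℝ) + 1) < sSup (Set.range D) := by
      rw [← hcdef]
      have : (0:ℝ) < 1 / ((j:ℝ) + 1) := by positivity
      linarith
    obtain ⟨y, ⟨Q, hQy⟩, hgt⟩ := exists_lt_of_lt_csSup (Set.range_nonempty D) hlt
    exact ⟨Q, by rwa [← hQy] at hgt⟩
  choose W hW using hWex
  set R : ℕ → Finset G := fun j => P ∪ W j with hRdef
  obtain ⟨η, hη⟩ : ∃ η : ℕ → ℝ, ∀ j, η j = min ε₁ (1 / ((j:ℝ) + 1)) := ⟨_, fun _ => rfl⟩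
  have hηpos : ∀ j, 0 < η j := by
    intro j
    rw [hη j]
    exact lt_min hε₁pos (by positivity)
  have hηle : ∀ j, η j ≤ ε₁ := by
    intro j; rw [hη j]; exact min_le_left _ _
  have hηle' : ∀ j, η j ≤ 1 / ((j:ℝ) + 1) := by
    intro j; rw [hη j]; exact min_le_right _ _
  have hDR : ∀ j, c - η j < D (R j) := by
    intro j
    have h1 : c - ε₁ < D (R j) := lt_of_lt_of_le hPgt (hDmono Finset.subset_union_left)
    have h2 : c - 1 / ((j:ℝ) + 1) < D (R j) :=
      lt_of_lt_of_le (hW j) (hDmono Finset.subset_union_right)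
    rw [hη j]
    rcases min_choice ε₁ (1 / ((j:ℝ) + 1)) with hm | hm <;> rw [hm]
    · exact h1
    · exact h2
  -- enumerate the group
  obtain ⟨gs, hgs⟩ := exists_surjective_nat G
  -- choose good times
  have hgood : ∀ j : ℕ, ∃ n : ℕ,
      (c - η j < folnerDensitySeq ((R j : Set G) * A) F0 n) ∧
      (folnerDensitySeq ((R j : Set G) * A) F0 n < c + η j) ∧
      (c - ε₁ < folnerDensitySeq ((P : Set G) * A) F0 n) ∧
      (∀ i ∈ Set.Iic j,
        folnerDensitySeq ((((gs i • R j ∪ R j) : Finset G) : Set G) * A) F0 n < c + η j ∧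
        folnerDensitySeq (((((gs i)⁻¹ • R j ∪ R j) : Finset G) : Set G) * A) F0 n < c + η j ∧
        ((symmDiff (gs i • F0 n) (F0 n)).card : ℝ) < η j * (F0 n).card ∧
        ((symmDiff ((gs i)⁻¹ • F0 n) (F0 n)).card : ℝ) < η j * (F0 n).card) := by
    intro j
    have e1 : ∀ᶠ n in (U : Filter ℕ), c - η j < folnerDensitySeq ((R j : Set G) * A) F0 n :=
      Filter.Tendsto.eventually_const_lt (hDR j) (hDlim (R j))
    have e2 : ∀ᶠ n in (U : Filter ℕ), folnerDensitySeq ((R j : Set G) * A) F0 n < c + η j :=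
      Filter.Tendsto.eventually_lt_const (lt_of_le_of_lt (hDlec (R j)) (by linarith [hηpos j]))
        (hDlim (R j))
    have e3 : ∀ᶠ n in (U : Filter ℕ), c - ε₁ < folnerDensitySeq ((P : Set G) * A) F0 n :=
      Filter.Tendsto.eventually_const_lt hPgt (hDlim P)
    have e4 : ∀ᶠ n in (U : Filter ℕ), ∀ i ∈ Set.Iic j,
        folnerDensitySeq ((((gs i • R j ∪ R j) : Finset G) : Set G) * A) F0 n < c + η j ∧
        folnerDensitySeq (((((gs i)⁻¹ • R j ∪ R j) : Finset G) : Set G) * A) F0 n < c + η j ∧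
        ((symmDiff (gs i • F0 n) (F0 n)).card : ℝ) < η j * (F0 n).card ∧
        ((symmDiff ((gs i)⁻¹ • F0 n) (F0 n)).card : ℝ) < η j * (F0 n).card := by
      rw [Filter.eventually_all_finite (Set.finite_Iic j)]
      intro i _
      have f1 : ∀ᶠ n in (U : Filter ℕ),
          folnerDensitySeq ((((gs i • R j ∪ R j) : Finset G) : Set G) * A) F0 n < c + η j :=
        Filter.Tendsto.eventually_lt_const (lt_of_le_of_lt (hDlec _) (by linarith [hηpos j])) (hDlim _)
      have f2 : ∀ᶠ n in (U : Filter ℕ),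
          folnerDensitySeq (((((gs i)⁻¹ • R j ∪ R j) : Finset G) : Set G) * A) F0 n < c + η j :=
        Filter.Tendsto.eventually_lt_const (lt_of_le_of_lt (hDlec _) (by linarith [hηpos j])) (hDlim _)
      have f3 : ∀ᶠ n in (U : Filter ℕ),
          ((symmDiff (gs i • F0 n) (F0 n)).card : ℝ) < η j * (F0 n).card := by
        apply Filter.Eventually.filter_mono hUatTop
        filter_upwards [Filter.Tendsto.eventually_lt_const (hηpos j) (hF0.2 (gs i))] with n hn
        have h' := (div_lt_iff₀ (hcardpos n)).1 hn
        linarith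
      have f4 : ∀ᶠ n in (U : Filter ℕ),
          ((symmDiff ((gs i)⁻¹ • F0 n) (F0 n)).card : ℝ) < η j * (F0 n).card := by
        apply Filter.Eventually.filter_mono hUatTop
        filter_upwards [Filter.Tendsto.eventually_lt_const (hηpos j) (hF0.2 ((gs i)⁻¹))] with n hn
        have h' := (div_lt_iff₀ (hcardpos n)).1 hn
        linarith
      exact f1.and (f2.and (f3.and f4))
    exact ((e1.and (e2.and (e3.and e4)))).exists
  choose nn hgood1 hgood2 hgood3 hgood4 using hgood
  -- the new Følner sequence
  obtain ⟨E, hEdef⟩ : ∃ E : ℕ → Finset G,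
      ∀ j, E j = filSet ((R j : Set G) * A) (F0 (nn j)) := ⟨_, fun _ => rfl⟩
  have hElb : ∀ j, (c - η j) * ((F0 (nn j)).card : ℝ) < ((E j).card : ℝ) := by
    intro j
    rw [hEdef j]
    have h' := hgood1 j
    rw [folnerDensitySeq_eq] at h'
    exact (lt_div_iff₀ (hcardpos _)).1 h'
  have hEub : ∀ j, ((E j).card : ℝ) < (c + η j) * ((F0 (nn j)).card : ℝ) := by
    intro j
    rw [hEdef j]
    have h' := hgood2 j
    rw [folnerDensitySeq_eq] at h'
    exact (div_lt_iff₀ (hcardpos _)).1 h'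
  have hcη : ∀ j, 3 * c / 4 ≤ c - η j := by
    intro j
    have := hηle j
    linarith [hε₁le]
  have hcηpos : ∀ j, (0:ℝ) < c - η j := fun j => lt_of_lt_of_le (by linarith) (hcη j)
  have hEpos : ∀ j, (0:ℝ) < ((E j).card : ℝ) := by
    intro j
    exact lt_trans (mul_pos (hcηpos j) (hcardpos (nn j))) (hElb j)
  have hEne : ∀ j, (E j).Nonempty := by
    intro j
    rw [← Finset.card_pos]
    exact_mod_cast hEpos j
  -- it is a Følner sequence
  have hEfol : IsFolnerSeq E := by
    refine ⟨hEne, fun g => ?_⟩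
    obtain ⟨i, rfl⟩ := hgs g
    have hb : ∀ᶠ j in atTop,
        ((symmDiff (gs i • E j) (E j)).card : ℝ) / ((E j).card : ℝ)
          ≤ (8 / c) * (1 / ((j:ℝ) + 1)) := by
      filter_upwards [Filter.eventually_ge_atTop i] with j hij
      have hiIic : i ∈ Set.Iic j := Set.mem_Iic.2 hij
      obtain ⟨f1, f2, f3, f4⟩ := hgood4 j i hiIic
      have hFpos := hcardpos (nn j)
      -- translate the hypotheses into count form
      have hset1 : (((gs i • R j ∪ R j : Finset G) : Set G) * A)
          = (gs i • ((R j : Set G) * A)) ∪ ((R j : Set G) * A) := by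
        rw [Finset.coe_union, Finset.coe_smul_finset, Set.union_mul, smul_mul_assoc]
      have hset2 : ((((gs i)⁻¹ • R j ∪ R j : Finset G) : Set G) * A)
          = ((gs i)⁻¹ • ((R j : Set G) * A)) ∪ ((R j : Set G) * A) := by
        rw [Finset.coe_union, Finset.coe_smul_finset, Set.union_mul, smul_mul_assoc]
      rw [hset1, folnerDensitySeq_eq] at f1
      rw [hset2, folnerDensitySeq_eq] at f2
      have h2 : ((filSet ((gs i • ((R j : Set G) * A)) ∪ ((R j : Set G) * A))
          (F0 (nn j))).card : ℝ) < (c + η j) * ((F0 (nn j)).card : ℝ) :=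
        (div_lt_iff₀ (hcardpos _)).1 f1
      have h3 : ((filSet (((gs i)⁻¹ • ((R j : Set G) * A)) ∪ ((R j : Set G) * A))
          (F0 (nn j))).card : ℝ) < (c + η j) * ((F0 (nn j)).card : ℝ) :=
        (div_lt_iff₀ (hcardpos _)).1 f2
      have hlb : (c - η j) * ((F0 (nn j)).card : ℝ)
          < ((filSet ((R j : Set G) * A) (F0 (nn j))).card : ℝ) := by
        rw [← hEdef j]; exact hElb j
      have hcore := core_bound (gs i) ((R j : Set G) * A) (F0 (nn j)) hlb h2 h3 f3 f4
      rw [← hEdef j] at hcore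
      -- from the core bound to the ratio bound
      have hE34 : 3 * c / 4 * ((F0 (nn j)).card : ℝ) ≤ ((E j).card : ℝ) :=
        le_trans (mul_le_mul_of_nonneg_right (hcη j) hFpos.le) (hElb j).le
      have hd0 : (0:ℝ) < 3 * c / 4 * ((F0 (nn j)).card : ℝ) :=
        mul_pos (by linarith) hFpos
      have hd1 : ((symmDiff (gs i • E j) (E j)).card : ℝ) / ((E j).card : ℝ)
          ≤ (6 * η j * ((F0 (nn j)).card : ℝ)) / (3 * c / 4 * ((F0 (nn j)).card : ℝ)) :=
        div_le_div₀ (mul_nonneg (mul_nonneg (by norm_num) (hηpos j).le) hFpos.le)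
          hcore hd0 hE34
      have hd2 : (6 * η j * ((F0 (nn j)).card : ℝ)) / (3 * c / 4 * ((F0 (nn j)).card : ℝ))
          = 8 * η j / c := by
        rw [div_eq_div_iff hd0.ne' hcpos.ne']
        ring
      have hd3 : 8 * η j / c ≤ (8 / c) * (1 / ((j:ℝ) + 1)) := by
        have h8 : 8 * η j / c = (8 / c) * η j := by ring
        rw [h8]
        exact mul_le_mul_of_nonneg_left (hηle' j) (div_pos (by norm_num) hcpos).le
      calc ((symmDiff (gs i • E j) (E j)).card : ℝ) / ((E j).card : ℝ)
          ≤ (6 * η j * ((F0 (nn j)).card : ℝ)) / (3 * c / 4 * ((F0 (nn j)).card : ℝ)) := hd1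
        _ = 8 * η j / c := hd2
        _ ≤ _ := hd3
    have hg0 : Tendsto (fun j : ℕ => (8 / c) * (1 / ((j:ℝ) + 1))) atTop (nhds 0) := by
      have := tendsto_one_div_add_atTop_nhds_zero_nat.const_mul (8 / c)
      simpa using this
    exact squeeze_zero'
      (Filter.Eventually.of_forall (fun j => div_nonneg (Nat.cast_nonneg _) (Nat.cast_nonneg _)))
      hb hg0
  -- P·A has large density along E
  have hdens : ∀ j : ℕ, (c - ε₁) / (c + 1 / ((j:ℝ) + 1))
      ≤ folnerDensitySeq ((P : Set G) * A) E j := by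
    intro j
    rw [folnerDensitySeq_eq]
    have hPsubR : P ⊆ R j := Finset.subset_union_left
    have hPA_sub : ((P : Set G) * A) ⊆ ((R j : Set G) * A) :=
      Set.mul_subset_mul_right (by exact_mod_cast Finset.coe_subset.2 hPsubR)
    have hfe : filSet ((P : Set G) * A) (E j) = filSet ((P : Set G) * A) (F0 (nn j)) := by
      rw [hEdef j]
      ext y
      simp only [mem_filSet]
      constructor
      · rintro ⟨⟨h1, _⟩, h3⟩; exact ⟨h1, h3⟩
      · rintro ⟨h1, h3⟩; exact ⟨⟨h1, hPA_sub h3⟩, h3⟩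
    rw [hfe]
    have hnum : (c - ε₁) * ((F0 (nn j)).card : ℝ)
        < ((filSet ((P : Set G) * A) (F0 (nn j))).card : ℝ) := by
      have h' := hgood3 j
      rw [folnerDensitySeq_eq] at h'
      exact (lt_div_iff₀ (hcardpos _)).1 h'
    have hden : ((E j).card : ℝ) < (c + 1 / ((j:ℝ) + 1)) * ((F0 (nn j)).card : ℝ) :=
      lt_of_lt_of_le (hEub j)
        (mul_le_mul_of_nonneg_right (by linarith [hηle' j]) (hcardpos (nn j)).le)
    have hjpos : (0:ℝ) < 1 / ((j:ℝ) + 1) := by positivity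
    have hcq : (0:ℝ) < c + 1 / ((j:ℝ) + 1) := by linarith
    have hcε : (0:ℝ) < c - ε₁ := by linarith [hε₁le]
    rw [div_le_div_iff₀ hcq (hEpos j)]
    nlinarith [mul_lt_mul_of_pos_left hden hcε, mul_lt_mul_of_pos_right hnum hcq]
  have hq : Tendsto (fun j : ℕ => (c - ε₁) / (c + 1 / ((j:ℝ) + 1))) atTop
      (nhds ((c - ε₁) / c)) := by
    have h1 : Tendsto (fun j : ℕ => c + 1 / ((j:ℝ) + 1)) atTop (nhds (c + 0)) :=
      tendsto_const_nhds.add tendsto_one_div_add_atTop_nhds_zero_nat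
    rw [add_zero] at h1
    exact tendsto_const_nhds.div h1 hcpos.ne'
  have hlimsupP : (c - ε₁) / c
      ≤ atTop.limsup (folnerDensitySeq ((P : Set G) * A) E) := by
    rw [← hq.limsup_eq]
    refine Filter.limsup_le_limsup (Filter.Eventually.of_forall hdens) ?_ ?_
    · refine Filter.IsBoundedUnder.isCoboundedUnder_le (isBoundedUnder_of ⟨0, fun j => ?_⟩)
      have hjpos : (0:ℝ) < 1 / ((j:ℝ) + 1) := by positivity
      have hcε : (0:ℝ) ≤ c - ε₁ := by linarith [hε₁le]
      exact div_nonneg hcε (by linarith)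
    · exact isBoundedUnder_of ⟨1, fun j => folnerDensitySeq_le_one _ E j⟩
  refine ⟨P, ?_⟩
  have hmem : atTop.limsup (folnerDensitySeq ((P : Set G) * A) E) ∈
      {x : ℝ | ∃ F : ℕ → Finset G, IsFolnerSeq F ∧
        x = Filter.atTop.limsup (folnerDensitySeq ((P : Set G) * A) F)} :=
    ⟨E, hEfol, rfl⟩
  have hle : atTop.limsup (folnerDensitySeq ((P : Set G) * A) E)
      ≤ groupBanachDensity ((P : Set G) * A) :=
    le_csSup (hbddBD ((P : Set G) * A)) hmem
  have heq : (c - ε₁) / c = 1 - ρ' / 2 := by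
    rw [hε₁def]
    field_simp
  have hfin : 1 - ρ < 1 - ρ' / 2 := by linarith
  rw [heq] at hlimsupP
  calc 1 - ρ < 1 - ρ' / 2 := hfin
    _ ≤ atTop.limsup (folnerDensitySeq ((P : Set G) * A) E) := hlimsupP
    _ ≤ groupBanachDensity ((P : Set G) * A) := hle
end

section
/- Let A ⊆ ℕ have upper density d̄(A) = α > 0 and suppose there is a strictly increasing sequence (b_k) of natural numbers such that: (i) b_k → ∞; (ii) lim_{k→∞} |A ∩ [1, b_k]|/b_k = α; (iii) for every i ∈ ℕ the limit L_i := lim_{k→∞} |A ∩ (A − i) ∩ [1, b_k]|/b_k exists, and lim_{n→∞} (1/n) Σ_{i=1}^{n} |L_i − α²| = 0. Then there exist infinite sets B, C ⊆ ℕ such that B + C ⊆ A. -/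
/-- The upper asymptotic density of `A ⊆ ℕ`: `d̄(A) = limsup_{n→∞} |A ∩ [1,n]| / n`. -/
noncomputable def upperDensity (A : Set ℕ) : ℝ :=
  Filter.atTop.limsup fun n : ℕ => (Nat.card ↥(A ∩ Set.Icc 1 n) : ℝ) / n

namespace BCAux

open Filter Finset
open scoped Classical Topology

noncomputable def cnt (S : Set ℕ) (m : ℕ) : ℕ :=
  ((Finset.Icc 1 m).filter (· ∈ S)).card

lemma natCard_eq_cnt (S : Set ℕ) (m : ℕ) :
    Nat.card ↥(S ∩ Set.Icc 1 m) = cnt S m := by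
  have h : (S ∩ Set.Icc 1 m) = (((Finset.Icc 1 m).filter (· ∈ S) : Finset ℕ) : Set ℕ) := by
    ext x; simp [Set.mem_Icc]; tauto
  rw [h, Nat.card_coe_set_eq, Set.ncard_coe_finset]; rfl

lemma cnt_le (S : Set ℕ) (m : ℕ) : cnt S m ≤ m := by
  calc cnt S m ≤ (Finset.Icc 1 m).card := Finset.card_filter_le _ _
  _ = m := by rw [Nat.card_Icc]; omega

lemma cnt_eq (S : Set ℕ) (n : ℕ) {inst : DecidablePred (· ∈ S)} :
    (((Finset.Icc 1 n).filter (· ∈ S)).card = cnt S n) := by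
  unfold cnt
  congr 1
  exact @Finset.filter_congr _ _ _ inst (fun a => Classical.propDecidable _) _
    (fun x _ => Iff.rfl)

lemma cnt_univ (m : ℕ) : cnt Set.univ m = m := by
  rw [← cnt_eq Set.univ m (inst := fun _ => Classical.propDecidable _)]
  simp only [Set.mem_univ, Finset.filter_true, Nat.card_Icc]
  omega

def shiftSet (A : Set ℕ) (c : ℕ) : Set ℕ := {v | v + c ∈ A}

def FreqDens (b : ℕ → ℕ) (S : Set ℕ) (γ : ℝ) : Prop :=
  ∃ᶠ k in atTop, γ * (b k : ℝ) ≤ (cnt S (b k) : ℝ)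

def BadSet (α : ℝ) (L : ℕ → ℝ) (ε : ℝ) : Set ℕ := {i | 1 ≤ i ∧ ε ≤ |L i - α ^ 2|}

noncomputable def rho (α : ℝ) (L : ℕ → ℝ) (c c' : ℕ) : ℝ :=
  if c = c' then α else L (Nat.dist c c')

noncomputable def hitc (A : Set ℕ) (P : Finset ℕ) (v : ℕ) : ℕ :=
  (P.filter (fun c => v + c ∈ A)).card

def USet (A : Set ℕ) (B : Finset ℕ) : Set ℕ := {v | ∀ x ∈ B, v + x ∈ A}

lemma USet_empty (A : Set ℕ) : USet A ∅ = Set.univ := by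
  ext v; simp [USet]

lemma USet_insert (A : Set ℕ) (B : Finset ℕ) (c : ℕ) :
    USet A (insert c B) = USet A B ∩ shiftSet A c := by
  ext v
  simp only [USet, Set.mem_setOf_eq, Set.mem_inter_iff, shiftSet, Finset.mem_insert]
  constructor
  · intro h
    exact ⟨fun x hx => h x (Or.inr hx), h c (Or.inl rfl)⟩
  · rintro ⟨h1, h2⟩ x (rfl | hx)
    · exact h2
    · exact h1 x hx


lemma cnt_interval_step (T : Set ℕ) (m c : ℕ) : cnt T (m + c) ≤ cnt T m + c := by
  have hsub : (Finset.Icc 1 (m+c)).filter (· ∈ T) ⊆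
      ((Finset.Icc 1 m).filter (· ∈ T)) ∪ Finset.Icc (m+1) (m+c) := by
    intro x hx
    simp only [Finset.mem_filter, Finset.mem_Icc, Finset.mem_union] at *
    rcases hx with ⟨⟨ha, hb⟩, hc⟩
    by_cases hxm : x ≤ m
    · exact Or.inl ⟨⟨ha, hxm⟩, hc⟩
    · exact Or.inr (by omega)
  calc cnt T (m+c) ≤ _ := Finset.card_le_card hsub
  _ ≤ cnt T m + (Finset.Icc (m+1) (m+c)).card := Finset.card_union_le _ _
  _ ≤ cnt T m + c := by rw [Nat.card_Icc]; omega

lemma cnt_shift_le (T : Set ℕ) (m c : ℕ) : cnt {v | v + c ∈ T} m ≤ cnt T m + c := by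
  have h1 : cnt {v | v + c ∈ T} m ≤ cnt T (m + c) := by
    apply Finset.card_le_card_of_injOn (fun v => v + c)
    · intro x hx
      simp only [Finset.mem_coe, Finset.mem_filter, Finset.mem_Icc, Set.mem_setOf_eq] at *
      exact ⟨⟨by omega, by omega⟩, hx.2⟩
    · intro x _ y _ h
      dsimp only at h
      omega
  exact h1.trans (cnt_interval_step T m c)

lemma cnt_le_shift (T : Set ℕ) (m c : ℕ) : cnt T m ≤ cnt {v | v + c ∈ T} m + c := by
  classical
  set F := (Finset.Icc 1 m).filter (· ∈ T) with hF
  have hsplit : F.card = (F.filter (fun v => c + 1 ≤ v)).card + (F.filter (fun v => ¬ (c+1 ≤ v))).card :=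
    (Finset.card_filter_add_card_filter_not _).symm
  have h1 : (F.filter (fun v => c + 1 ≤ v)).card ≤ cnt {v | v + c ∈ T} m := by
    apply Finset.card_le_card_of_injOn (fun v => v - c)
    · intro x hx
      simp only [hF, Finset.mem_coe, Finset.mem_filter, Finset.mem_Icc, Set.mem_setOf_eq] at *
      have hxx : x - c + c = x := by omega
      rw [hxx]
      exact ⟨⟨by omega, by omega⟩, hx.1.2⟩
    · intro x hx y hy h
      simp only [hF, Finset.mem_coe, Finset.mem_filter, Finset.mem_Icc] at hx hy
      dsimp only at h
      omega
  have h2 : (F.filter (fun v => ¬ (c+1 ≤ v))).card ≤ c := by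
    have hsub : (F.filter (fun v => ¬ (c+1 ≤ v))) ⊆ Finset.Icc 1 c := by
      intro x hx
      simp only [hF, Finset.mem_filter, Finset.mem_Icc] at *
      omega
    calc _ ≤ (Finset.Icc 1 c).card := Finset.card_le_card hsub
    _ = c := by rw [Nat.card_Icc]; omega
  calc cnt T m = F.card := rfl
  _ ≤ cnt {v | v + c ∈ T} m + c := by omega

section Main
variable {A : Set ℕ} {α : ℝ} {b : ℕ → ℕ} {L : ℕ → ℝ}

lemma tendsto_bR (hmono : StrictMono b) : Tendsto (fun k => (b k : ℝ)) atTop atTop :=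
  tendsto_natCast_atTop_atTop.comp hmono.tendsto_atTop

lemma tendsto_transfer (hmono : StrictMono b) {u v : ℕ → ℝ} {l : ℝ} (C : ℝ)
    (hv : Tendsto v atTop (𝓝 l))
    (h : ∀ᶠ k in atTop, |u k - v k| ≤ C / (b k)) : Tendsto u atTop (𝓝 l) := by
  have h0 : Tendsto (fun k => u k - v k) atTop (𝓝 (0:ℝ)) := by
    have hC : Tendsto (fun k => C / (b k : ℝ)) atTop (𝓝 (0:ℝ)) :=
      Tendsto.div_atTop tendsto_const_nhds (tendsto_bR hmono)
    refine squeeze_zero_norm' ?_ hC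
    simpa [Real.norm_eq_abs] using h
  have h2 := h0.add hv
  simp only [zero_add] at h2
  convert h2 using 2 with k
  ring

lemma bk_pos (hmono : StrictMono b) : ∀ᶠ k in atTop, 1 ≤ b k := by
  filter_upwards [eventually_ge_atTop 1] with k hk
  exact le_trans hk (hmono.le_apply)

/-- transfer a density limit through a shift -/
lemma tendsto_shift (hmono : StrictMono b) {T : Set ℕ} {l : ℝ}
    (h : Tendsto (fun k => (cnt T (b k) : ℝ) / (b k)) atTop (𝓝 l)) (c : ℕ) :
    Tendsto (fun k => (cnt (shiftSet T c) (b k) : ℝ) / (b k)) atTop (𝓝 l) := by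
  apply tendsto_transfer hmono (c : ℝ) h
  filter_upwards [bk_pos hmono] with k hk
  have h1 := cnt_shift_le T (b k) c
  have h2 := cnt_le_shift T (b k) c
  have h1' : (cnt (shiftSet T c) (b k) : ℝ) ≤ (cnt T (b k) : ℝ) + c := by exact_mod_cast h1
  have h2' : (cnt T (b k) : ℝ) ≤ (cnt (shiftSet T c) (b k) : ℝ) + c := by exact_mod_cast h2
  have hb0 : (0:ℝ) < (b k : ℝ) := by exact_mod_cast hk
  rw [div_sub_div_same, abs_div, abs_of_pos hb0]
  gcongr
  rw [abs_le]
  constructor <;> linarith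

end Main

section Main2
variable {A : Set ℕ} {α : ℝ} {b : ℕ → ℕ} {L : ℕ → ℝ}

lemma rho_symm (c c' : ℕ) : rho α L c c' = rho α L c' c := by
  unfold rho
  rcases eq_or_ne c c' with h | h
  · simp [h]
  · rw [if_neg h, if_neg (Ne.symm h), Nat.dist_comm]

lemma corr_pair_lt (hmono : StrictMono b)
    (hL : ∀ i : ℕ, Tendsto (fun k => (cnt (A ∩ {a : ℕ | a + i ∈ A}) (b k) : ℝ) / (b k))
      atTop (𝓝 (L i))) {c c' : ℕ} (h : c < c') :
    Tendsto (fun k => (cnt (shiftSet A c ∩ shiftSet A c') (b k) : ℝ) / (b k))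
      atTop (𝓝 (L (c' - c))) := by
  have key : shiftSet A c ∩ shiftSet A c' = shiftSet (A ∩ {a | a + (c' - c) ∈ A}) c := by
    ext v
    simp only [shiftSet, Set.mem_inter_iff, Set.mem_setOf_eq]
    have hv : v + c + (c' - c) = v + c' := by omega
    rw [hv]
  rw [key]
  exact tendsto_shift hmono (hL (c' - c)) c

lemma corr_pair (hmono : StrictMono b)
    (hdens : Tendsto (fun k => (cnt A (b k) : ℝ) / (b k)) atTop (𝓝 α))
    (hL : ∀ i : ℕ, Tendsto (fun k => (cnt (A ∩ {a : ℕ | a + i ∈ A}) (b k) : ℝ) / (b k))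
      atTop (𝓝 (L i))) (c c' : ℕ) :
    Tendsto (fun k => (cnt (shiftSet A c ∩ shiftSet A c') (b k) : ℝ) / (b k))
      atTop (𝓝 (rho α L c c')) := by
  rcases lt_trichotomy c c' with h | h | h
  · rw [show rho α L c c' = L (c' - c) by
      unfold rho; rw [if_neg (Nat.ne_of_lt h), Nat.dist_eq_sub_of_le (le_of_lt h)]]
    exact corr_pair_lt hmono hL h
  · subst h
    rw [Set.inter_self, show rho α L c c = α by simp [rho]]
    exact tendsto_shift hmono hdens c
  · rw [Set.inter_comm, rho_symm, show rho α L c' c = L (c - c') by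
      unfold rho; rw [if_neg (Nat.ne_of_lt h), Nat.dist_eq_sub_of_le (le_of_lt h)]]
    exact corr_pair_lt hmono hL h

end Main2

section Main3
variable {A : Set ℕ} {α : ℝ} {b : ℕ → ℕ} {L : ℕ → ℝ}

lemma bad_density
    (hmix : Tendsto (fun n : ℕ => (1 / (n : ℝ)) * ∑ i ∈ Finset.Icc 1 n, |L i - α ^ 2|)
      atTop (𝓝 0)) {ε θ : ℝ} (hε : 0 < ε) (hθ : 0 < θ) :
    ∀ᶠ n in atTop, (cnt (BadSet α L ε) n : ℝ) ≤ θ * n := by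
  have h1 : ∀ᶠ n : ℕ in atTop, (1 / (n : ℝ)) * ∑ i ∈ Finset.Icc 1 n, |L i - α ^ 2| < ε * θ :=
    hmix.eventually_lt_const (by positivity)
  filter_upwards [h1, eventually_ge_atTop 1] with n hn hn1
  have hnR : (0:ℝ) < n := by exact_mod_cast hn1
  have hsum : ε * (cnt (BadSet α L ε) n : ℝ) ≤ ∑ i ∈ Finset.Icc 1 n, |L i - α ^ 2| := by
    have hsub : ∑ i ∈ (Finset.Icc 1 n).filter (· ∈ BadSet α L ε), |L i - α ^ 2|
        ≤ ∑ i ∈ Finset.Icc 1 n, |L i - α ^ 2| :=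
      Finset.sum_le_sum_of_subset_of_nonneg (Finset.filter_subset _ _)
        (fun i _ _ => abs_nonneg _)
    have hlow : (cnt (BadSet α L ε) n : ℝ) * ε ≤
        ∑ i ∈ (Finset.Icc 1 n).filter (· ∈ BadSet α L ε), |L i - α ^ 2| := by
      rw [← nsmul_eq_mul]
      apply Finset.card_nsmul_le_sum
      intro i hi
      simp only [Finset.mem_filter, BadSet, Set.mem_setOf_eq] at hi
      exact hi.2.2
    linarith
  have hsum2 : ∑ i ∈ Finset.Icc 1 n, |L i - α ^ 2| ≤ ε * θ * n := by
    have h2 : (1 / (n : ℝ)) * ∑ i ∈ Finset.Icc 1 n, |L i - α ^ 2| < ε * θ := hn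
    calc ∑ i ∈ Finset.Icc 1 n, |L i - α ^ 2|
        = n * ((1 / (n : ℝ)) * ∑ i ∈ Finset.Icc 1 n, |L i - α ^ 2|) := by
          field_simp
      _ ≤ n * (ε * θ) := by nlinarith
      _ = ε * θ * n := by ring
  nlinarith

lemma transBad_le (p n : ℕ) {α : ℝ} {L : ℕ → ℝ} (ε : ℝ) :
    cnt {v | p < v ∧ ε ≤ |L (v - p) - α ^ 2|} n ≤ cnt (BadSet α L ε) n := by
  apply Finset.card_le_card_of_injOn (fun v => v - p)
  · intro x hx
    simp only [Finset.mem_coe, Finset.mem_filter, Finset.mem_Icc, Set.mem_setOf_eq,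
      BadSet] at *
    exact ⟨⟨by omega, by omega⟩, by omega, hx.2.2⟩
  · intro x hx y hy h
    simp only [Finset.mem_coe, Finset.mem_filter, Finset.mem_Icc, Set.mem_setOf_eq] at hx hy
    dsimp only at h
    omega

end Main3

section Main4
variable {A : Set ℕ} {α : ℝ} {b : ℕ → ℕ} {L : ℕ → ℝ}

/-- Greedy-element lemma: from a set with frequent density ≥ γ we can pick an element
beyond M whose differences with all elements of Q are "good" for L. -/
lemma greedy (hmono : StrictMono b)
    (hmix : Tendsto (fun n : ℕ => (1 / (n : ℝ)) * ∑ i ∈ Finset.Icc 1 n, |L i - α ^ 2|)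
      atTop (𝓝 0))
    {S : Set ℕ} {γ : ℝ} (hγ : 0 < γ) (hS : FreqDens b S γ)
    {ε' : ℝ} (hε' : 0 < ε') (Q : Finset ℕ) (M : ℕ) (hM : ∀ p ∈ Q, p ≤ M) :
    ∃ x ∈ S, M < x ∧ ∀ p ∈ Q, |L (x - p) - α ^ 2| < ε' := by
  set θ : ℝ := γ / (4 * (Q.card + 1)) with hθdef
  have hθ : 0 < θ := by positivity
  set Good : Set ℕ := S ∩ {v | M < v ∧ ∀ p ∈ Q, |L (v - p) - α ^ 2| < ε'} with hGood
  -- counting decomposition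
  have hdecomp : ∀ n : ℕ, cnt S n ≤ cnt Good n + M +
      Q.card * cnt (BadSet α L ε') n := by
    intro n
    have hsub : (Finset.Icc 1 n).filter (· ∈ S) ⊆
        ((Finset.Icc 1 n).filter (· ∈ Good)) ∪ (Finset.Icc 1 M) ∪
          Q.biUnion (fun p => (Finset.Icc 1 n).filter
            (· ∈ {v : ℕ | p < v ∧ ε' ≤ |L (v - p) - α ^ 2|})) := by
      intro v hv
      simp only [Finset.mem_filter, Finset.mem_Icc] at hv
      simp only [Finset.mem_union, Finset.mem_filter, Finset.mem_Icc, Finset.mem_biUnion]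
      by_cases hvM : v ≤ M
      · exact Or.inl (Or.inr ⟨hv.1.1, hvM⟩)
      push_neg at hvM
      by_cases hgood : ∀ p ∈ Q, |L (v - p) - α ^ 2| < ε'
      · exact Or.inl (Or.inl ⟨hv.1, hv.2, hvM, hgood⟩)
      · push_neg at hgood
        obtain ⟨p, hp, hbad⟩ := hgood
        exact Or.inr ⟨p, hp, hv.1, by
          simp only [Set.mem_setOf_eq]
          exact ⟨lt_of_le_of_lt (hM p hp) hvM, hbad⟩⟩
    calc cnt S n ≤ _ := Finset.card_le_card hsub
    _ ≤ (((Finset.Icc 1 n).filter (· ∈ Good)) ∪ (Finset.Icc 1 M)).card +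
        (Q.biUnion (fun p => (Finset.Icc 1 n).filter
            (· ∈ {v : ℕ | p < v ∧ ε' ≤ |L (v - p) - α ^ 2|}))).card :=
      Finset.card_union_le _ _
    _ ≤ cnt Good n + M + Q.card * cnt (BadSet α L ε') n := by
      have h1 : (((Finset.Icc 1 n).filter (· ∈ Good)) ∪ (Finset.Icc 1 M)).card ≤
          cnt Good n + M := by
        calc _ ≤ ((Finset.Icc 1 n).filter (· ∈ Good)).card + (Finset.Icc 1 M).card :=
            Finset.card_union_le _ _
        _ ≤ cnt Good n + M := by rw [Nat.card_Icc, cnt_eq Good n]; omega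
      have h2 : (Q.biUnion (fun p => (Finset.Icc 1 n).filter
            (· ∈ {v : ℕ | p < v ∧ ε' ≤ |L (v - p) - α ^ 2|}))).card ≤
          Q.card * cnt (BadSet α L ε') n := by
        calc _ ≤ ∑ p ∈ Q, ((Finset.Icc 1 n).filter
            (· ∈ {v : ℕ | p < v ∧ ε' ≤ |L (v - p) - α ^ 2|})).card :=
            Finset.card_biUnion_le
        _ ≤ ∑ _p ∈ Q, cnt (BadSet α L ε') n :=
            Finset.sum_le_sum (fun p _ => by
              rw [cnt_eq {v : ℕ | p < v ∧ ε' ≤ |L (v - p) - α ^ 2|} n]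
              exact transBad_le p n ε')
        _ = Q.card * cnt (BadSet α L ε') n := by
            rw [Finset.sum_const, smul_eq_mul]
      omega
  -- eventual bounds
  have hbadev := bad_density hmix hε' hθ
  have hMev : ∀ᶠ k in atTop, (M : ℝ) ≤ (γ / 4) * b k := by
    have := (tendsto_bR hmono).eventually_ge_atTop ((M : ℝ) / (γ / 4))
    filter_upwards [this] with k hk
    rw [div_le_iff₀ (by positivity : (0:ℝ) < γ / 4)] at hk
    linarith [hk]
  have hcomb := hS.and_eventually (((hmono.tendsto_atTop.eventually hbadev).and hMev).and
    (bk_pos hmono))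
  obtain ⟨k, hk1, ⟨hk2, hk3⟩, hk4⟩ := hcomb.exists
  have hbkR : (1:ℝ) ≤ (b k : ℝ) := by exact_mod_cast hk4
  have hQθ : (Q.card : ℝ) * θ ≤ γ / 4 := by
    rw [hθdef, mul_div_assoc']
    rw [div_le_div_iff₀ (by positivity) (by norm_num)]
    nlinarith [hγ.le, (Nat.cast_nonneg Q.card : (0:ℝ) ≤ Q.card)]
  have hGpos : 0 < cnt Good (b k) := by
    rcases Nat.eq_zero_or_pos (cnt Good (b k)) with h | h
    · exfalso
      have hd := hdecomp (b k)
      rw [h] at hd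
      have hd' : cnt S (b k) ≤ M + Q.card * cnt (BadSet α L ε') (b k) := by omega
      have hdR : (cnt S (b k) : ℝ) ≤ (M : ℝ) +
          (Q.card : ℝ) * (cnt (BadSet α L ε') (b k) : ℝ) := by exact_mod_cast hd'
      have h5 : (Q.card : ℝ) * (cnt (BadSet α L ε') (b k) : ℝ) ≤ (γ / 4) * b k := by
        calc (Q.card : ℝ) * (cnt (BadSet α L ε') (b k) : ℝ)
            ≤ (Q.card : ℝ) * (θ * b k) := mul_le_mul_of_nonneg_left hk2 (Nat.cast_nonneg _)
        _ = ((Q.card : ℝ) * θ) * b k := by ring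
        _ ≤ (γ / 4) * b k := mul_le_mul_of_nonneg_right hQθ (by positivity)
      nlinarith [hk1, hk3]
    · exact h
  obtain ⟨x, hx⟩ := Finset.card_pos.1 hGpos
  simp only [Finset.mem_filter, Finset.mem_Icc, hGood, Set.mem_inter_iff,
    Set.mem_setOf_eq] at hx
  exact ⟨x, hx.2.1, hx.2.2.1, fun p hp => hx.2.2.2 p hp⟩

end Main4

section Main5
variable {A : Set ℕ} {α : ℝ} {b : ℕ → ℕ} {L : ℕ → ℝ}

lemma sum_indicator (T : Set ℕ) (m : ℕ) :
    ∑ v ∈ Finset.Icc 1 m, T.indicator (fun _ => (1:ℝ)) v = (cnt T m : ℝ) := by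
  rw [← Finset.sum_filter_add_sum_filter_not (Finset.Icc 1 m) (· ∈ T)]
  have h1 : ∑ v ∈ (Finset.Icc 1 m).filter (· ∈ T), T.indicator (fun _ => (1:ℝ)) v
      = ∑ _v ∈ (Finset.Icc 1 m).filter (· ∈ T), (1:ℝ) :=
    Finset.sum_congr rfl (fun v hv => by
      rw [Set.indicator_of_mem (Finset.mem_filter.1 hv).2])
  have h2 : ∑ v ∈ (Finset.Icc 1 m).filter (fun v => ¬ (v ∈ T)), T.indicator (fun _ => (1:ℝ)) v
      = 0 :=
    Finset.sum_eq_zero (fun v hv => by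
      rw [Set.indicator_of_notMem (Finset.mem_filter.1 hv).2])
  rw [h1, h2, add_zero, Finset.sum_const, nsmul_eq_mul, mul_one, cnt_eq]

lemma sum_sq_identity (A : Set ℕ) (α : ℝ) (P : Finset ℕ) (m : ℕ) :
    ∑ v ∈ Finset.Icc 1 m, ((hitc A P v : ℝ) - α * P.card)^2
      = ∑ c ∈ P, ∑ c' ∈ P, ((cnt (shiftSet A c ∩ shiftSet A c') m : ℝ)
          - α * (cnt (shiftSet A c) m : ℝ) - α * (cnt (shiftSet A c') m : ℝ)
          + α^2 * m) := by
  set χ : ℕ → ℕ → ℝ := fun c v => (shiftSet A c).indicator (fun _ => (1:ℝ)) v with hχ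
  have hhit : ∀ v : ℕ, (hitc A P v : ℝ) = ∑ c ∈ P, χ c v := by
    intro v
    unfold hitc
    rw [Finset.card_filter]
    push_cast
    apply Finset.sum_congr rfl
    intro c _
    by_cases h : v + c ∈ A
    · rw [if_pos h]
      simp only [hχ]
      rw [Set.indicator_of_mem (by exact h)]
    · rw [if_neg h]
      simp only [hχ]
      rw [Set.indicator_of_notMem (by exact h)]
  have hsq : ∀ v : ℕ, ((hitc A P v : ℝ) - α * P.card)^2
      = ∑ c ∈ P, ∑ c' ∈ P, (χ c v - α) * (χ c' v - α) := by
    intro v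
    have hdiff : (hitc A P v : ℝ) - α * P.card = ∑ c ∈ P, (χ c v - α) := by
      rw [Finset.sum_sub_distrib, ← hhit, Finset.sum_const, nsmul_eq_mul, mul_comm]
    rw [hdiff, sq, Finset.sum_mul_sum]
  have hexp : ∀ (c c' v : ℕ), (χ c v - α) * (χ c' v - α)
      = (shiftSet A c ∩ shiftSet A c').indicator (fun _ => (1:ℝ)) v
        - α * χ c v - α * χ c' v + α^2 := by
    intro c c' v
    by_cases h1 : v ∈ shiftSet A c <;> by_cases h2 : v ∈ shiftSet A c'
    · simp only [hχ]
      rw [Set.indicator_of_mem h1, Set.indicator_of_mem h2,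
        Set.indicator_of_mem (Set.mem_inter h1 h2)]
      ring
    · simp only [hχ]
      rw [Set.indicator_of_mem h1, Set.indicator_of_notMem h2,
        Set.indicator_of_notMem (fun h => h2 h.2)]
      ring
    · simp only [hχ]
      rw [Set.indicator_of_notMem h1, Set.indicator_of_mem h2,
        Set.indicator_of_notMem (fun h => h1 h.1)]
      ring
    · simp only [hχ]
      rw [Set.indicator_of_notMem h1, Set.indicator_of_notMem h2,
        Set.indicator_of_notMem (fun h => h1 h.1)]
      ring
  calc ∑ v ∈ Finset.Icc 1 m, ((hitc A P v : ℝ) - α * P.card)^2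
      = ∑ v ∈ Finset.Icc 1 m, ∑ c ∈ P, ∑ c' ∈ P, (χ c v - α) * (χ c' v - α) :=
        Finset.sum_congr rfl (fun v _ => hsq v)
  _ = ∑ c ∈ P, ∑ c' ∈ P, ∑ v ∈ Finset.Icc 1 m, (χ c v - α) * (χ c' v - α) := by
        rw [Finset.sum_comm]
        exact Finset.sum_congr rfl (fun c _ => Finset.sum_comm)
  _ = ∑ c ∈ P, ∑ c' ∈ P, ((cnt (shiftSet A c ∩ shiftSet A c') m : ℝ)
          - α * (cnt (shiftSet A c) m : ℝ) - α * (cnt (shiftSet A c') m : ℝ)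
          + α^2 * m) := by
    apply Finset.sum_congr rfl
    intro c _
    apply Finset.sum_congr rfl
    intro c' _
    rw [Finset.sum_congr rfl (fun v _ => hexp c c' v)]
    rw [Finset.sum_add_distrib, Finset.sum_sub_distrib, Finset.sum_sub_distrib,
      ← Finset.mul_sum, ← Finset.mul_sum]
    rw [sum_indicator]
    simp only [hχ]
    rw [sum_indicator, sum_indicator, Finset.sum_const, nsmul_eq_mul, Nat.card_Icc]
    simp only [Nat.add_sub_cancel]
    ring

lemma sum_sq_tendsto (hmono : StrictMono b)
    (hdens : Tendsto (fun k => (cnt A (b k) : ℝ) / (b k)) atTop (𝓝 α))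
    (hL : ∀ i : ℕ, Tendsto (fun k => (cnt (A ∩ {a : ℕ | a + i ∈ A}) (b k) : ℝ) / (b k))
      atTop (𝓝 (L i))) (P : Finset ℕ) :
    Tendsto (fun k => (∑ v ∈ Finset.Icc 1 (b k), ((hitc A P v : ℝ) - α * P.card)^2) / (b k))
      atTop (𝓝 (∑ c ∈ P, ∑ c' ∈ P, (rho α L c c' - α^2))) := by
  have hev : ∀ᶠ k in atTop,
      (∑ c ∈ P, ∑ c' ∈ P, ((cnt (shiftSet A c ∩ shiftSet A c') (b k) : ℝ)/(b k)
          - α * ((cnt (shiftSet A c) (b k) : ℝ)/(b k))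
          - α * ((cnt (shiftSet A c') (b k) : ℝ)/(b k)) + α^2))
      = (∑ v ∈ Finset.Icc 1 (b k), ((hitc A P v : ℝ) - α * P.card)^2) / (b k) := by
    filter_upwards [bk_pos hmono] with k hk
    have hbne : ((b k : ℝ)) ≠ 0 := by
      have : (1:ℝ) ≤ (b k : ℝ) := by exact_mod_cast hk
      linarith
    rw [sum_sq_identity, Finset.sum_div]
    apply Finset.sum_congr rfl
    intro c _
    rw [Finset.sum_div]
    apply Finset.sum_congr rfl
    intro c' _
    field_simp
  apply Tendsto.congr' hev
  apply tendsto_finset_sum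
  intro c _
  apply tendsto_finset_sum
  intro c' _
  have h1 := corr_pair hmono hdens hL c c'
  have h2 := tendsto_shift hmono hdens c
  have h3 := tendsto_shift hmono hdens c'
  have h4 := ((h1.sub (h2.const_mul α)).sub (h3.const_mul α)).add
    (tendsto_const_nhds (x := α^2))
  have hval : rho α L c c' - α^2 = rho α L c c' - α * α - α * α + α^2 := by ring
  rw [hval]
  convert h4 using 2 with k
end Main5

section Main6
variable {A : Set ℕ} {α : ℝ} {b : ℕ → ℕ} {L : ℕ → ℝ}

lemma alpha_le_one (hdens : Tendsto (fun k => (cnt A (b k) : ℝ) / (b k)) atTop (𝓝 α)) :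
    α ≤ 1 := by
  apply le_of_tendsto hdens
  filter_upwards with k
  rcases Nat.eq_zero_or_pos (b k) with h | h
  · simp [h]
  · rw [div_le_one (by exact_mod_cast h)]
    exact_mod_cast cnt_le A (b k)

lemma key_count (A V : Set ℕ) (P : Finset ℕ) (t : ℝ) (ht : 0 ≤ t) (m : ℕ) :
    t * ((cnt V m : ℝ) - (cnt {v : ℕ | (hitc A P v : ℝ) < t} m : ℝ)) ≤
      ∑ c ∈ P, (cnt (V ∩ shiftSet A c) m : ℝ) := by
  set F : Finset ℕ := (Finset.Icc 1 m).filter (· ∈ V) with hF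
  have hcntV : cnt V m = F.card := rfl
  have hsum : ∑ c ∈ P, (cnt (V ∩ shiftSet A c) m : ℝ) = ∑ v ∈ F, (hitc A P v : ℝ) := by
    have h1 : ∀ c : ℕ, cnt (V ∩ shiftSet A c) m = (F.filter (fun v => v + c ∈ A)).card := by
      intro c
      unfold cnt
      congr 1
      ext v
      simp only [hF, Finset.mem_filter, Finset.mem_Icc, Set.mem_inter_iff,
        Set.mem_setOf_eq, shiftSet]
      tauto
    have h2 : ∑ c ∈ P, (F.filter (fun v => v + c ∈ A)).card = ∑ v ∈ F, hitc A P v := by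
      simp only [Finset.card_filter, hitc]
      rw [Finset.sum_comm]
    calc ∑ c ∈ P, (cnt (V ∩ shiftSet A c) m : ℝ)
        = ∑ c ∈ P, ((F.filter (fun v => v + c ∈ A)).card : ℝ) := by
          exact Finset.sum_congr rfl (fun c _ => by rw [h1 c])
    _ = ∑ v ∈ F, (hitc A P v : ℝ) := by exact_mod_cast congrArg Nat.cast h2
  set G : Finset ℕ := F.filter (fun v => ¬ ((hitc A P v : ℝ) < t)) with hG
  have hGcard : (cnt V m : ℝ) - (cnt {v : ℕ | (hitc A P v : ℝ) < t} m : ℝ) ≤ (G.card : ℝ) := by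
    have hEsub : F.filter (fun v => (hitc A P v : ℝ) < t) ⊆
        (Finset.Icc 1 m).filter (· ∈ {v : ℕ | (hitc A P v : ℝ) < t}) := by
      intro v hv
      simp only [hF, Finset.mem_filter, Finset.mem_Icc, Set.mem_setOf_eq] at *
      exact ⟨hv.1.1, hv.2⟩
    have hEcard : (F.filter (fun v => (hitc A P v : ℝ) < t)).card ≤
        cnt {v : ℕ | (hitc A P v : ℝ) < t} m := by
      rw [← cnt_eq]
      exact Finset.card_le_card hEsub
    have hFsplit : (F.filter (fun v => (hitc A P v : ℝ) < t)).card + G.card = F.card :=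
      Finset.card_filter_add_card_filter_not _
    have h3 : F.card ≤ cnt {v : ℕ | (hitc A P v : ℝ) < t} m + G.card := by omega
    rw [hcntV]
    have h4 : (F.card : ℝ) ≤ (cnt {v : ℕ | (hitc A P v : ℝ) < t} m : ℝ) + (G.card : ℝ) := by
      exact_mod_cast h3
    linarith
  have hGsum : (G.card : ℝ) * t ≤ ∑ v ∈ G, (hitc A P v : ℝ) := by
    rw [← nsmul_eq_mul]
    apply Finset.card_nsmul_le_sum
    intro v hv
    simp only [hG, Finset.mem_filter, not_lt] at hv
    exact hv.2
  have hGF : ∑ v ∈ G, (hitc A P v : ℝ) ≤ ∑ v ∈ F, (hitc A P v : ℝ) :=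
    Finset.sum_le_sum_of_subset_of_nonneg (Finset.filter_subset _ _)
      (fun v _ _ => Nat.cast_nonneg _)
  rw [hsum]
  calc t * ((cnt V m : ℝ) - (cnt {v : ℕ | (hitc A P v : ℝ) < t} m : ℝ))
      ≤ t * (G.card : ℝ) := mul_le_mul_of_nonneg_left hGcard ht
  _ = (G.card : ℝ) * t := mul_comm _ _
  _ ≤ ∑ v ∈ G, (hitc A P v : ℝ) := hGsum
  _ ≤ ∑ v ∈ F, (hitc A P v : ℝ) := hGF

/-- the key step: given frequent densities for U and V, find c ∈ U beyond M such that
V ∩ (A - c) retains frequent density. -/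
lemma step (hmono : StrictMono b) (hpos : 0 < α)
    (hdens : Tendsto (fun k => (cnt A (b k) : ℝ) / (b k)) atTop (𝓝 α))
    (hL : ∀ i : ℕ, Tendsto (fun k => (cnt (A ∩ {a : ℕ | a + i ∈ A}) (b k) : ℝ) / (b k))
      atTop (𝓝 (L i)))
    (hmix : Tendsto (fun n : ℕ => (1 / (n : ℝ)) * ∑ i ∈ Finset.Icc 1 n, |L i - α ^ 2|)
      atTop (𝓝 0))
    {U V : Set ℕ} {γU γV : ℝ} (hγU : 0 < γU) (hγV : 0 < γV)
    (hU : FreqDens b U γU) (hV : FreqDens b V γV) (M : ℕ) :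
    ∃ c, M < c ∧ c ∈ U ∧ FreqDens b (V ∩ shiftSet A c) (α * γV / 4) := by
  have hα1 : α ≤ 1 := alpha_le_one hdens
  set δ : ℝ := α / 2 with hδdef
  have hδ : 0 < δ := by positivity
  set ε' : ℝ := δ^2 * γV / 8 with hε'def
  have hε' : 0 < ε' := by positivity
  set K : ℕ := ⌈(8 / (δ^2 * γV))⌉₊ + 1 with hKdef
  have hK1 : 1 ≤ K := by omega
  have hKR : (1:ℝ) ≤ (K:ℝ) := by exact_mod_cast hK1
  have hKbig : 8 / (δ^2 * γV) ≤ (K:ℝ) := by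
    calc 8 / (δ^2 * γV) ≤ (⌈(8 / (δ^2 * γV))⌉₊ : ℝ) := Nat.le_ceil _
    _ ≤ (K:ℝ) := by rw [hKdef]; push_cast; linarith
  have hKinv : 1 / (δ^2 * (K:ℝ)) ≤ γV / 8 := by
    rw [div_le_div_iff₀ (by positivity) (by norm_num)]
    have h8 : 8 ≤ (K:ℝ) * (δ^2 * γV) := by
      rw [div_le_iff₀ (by positivity)] at hKbig
      linarith
    nlinarith [sq_nonneg δ]
  -- construct the pool P
  have hPex : ∀ j : ℕ, ∃ P : Finset ℕ, P.card = j ∧ (↑P : Set ℕ) ⊆ U ∧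
      (∀ p ∈ P, M < p) ∧
      (∀ p ∈ P, ∀ q ∈ P, p ≠ q → |L (Nat.dist p q) - α ^ 2| < ε') := by
    intro j
    induction j with
    | zero => exact ⟨∅, by simp⟩
    | succ n ih =>
      obtain ⟨P, hcard, hPU, hPM, hgood⟩ := ih
      set M' : ℕ := max M (P.sup id) with hM'
      obtain ⟨x, hxS, hxM, hxgood⟩ := greedy hmono hmix hγU hU hε' P M'
        (fun p hp => le_max_of_le_right (Finset.le_sup (f := id) hp))
      have hxP : x ∉ P := fun h =>
        absurd (le_max_of_le_right (Finset.le_sup (f := id) h)) (not_le.2 hxM)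
      refine ⟨insert x P, ?_, ?_, ?_, ?_⟩
      · rw [Finset.card_insert_of_notMem hxP, hcard]
      · intro y hy
        rcases Finset.mem_insert.1 (by exact_mod_cast hy) with h | h
        · exact h ▸ hxS
        · exact hPU (by exact_mod_cast h)
      · intro p hp
        rcases Finset.mem_insert.1 hp with h | h
        · exact h ▸ lt_of_le_of_lt (le_max_left _ _) hxM
        · exact hPM p h
      · intro p hp q hq hpq
        have hdist : ∀ r ∈ P, |L (Nat.dist x r) - α ^ 2| < ε' := by
          intro r hr
          have hrx : r < x := lt_of_le_of_lt
            (le_max_of_le_right (Finset.le_sup (f := id) hr)) hxM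
          have : Nat.dist x r = x - r := Nat.dist_eq_sub_of_le_right hrx.le
          rw [this]
          exact hxgood r hr
        rcases Finset.mem_insert.1 hp with h1 | h1 <;> rcases Finset.mem_insert.1 hq with h2 | h2
        · exact absurd (h1.trans h2.symm) hpq
        · exact h1 ▸ hdist q h2
        · rw [Nat.dist_comm]
          exact h2 ▸ hdist p h1
        · exact hgood p h1 q h2 hpq
  obtain ⟨P, hcard, hPU, hPM, hgood⟩ := hPex K
  have hPne : P.Nonempty := Finset.card_pos.1 (by omega)
  -- bound the second moment limit
  have hQ' : (∑ c ∈ P, ∑ c' ∈ P, (rho α L c c' - α^2)) ≤ ε' * K^2 + K := by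
    have hinner : ∀ c ∈ P, (∑ c' ∈ P, (rho α L c c' - α^2)) ≤ ε' * K + 1 := by
      intro c hc
      have hterm : ∀ c' ∈ P, (rho α L c c' - α^2) ≤ ε' + (if c' = c then (1 - ε') else 0) := by
        intro c' hc'
        by_cases h : c' = c
        · rw [if_pos h, h]
          rw [show rho α L c c = α by simp [rho]]
          nlinarith [sq_nonneg α]
        · rw [if_neg h]
          have hne : c ≠ c' := fun hcc => h hcc.symm
          rw [show rho α L c c' = L (Nat.dist c c') by simp [rho, hne]]
          have := hgood c hc c' hc' hne
          rw [abs_lt] at this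
          linarith [this.2]
      calc (∑ c' ∈ P, (rho α L c c' - α^2))
          ≤ ∑ c' ∈ P, (ε' + (if c' = c then (1 - ε') else 0)) := Finset.sum_le_sum hterm
      _ = (P.card : ℝ) * ε' + (if c ∈ P then (1 - ε') else 0) := by
          rw [Finset.sum_add_distrib, Finset.sum_const, nsmul_eq_mul, Finset.sum_ite_eq']
      _ ≤ ε' * K + 1 := by
          rw [hcard, if_pos hc]
          nlinarith [hε'.le]
    calc (∑ c ∈ P, ∑ c' ∈ P, (rho α L c c' - α^2)) ≤ ∑ _c ∈ P, (ε' * K + 1) :=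
        Finset.sum_le_sum hinner
    _ = (P.card : ℝ) * (ε' * K + 1) := by rw [Finset.sum_const, nsmul_eq_mul]
    _ = ε' * K^2 + K := by rw [hcard]; ring
  -- the exceptional set and its Chebyshev bound
  set E : Set ℕ := {v | (hitc A P v : ℝ) < δ * K} with hEdef
  have hEcheb : ∀ m : ℕ, (cnt E m : ℝ) * (δ*K)^2 ≤
      ∑ v ∈ Finset.Icc 1 m, ((hitc A P v : ℝ) - α * P.card)^2 := by
    intro m
    have h1 : (cnt E m : ℝ) * (δ*K)^2 =
        ∑ _v ∈ (Finset.Icc 1 m).filter (· ∈ E), (δ*K)^2 := by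
      rw [Finset.sum_const, nsmul_eq_mul, cnt_eq]
    rw [h1]
    apply le_trans (Finset.sum_le_sum (g := fun v => ((hitc A P v : ℝ) - α * P.card)^2) ?_)
      (Finset.sum_le_sum_of_subset_of_nonneg (Finset.filter_subset _ _)
        (fun v _ _ => sq_nonneg _))
    intro v hv
    have hvE : v ∈ E := (Finset.mem_filter.1 hv).2
    rw [hEdef, Set.mem_setOf_eq] at hvE
    rw [hcard]
    have hhit0 : (0:ℝ) ≤ (hitc A P v : ℝ) := Nat.cast_nonneg _
    have hle : δ * K ≤ α * K - (hitc A P v : ℝ) := by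
      have : α * K = 2 * (δ * K) := by rw [hδdef]; ring
      linarith
    have hsq2 : (δ * (K:ℝ)) * (δ * K) ≤ (α * K - (hitc A P v : ℝ)) * (α * K - (hitc A P v : ℝ)) :=
      mul_le_mul hle hle (by positivity) (le_trans (by positivity) hle)
    nlinarith [hsq2]
  -- eventual smallness of E
  set η : ℝ := δ^2 * K^2 * γV / 8 with hηdef
  have hη : 0 < η := by positivity
  have hev1 : ∀ᶠ k in atTop,
      (∑ v ∈ Finset.Icc 1 (b k), ((hitc A P v : ℝ) - α * P.card)^2) / (b k)
        < (ε' * K^2 + K) + η :=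
    (sum_sq_tendsto hmono hdens hL P).eventually_lt_const (by linarith)
  have hev2 : ∀ᶠ k in atTop, (cnt E (b k) : ℝ) ≤ (γV / 2) * b k := by
    filter_upwards [hev1, bk_pos hmono] with k hk1 hk2
    have hbR : (1:ℝ) ≤ (b k : ℝ) := by exact_mod_cast hk2
    have hbpos : (0:ℝ) < (b k : ℝ) := by linarith
    have hcheb := hEcheb (b k)
    rw [div_lt_iff₀ hbpos] at hk1
    -- cnt E * (δK)² ≤ ((ε'K²+K) + η) * b k
    have h2 : (cnt E (b k) : ℝ) * (δ*K)^2 ≤ ((ε' * K^2 + K) + η) * b k :=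
      le_trans hcheb hk1.le
    -- divide through : (ε'K²+K+η)/(δK)² ≤ γV/2
    have h3 : ((ε' * K^2 + K) + η) ≤ (γV / 2) * (δ*K)^2 := by
      have e1 : ε' * K^2 = (γV / 8) * (δ*K)^2 := by rw [hε'def]; ring
      have e2 : η = (γV / 8) * (δ*K)^2 := by rw [hηdef]; ring
      have e3 : (K:ℝ) ≤ (γV / 8) * (δ*K)^2 := by
        have h0 : (0:ℝ) < δ^2 * K := by positivity
        have h1 := hKinv
        rw [div_le_iff₀ h0] at h1
        calc (K:ℝ) = 1 * K := (one_mul _).symm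
        _ ≤ (γV / 8 * (δ^2 * K)) * K :=
            mul_le_mul_of_nonneg_right h1 (by positivity)
        _ = (γV / 8) * (δ*K)^2 := by ring
      linarith
    have h4 : (0:ℝ) < (δ*K)^2 := by positivity
    have h5 : ((ε' * K^2 + K) + η) * b k ≤ ((γV / 2) * (δ*K)^2) * b k :=
      mul_le_mul_of_nonneg_right h3 hbpos.le
    have h6 : (cnt E (b k) : ℝ) * (δ*K)^2 ≤ ((γV/2) * b k) * (δ*K)^2 := by
      refine le_trans h2 (le_trans h5 ?_)
      apply le_of_eq
      ring
    exact (mul_le_mul_iff_of_pos_right h4).1 h6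
  -- combine with frequent density of V
  have hfreq : ∃ᶠ k in atTop, δ * K * ((γV/2) * b k) ≤
      ∑ c ∈ P, (cnt (V ∩ shiftSet A c) (b k) : ℝ) := by
    apply (hV.and_eventually (hev2.and (bk_pos hmono))).mono
    rintro k ⟨hkV, hkE, hkb⟩
    -- counting inequality at m = b k
    set m := b k with hm
    have key : δ * K * ((cnt V m : ℝ) - (cnt E m : ℝ)) ≤
        ∑ c ∈ P, (cnt (V ∩ shiftSet A c) m : ℝ) := by
      rw [hEdef]
      exact key_count A V P (δ * K) (by positivity) m
    have hVE : (γV/2) * m ≤ (cnt V m : ℝ) - (cnt E m : ℝ) := by linarith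
    calc δ * K * ((γV/2) * m) ≤ δ * K * ((cnt V m : ℝ) - (cnt E m : ℝ)) := by
          apply mul_le_mul_of_nonneg_left hVE (by positivity)
    _ ≤ _ := key
  -- pigeonhole
  have hpigeon : ∃ c ∈ P, ∃ᶠ k in atTop,
      (α * γV / 4) * (b k : ℝ) ≤ (cnt (V ∩ shiftSet A c) (b k) : ℝ) := by
    by_contra hcon
    push_neg at hcon
    have hall : ∀ᶠ k in atTop, ∀ c ∈ P,
        (cnt (V ∩ shiftSet A c) (b k) : ℝ) < (α * γV / 4) * (b k : ℝ) := by
      rw [eventually_all_finset]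
      intro c hc
      have := hcon c hc
      exact this
    obtain ⟨k, hk1, hk2, hk3⟩ := (hfreq.and_eventually (hall.and (bk_pos hmono))).exists
    have hsum : ∑ c ∈ P, (cnt (V ∩ shiftSet A c) (b k) : ℝ) <
        ∑ _c ∈ P, (α * γV / 4) * (b k : ℝ) :=
      Finset.sum_lt_sum_of_nonempty hPne (fun c hc => hk2 c hc)
    rw [Finset.sum_const, nsmul_eq_mul, hcard] at hsum
    have : δ * K * ((γV/2) * b k) = (K:ℝ) * ((α * γV / 4) * (b k : ℝ)) := by
      rw [hδdef]; ring
    linarith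
  obtain ⟨c, hcP, hcfreq⟩ := hpigeon
  exact ⟨c, hPM c hcP, hPU hcP, hcfreq⟩

end Main6

section Main7
variable {A : Set ℕ} {α : ℝ} {b : ℕ → ℕ} {L : ℕ → ℝ}

theorem build (hmono : StrictMono b) (hpos : 0 < α)
    (hdens : Tendsto (fun k => (cnt A (b k) : ℝ) / (b k)) atTop (𝓝 α))
    (hL : ∀ i : ℕ, Tendsto (fun k => (cnt (A ∩ {a : ℕ | a + i ∈ A}) (b k) : ℝ) / (b k))
      atTop (𝓝 (L i)))
    (hmix : Tendsto (fun n : ℕ => (1 / (n : ℝ)) * ∑ i ∈ Finset.Icc 1 n, |L i - α ^ 2|)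
      atTop (𝓝 0)) :
    ∃ B C : Set ℕ, B.Infinite ∧ C.Infinite ∧ ∀ x ∈ B, ∀ y ∈ C, x + y ∈ A := by
  -- the invariant
  set Pp : Finset ℕ × Finset ℕ × ℝ × ℝ → Prop := fun s =>
    0 < s.2.2.1 ∧ 0 < s.2.2.2 ∧ FreqDens b (USet A s.1) s.2.2.1 ∧
      FreqDens b (USet A s.2.1) s.2.2.2 ∧ (∀ x ∈ s.1, ∀ y ∈ s.2.1, x + y ∈ A) with hPp
  -- one double-step
  have hstep2 : ∀ s : {s // Pp s}, ∃ s' : {s // Pp s},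
      s.1.1 ⊆ s'.1.1 ∧ s.1.2.1 ⊆ s'.1.2.1 ∧
      s'.1.1.card = s.1.1.card + 1 ∧ s'.1.2.1.card = s.1.2.1.card + 1 := by
    rintro ⟨⟨Bf, Cf, γU, γV⟩, hγU, hγV, hU, hV, hcross⟩
    dsimp only at hγU hγV hU hV hcross
    -- first: add an element c to Cf
    obtain ⟨c, hcM, hcU, hcV⟩ := step hmono hpos hdens hL hmix hγU hγV hU hV
      ((Bf ∪ Cf).sup id)
    set Cf' := insert c Cf with hCf'
    have hcCf : c ∉ Cf := by
      intro h
      exact absurd (Finset.le_sup (f := id) (Finset.mem_union_right _ h)) (not_le.2 hcM)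
    have hV' : FreqDens b (USet A Cf') (α * γV / 4) := by
      rw [hCf', USet_insert]
      exact hcV
    have hγV' : 0 < α * γV / 4 := by positivity
    -- second: add an element x to Bf
    obtain ⟨x, hxM, hxU, hxV⟩ := step hmono hpos hdens hL hmix hγV' hγU hV' hU
      ((Bf ∪ Cf').sup id)
    set Bf' := insert x Bf with hBf'
    have hxBf : x ∉ Bf := by
      intro h
      exact absurd (Finset.le_sup (f := id) (Finset.mem_union_left _ h)) (not_le.2 hxM)
    have hU' : FreqDens b (USet A Bf') (α * γU / 4) := by
      rw [hBf', USet_insert]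
      exact hxV
    refine ⟨⟨(Bf', Cf', α * γU / 4, α * γV / 4), by positivity, hγV', hU', hV', ?_⟩,
      ?_, ?_, ?_, ?_⟩
    · -- cross property
      intro p hp q hq
      rcases Finset.mem_insert.1 hp with rfl | hp'
      · -- p = x : x ∈ USet A Cf'
        exact hxU q hq
      · rcases Finset.mem_insert.1 hq with rfl | hq'
        · -- q = c : c ∈ USet A Bf
          rw [add_comm]
          exact hcU p hp'
        · exact hcross p hp' q hq'
    · exact Finset.subset_insert _ _
    · exact Finset.subset_insert _ _
    · exact Finset.card_insert_of_notMem hxBf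
    · exact Finset.card_insert_of_notMem hcCf
  -- initial state
  have hinit : Pp (∅, ∅, 1, 1) := by
    refine ⟨one_pos, one_pos, ?_, ?_, by simp⟩ <;>
    · rw [USet_empty]
      apply Filter.Frequently.of_forall
      intro k
      rw [cnt_univ, one_mul]
  -- iterate
  choose F hF1 hF2 hF3 hF4 using hstep2
  set g : ℕ → {s // Pp s} := fun n => F^[n] ⟨(∅, ∅, 1, 1), hinit⟩ with hg
  have hgsucc : ∀ n, g (n + 1) = F (g n) := by
    intro n
    rw [hg]
    exact Function.iterate_succ_apply' F _ _
  have hcardB : ∀ n, ((g n).1.1).card = n := by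
    intro n
    induction n with
    | zero => simp [hg]
    | succ n ih => rw [hgsucc, hF3, ih]
  have hcardC : ∀ n, ((g n).1.2.1).card = n := by
    intro n
    induction n with
    | zero => simp [hg]
    | succ n ih => rw [hgsucc, hF4, ih]
  have hmonoB : ∀ m n, m ≤ n → (g m).1.1 ⊆ (g n).1.1 := by
    intro m n hmn
    induction n with
    | zero => rw [Nat.le_zero.1 hmn]
    | succ n ih =>
      rcases Nat.lt_or_ge m (n+1) with h | h
      · exact (ih (by omega)).trans (by rw [hgsucc]; exact hF1 (g n))
      · rw [Nat.le_antisymm hmn h]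
  have hmonoC : ∀ m n, m ≤ n → (g m).1.2.1 ⊆ (g n).1.2.1 := by
    intro m n hmn
    induction n with
    | zero => rw [Nat.le_zero.1 hmn]
    | succ n ih =>
      rcases Nat.lt_or_ge m (n+1) with h | h
      · exact (ih (by omega)).trans (by rw [hgsucc]; exact hF2 (g n))
      · rw [Nat.le_antisymm hmn h]
  -- the sets
  refine ⟨{x | ∃ n, x ∈ (g n).1.1}, {y | ∃ n, y ∈ (g n).1.2.1}, ?_, ?_, ?_⟩
  · intro hfin
    set T := hfin.toFinset with hT
    have hsub : (g (T.card + 1)).1.1 ⊆ T := by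
      intro z hz
      rw [hT, Set.Finite.mem_toFinset]
      exact ⟨T.card + 1, hz⟩
    have := Finset.card_le_card hsub
    rw [hcardB] at this
    omega
  · intro hfin
    set T := hfin.toFinset with hT
    have hsub : (g (T.card + 1)).1.2.1 ⊆ T := by
      intro z hz
      rw [hT, Set.Finite.mem_toFinset]
      exact ⟨T.card + 1, hz⟩
    have := Finset.card_le_card hsub
    rw [hcardC] at this
    omega
  · rintro x ⟨m, hm⟩ y ⟨n, hn⟩
    have hx : x ∈ (g (max m n)).1.1 := hmonoB m _ (le_max_left _ _) hm
    have hy : y ∈ (g (max m n)).1.2.1 := hmonoC n _ (le_max_right _ _) hn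
    exact (g (max m n)).2.2.2.2.2 x hx y hy

end Main7

end BCAux


theorem pseudorandom_BC (A : Set ℕ) (α : ℝ) (hα : upperDensity A = α) (hpos : 0 < α)
    (b : ℕ → ℕ) (hmono : StrictMono b)
    (hb : Filter.Tendsto b Filter.atTop Filter.atTop)
    (hdens : Filter.Tendsto (fun k => (Nat.card ↥(A ∩ Set.Icc 1 (b k)) : ℝ) / (b k))
      Filter.atTop (nhds α))
    (L : ℕ → ℝ)
    (hL : ∀ i : ℕ, Filter.Tendsto
      (fun k => (Nat.card ↥(A ∩ {a : ℕ | a + i ∈ A} ∩ Set.Icc 1 (b k)) : ℝ) / (b k))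
      Filter.atTop (nhds (L i)))
    (hmix : Filter.Tendsto
      (fun n : ℕ => (1 / (n : ℝ)) * ∑ i ∈ Finset.Icc 1 n, |L i - α ^ 2|)
      Filter.atTop (nhds 0)) :
    ∃ B C : Set ℕ, B.Infinite ∧ C.Infinite ∧ ∀ x ∈ B, ∀ y ∈ C, x + y ∈ A := by
  simp only [BCAux.natCard_eq_cnt] at hdens hL
  exact BCAux.build hmono hpos hdens hL hmix
end

section
/- Let A ⊆ ℕ have positive upper density, d̄(A) > 0. Then there is a set L ⊆ ℕ such that the lower density of L equals d̄(A), i.e. d̲(L) = d̄(A), and for every finite F ⊆ L one has d̄(⋂_{l∈F} (A − l)) > 0, where A − l := {a ∈ ℕ : a + l ∈ A}. -/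
/-- The lower asymptotic density of `A ⊆ ℕ`: `d̲(A) = liminf_{n→∞} |A ∩ [1,n]| / n`. -/
noncomputable def lowerDensity (A : Set ℕ) : ℝ :=
  Filter.atTop.liminf fun n : ℕ => (Nat.card ↥(A ∩ Set.Icc 1 n) : ℝ) / n

open Filter Set
open scoped Classical

namespace ELUD

noncomputable def cnt (S : Set ℕ) (n : ℕ) : ℕ := ((Finset.Icc 1 n).filter (fun m => m ∈ S)).card

lemma cnt_zero (S : Set ℕ) : cnt S 0 = 0 := by simp [cnt]

lemma Icc_succ (n : ℕ) : Finset.Icc 1 (n+1) = insert (n+1) (Finset.Icc 1 n) := by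
  ext m; simp [Finset.mem_Icc, Finset.mem_insert]; omega

lemma cnt_succ (S : Set ℕ) (n : ℕ) :
    cnt S (n+1) = cnt S n + (if (n+1) ∈ S then 1 else 0) := by
  unfold cnt
  rw [Icc_succ, Finset.filter_insert]
  split
  · rw [Finset.card_insert_of_notMem (by simp)]
  · simp

lemma cnt_mono (S : Set ℕ) : Monotone (cnt S) := by
  apply monotone_nat_of_le_succ
  intro n; rw [cnt_succ]; omega

lemma cnt_le (S : Set ℕ) (n : ℕ) : cnt S n ≤ n := by
  calc cnt S n ≤ (Finset.Icc 1 n).card := Finset.card_filter_le _ _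
  _ = n := by simp

lemma cnt_subset {S S' : Set ℕ} (h : S ⊆ S') (n : ℕ) : cnt S n ≤ cnt S' n := by
  apply Finset.card_le_card
  intro m hm
  simp only [Finset.mem_filter] at hm ⊢
  exact ⟨hm.1, h hm.2⟩

lemma natCard_eq (S : Set ℕ) (n : ℕ) : Nat.card ↥(S ∩ Set.Icc 1 n) = cnt S n := by
  have h : S ∩ Set.Icc 1 n = ↑((Finset.Icc 1 n).filter (fun m => m ∈ S)) := by
    ext m
    simp only [Set.mem_inter_iff, Set.mem_Icc, Finset.coe_filter, Finset.mem_Icc,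
      Set.mem_setOf_eq]
    tauto
  rw [h, Nat.card_coe_set_eq, Set.ncard_coe_finset]
  rfl

lemma uD_eq (S : Set ℕ) :
    upperDensity S = Filter.atTop.limsup (fun n => (cnt S n : ℝ) / n) := by
  unfold upperDensity
  congr 1
  funext n
  rw [natCard_eq]

lemma lD_eq (S : Set ℕ) :
    lowerDensity S = Filter.atTop.liminf (fun n => (cnt S n : ℝ) / n) := by
  unfold lowerDensity
  congr 1
  funext n
  rw [natCard_eq]

lemma ratio_nonneg (S : Set ℕ) (n : ℕ) : 0 ≤ (cnt S n : ℝ) / n := by positivity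

lemma ratio_le_one (S : Set ℕ) (n : ℕ) : (cnt S n : ℝ) / n ≤ 1 := by
  rcases Nat.eq_zero_or_pos n with h | h
  · simp [h]
  · rw [div_le_one (by exact_mod_cast h)]
    exact_mod_cast cnt_le S n

lemma isBddAbove (S : Set ℕ) :
    Filter.IsBoundedUnder (· ≤ ·) Filter.atTop (fun n => (cnt S n : ℝ) / n) :=
  Filter.isBoundedUnder_of ⟨1, ratio_le_one S⟩

lemma isBddBelow (S : Set ℕ) :
    Filter.IsBoundedUnder (· ≥ ·) Filter.atTop (fun n => (cnt S n : ℝ) / n) :=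
  Filter.isBoundedUnder_of ⟨0, ratio_nonneg S⟩

lemma isCobddAbove (S : Set ℕ) :
    Filter.IsCoboundedUnder (· ≤ ·) Filter.atTop (fun n => (cnt S n : ℝ) / n) :=
  (isBddBelow S).isCoboundedUnder_flip

lemma isCobddBelow (S : Set ℕ) :
    Filter.IsCoboundedUnder (· ≥ ·) Filter.atTop (fun n => (cnt S n : ℝ) / n) :=
  (isBddAbove S).isCoboundedUnder_flip

lemma uD_le_one (S : Set ℕ) : upperDensity S ≤ 1 := by
  rw [uD_eq]
  exact Filter.limsup_le_of_le (isCobddAbove S)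
    (Filter.Eventually.of_forall (ratio_le_one S))


noncomputable def Wc (A : Set ℕ) (n M : ℕ) : ℕ := cnt {l | n + l ∈ A} M

def GoodPt (A : Set ℕ) (θ : ℝ) (Mb : ℕ) (n : ℕ) : Prop :=
  ∀ M, 1 ≤ M → M ≤ Mb → θ * M ≤ (Wc A n M : ℝ)

noncomputable def gcnt (A : Set ℕ) (θ : ℝ) (Mb : ℕ) (n₀ j : ℕ) : ℕ :=
  ((Finset.range j).filter (fun t => GoodPt A θ Mb (n₀ + t))).card

lemma Wc_succ (A : Set ℕ) (n M : ℕ) :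
    Wc A n (M+1) = Wc A n M + (if n + (M+1) ∈ A then 1 else 0) := by
  unfold Wc
  rw [cnt_succ]
  rfl

lemma Wc_split (A : Set ℕ) (n₀ M t : ℕ) :
    Wc A n₀ (M + t) = Wc A n₀ M + Wc A (n₀ + M) t := by
  induction t with
  | zero => simp [Wc, cnt_zero]
  | succ t ih =>
    rw [show M + (t+1) = (M + t) + 1 by omega, Wc_succ, ih, Wc_succ]
    have h : n₀ + (M + t + 1) = n₀ + M + (t + 1) := by omega
    rw [h]
    omega

lemma gcnt_succ (A : Set ℕ) (θ : ℝ) (Mb : ℕ) (n₀ j : ℕ) :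
    gcnt A θ Mb n₀ (j+1) = gcnt A θ Mb n₀ j + (if GoodPt A θ Mb (n₀ + j) then 1 else 0) := by
  unfold gcnt
  rw [Finset.range_add_one, Finset.filter_insert]
  split
  · rw [Finset.card_insert_of_notMem (by simp)]
  · simp

lemma gcnt_split (A : Set ℕ) (θ : ℝ) (Mb : ℕ) (n₀ M t : ℕ) :
    gcnt A θ Mb n₀ (M + t) = gcnt A θ Mb n₀ M + gcnt A θ Mb (n₀ + M) t := by
  induction t with
  | zero => simp [gcnt]
  | succ t ih =>
    rw [show M + (t+1) = (M + t) + 1 by omega, gcnt_succ, ih, gcnt_succ]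
    have h : n₀ + (M + t) = n₀ + M + t := by omega
    rw [h]
    omega

lemma covering (A : Set ℕ) (θ : ℝ) (Mb : ℕ) (hθ0 : 0 ≤ θ) (hθ1 : θ ≤ 1) :
    ∀ j n₀, (Wc A n₀ j : ℝ) ≤ θ * j + gcnt A θ Mb n₀ j + Mb := by
  intro j
  induction j using Nat.strong_induction_on with
  | _ j ih =>
    intro n₀
    rcases Nat.eq_zero_or_pos j with hj | hj
    · subst hj
      simp [Wc, cnt_zero]
      positivity
    · by_cases hg : GoodPt A θ Mb n₀
      · have hWs := Wc_split A n₀ 1 (j-1)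
        rw [show 1 + (j-1) = j by omega] at hWs
        have hgs := gcnt_split A θ Mb n₀ 1 (j-1)
        rw [show 1 + (j-1) = j by omega] at hgs
        have hg1 : gcnt A θ Mb n₀ 1 = 1 := by
          unfold gcnt
          rw [Finset.range_one, Finset.filter_singleton, if_pos (by simpa using hg)]
          simp
        have hW1 : Wc A n₀ 1 ≤ 1 := cnt_le _ 1
        have hih := ih (j-1) (by omega) (n₀ + 1)
        have hcast : ((j-1 : ℕ) : ℝ) = (j : ℝ) - 1 := by
          have := Nat.cast_sub (R := ℝ) hj
          simpa using this
        have e1 : (Wc A n₀ j : ℝ) = (Wc A n₀ 1 : ℝ) + (Wc A (n₀+1) (j-1) : ℝ) := by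
          exact_mod_cast congrArg (Nat.cast : ℕ → ℝ) hWs
        have e2 : (gcnt A θ Mb n₀ j : ℝ) = 1 + (gcnt A θ Mb (n₀+1) (j-1) : ℝ) := by
          rw [hgs, hg1]; push_cast; ring
        have hW1' : (Wc A n₀ 1 : ℝ) ≤ 1 := by exact_mod_cast hW1
        rw [e1, e2]
        rw [hcast] at hih
        nlinarith
      · unfold GoodPt at hg
        push_neg at hg
        obtain ⟨M, hM1, hMb, hbad⟩ := hg
        rcases le_or_gt j M with hjM | hMj
        · have hmono : Wc A n₀ j ≤ Wc A n₀ M := cnt_mono _ hjM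
          have hmono' : (Wc A n₀ j : ℝ) ≤ (Wc A n₀ M : ℝ) := by exact_mod_cast hmono
          have hMb' : (M : ℝ) ≤ (Mb : ℝ) := by exact_mod_cast hMb
          have hjM' : (j : ℝ) ≤ (M : ℝ) := by exact_mod_cast hjM
          have hgc : (0:ℝ) ≤ (gcnt A θ Mb n₀ j : ℝ) := by positivity
          nlinarith
        · have hWs := Wc_split A n₀ M (j - M)
          rw [show M + (j - M) = j by omega] at hWs
          have hgs := gcnt_split A θ Mb n₀ M (j - M)
          rw [show M + (j - M) = j by omega] at hgs
          have hih := ih (j - M) (by omega) (n₀ + M)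
          have hcast : ((j - M : ℕ) : ℝ) = (j : ℝ) - M := by
            have := Nat.cast_sub (R := ℝ) hMj.le
            simpa using this
          have e1 : (Wc A n₀ j : ℝ) = (Wc A n₀ M : ℝ) + (Wc A (n₀+M) (j-M) : ℝ) := by
            exact_mod_cast congrArg (Nat.cast : ℕ → ℝ) hWs
          have e2 : (gcnt A θ Mb (n₀+M) (j-M) : ℝ) ≤ (gcnt A θ Mb n₀ j : ℝ) := by
            exact_mod_cast le_of_eq_of_le (congrArg _ rfl) (hgs ▸ Nat.le_add_left _ _)
          rw [hcast] at hih
          nlinarith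

noncomputable def ceilc (δ : ℝ) (n : ℕ) : ℕ := ⌈δ * n⌉₊

noncomputable def uu (L : Set ℕ) (δ : ℝ) (n : ℕ) : ℕ := cnt L n - ceilc δ n

noncomputable def ss (L : Set ℕ) (δ : ℝ) (n : ℕ) : ℕ := sInf (uu L δ '' Set.Ici n)

noncomputable def TT (L : Set ℕ) (δ : ℝ) (n : ℕ) : ℕ := cnt L n - ss L δ n

noncomputable def kk (L : Set ℕ) (δ : ℝ) : ℕ → ℕ
  | 0 => 0
  | n+1 => kk L δ n + if ((n+1) ∈ L ∧ kk L δ n < TT L δ (n+1)) then 1 else 0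

section Thin
variable (L₀ : Set ℕ) (δ : ℝ)

lemma ss_le_uu (n : ℕ) : ss L₀ δ n ≤ uu L₀ δ n :=
  Nat.sInf_le ⟨n, Set.self_mem_Ici, rfl⟩

lemma ss_attain (n : ℕ) : ∃ j, n ≤ j ∧ uu L₀ δ j = ss L₀ δ n := by
  have hne : (uu L₀ δ '' Set.Ici n).Nonempty := ⟨uu L₀ δ n, ⟨n, Set.self_mem_Ici, rfl⟩⟩
  have := Nat.sInf_mem hne
  rcases this with ⟨j, hj, hje⟩
  exact ⟨j, hj, hje⟩

lemma ss_mono {n m : ℕ} (h : n ≤ m) : ss L₀ δ n ≤ ss L₀ δ m := by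
  rcases ss_attain L₀ δ m with ⟨j, hj, hje⟩
  rw [← hje]
  exact Nat.sInf_le ⟨j, le_trans h hj, rfl⟩

lemma record_exists (K : ℕ) : ∃ r, K ≤ r ∧ ∀ m, r ≤ m → uu L₀ δ r ≤ uu L₀ δ m := by
  rcases ss_attain L₀ δ K with ⟨r, hr, hre⟩
  refine ⟨r, hr, fun m hm => ?_⟩
  rw [hre]
  exact Nat.sInf_le ⟨m, le_trans hr hm, rfl⟩

variable (hδ0 : 0 < δ) (hc : ∀ M : ℕ, δ * M ≤ (cnt L₀ M : ℝ))

include hc in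
lemma ceilc_le_cnt (n : ℕ) : ceilc δ n ≤ cnt L₀ n := Nat.ceil_le.mpr (hc n)

include hδ0 in
lemma ceilc_mono {n m : ℕ} (h : n ≤ m) : ceilc δ n ≤ ceilc δ m :=
  Nat.ceil_le_ceil (mul_le_mul_of_nonneg_left (by exact_mod_cast h) hδ0.le)

include hδ0 hc in
lemma TT_le_of_record {r : ℕ} (hr : ∀ m, r ≤ m → uu L₀ δ r ≤ uu L₀ δ m)
    {m : ℕ} (hm : m ≤ r) : TT L₀ δ m ≤ ceilc δ r := by
  rcases ss_attain L₀ δ m with ⟨j, hj, hje⟩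
  have hum : uu L₀ δ j = cnt L₀ j - ceilc δ j := rfl
  have hc1 := ceilc_le_cnt L₀ δ hc j
  have hc2 := ceilc_le_cnt L₀ δ hc r
  have hT : TT L₀ δ m = cnt L₀ m - ss L₀ δ m := rfl
  rcases le_total j r with hjr | hrj
  · have h1 : cnt L₀ m ≤ cnt L₀ j := cnt_mono L₀ hj
    have h2 : ceilc δ j ≤ ceilc δ r := ceilc_mono δ hδ0 hjr
    omega
  · have h1 : cnt L₀ m ≤ cnt L₀ r := cnt_mono L₀ hm
    have h2 : uu L₀ δ r ≤ uu L₀ δ j := hr j hrj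
    have h3 : ss L₀ δ m ≤ uu L₀ δ r := Nat.sInf_le ⟨r, hm, rfl⟩
    have hur : uu L₀ δ r = cnt L₀ r - ceilc δ r := rfl
    omega

lemma kk_succ_le (n : ℕ) : kk L₀ δ (n+1) ≤ kk L₀ δ n + 1 := by
  simp only [kk]; split <;> omega

lemma kk_le_succ (n : ℕ) : kk L₀ δ n ≤ kk L₀ δ (n+1) := by
  simp only [kk]; split <;> omega

include hc in
lemma kk_le_cnt (n : ℕ) : kk L₀ δ n ≤ cnt L₀ n := by
  induction n with
  | zero => simp [kk, cnt_zero]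
  | succ n ih =>
    rw [cnt_succ]
    simp only [kk]
    split
    · next h => simp [h.1]; omega
    · omega

include hδ0 hc in
lemma TT_le_kk (n : ℕ) : TT L₀ δ n ≤ kk L₀ δ n + 1 := by
  induction n with
  | zero =>
    have h1 := ss_le_uu L₀ δ 0
    have h2 : uu L₀ δ 0 = cnt L₀ 0 - ceilc δ 0 := rfl
    have h3 : TT L₀ δ 0 = cnt L₀ 0 - ss L₀ δ 0 := rfl
    have h4 := cnt_zero L₀
    omega
  | succ n ih =>
    have hsm : ss L₀ δ n ≤ ss L₀ δ (n+1) := ss_mono L₀ δ (Nat.le_succ n)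
    have hsu : ss L₀ δ n ≤ uu L₀ δ n := ss_le_uu L₀ δ n
    have hsu1 : ss L₀ δ (n+1) ≤ uu L₀ δ (n+1) := ss_le_uu L₀ δ (n+1)
    have hu : uu L₀ δ n = cnt L₀ n - ceilc δ n := rfl
    have hu1 : uu L₀ δ (n+1) = cnt L₀ (n+1) - ceilc δ (n+1) := rfl
    have hcc := ceilc_le_cnt L₀ δ hc n
    have hcc1 := ceilc_le_cnt L₀ δ hc (n+1)
    have hT : TT L₀ δ n = cnt L₀ n - ss L₀ δ n := rfl
    have hT1 : TT L₀ δ (n+1) = cnt L₀ (n+1) - ss L₀ δ (n+1) := rfl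
    have hcs := cnt_succ L₀ n
    simp only [kk]
    split
    · next h =>
      -- added: kk(n+1) = kk n + 1 ≥ TT n; and Δcnt = 1
      have : cnt L₀ (n+1) = cnt L₀ n + 1 := by rw [hcs]; simp [h.1]
      omega
    · next h =>
      push_neg at h
      by_cases hL : (n+1) ∈ L₀
      · have := h hL
        omega
      · have : cnt L₀ (n+1) = cnt L₀ n := by rw [hcs]; simp [hL]
        omega

include hδ0 hc in
lemma ceilc_le_TT (n : ℕ) : ceilc δ n ≤ TT L₀ δ n := by
  have h1 := ss_le_uu L₀ δ n
  have h2 : uu L₀ δ n = cnt L₀ n - ceilc δ n := rfl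
  have h3 : TT L₀ δ n = cnt L₀ n - ss L₀ δ n := rfl
  have h4 := ceilc_le_cnt L₀ δ hc n
  omega

include hδ0 hc in
lemma kk_record_le {r : ℕ} (hr : ∀ m, r ≤ m → uu L₀ δ r ≤ uu L₀ δ m) :
    kk L₀ δ r ≤ ceilc δ r := by
  suffices h : ∀ n, n ≤ r → kk L₀ δ n ≤ ceilc δ r by exact h r le_rfl
  intro n
  induction n with
  | zero => intro _; simp [kk]
  | succ n ih =>
    intro hn
    simp only [kk]
    split
    · next h =>
      have := TT_le_of_record L₀ δ hδ0 hc hr (le_refl r) -- dummy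
      have hT := TT_le_of_record L₀ δ hδ0 hc hr hn
      omega
    · next h =>
      have := ih (le_trans (Nat.le_succ n) hn)
      omega

lemma cnt_eq_kk (n : ℕ) :
    cnt {m | 0 < m ∧ kk L₀ δ (m-1) < kk L₀ δ m} n = kk L₀ δ n := by
  induction n with
  | zero => simp [kk, cnt_zero]
  | succ n ih =>
    rw [cnt_succ, ih]
    by_cases h : (n+1) ∈ L₀ ∧ kk L₀ δ n < TT L₀ δ (n+1)
    · have hk : kk L₀ δ (n+1) = kk L₀ δ n + 1 := by simp only [kk]; simp [h]
      have : (n+1) ∈ {m | 0 < m ∧ kk L₀ δ (m-1) < kk L₀ δ m} := by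
        simp only [Set.mem_setOf_eq, Nat.add_sub_cancel]
        omega
      simp [this, hk]
    · have hk : kk L₀ δ (n+1) = kk L₀ δ n := by simp only [kk]; simp [h]
      have : (n+1) ∉ {m | 0 < m ∧ kk L₀ δ (m-1) < kk L₀ δ m} := by
        simp only [Set.mem_setOf_eq, Nat.add_sub_cancel]
        omega
      simp [this, hk]

include hδ0 hc in
lemma thinning :
    ∃ L : Set ℕ, L ⊆ L₀ ∧ Filter.atTop.liminf (fun n => (cnt L n : ℝ) / n) = δ := by
  refine ⟨{m | 0 < m ∧ kk L₀ δ (m-1) < kk L₀ δ m}, ?_, ?_⟩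
  · intro m hm
    simp only [Set.mem_setOf_eq] at hm
    obtain ⟨hm0, hmk⟩ := hm
    obtain ⟨n, rfl⟩ : ∃ n, m = n + 1 := ⟨m - 1, by omega⟩
    simp only [Nat.add_sub_cancel] at hmk
    by_contra hL
    have : kk L₀ δ (n+1) = kk L₀ δ n := by simp only [kk]; simp [hL]
    omega
  · have hkey : ∀ n : ℕ, cnt {m | 0 < m ∧ kk L₀ δ (m-1) < kk L₀ δ m} n = kk L₀ δ n :=
      cnt_eq_kk L₀ δ
    have hlow : ∀ n : ℕ, 1 ≤ n → δ - 1/(n:ℝ) ≤ (kk L₀ δ n : ℝ)/n := by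
      intro n hn
      have h1 : ceilc δ n ≤ kk L₀ δ n + 1 :=
        le_trans (ceilc_le_TT L₀ δ hδ0 hc n) (TT_le_kk L₀ δ hδ0 hc n)
      have h2 : δ * n ≤ (ceilc δ n : ℝ) := Nat.le_ceil _
      have h3 : (ceilc δ n : ℝ) ≤ (kk L₀ δ n : ℝ) + 1 := by exact_mod_cast h1
      have hn' : (0:ℝ) < n := by exact_mod_cast hn
      rw [sub_le_iff_le_add, ← add_div, le_div_iff₀ hn']
      calc δ * n ≤ (kk L₀ δ n : ℝ) + 1 := le_trans h2 h3
      _ = ((kk L₀ δ n : ℝ) + 1) / n * n := by field_simp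
      _ ≤ _ := by rw [div_mul_eq_mul_div, mul_div_assoc]; nlinarith [div_self (ne_of_gt hn')]
    have hfun : (fun n => (cnt {m | 0 < m ∧ kk L₀ δ (m-1) < kk L₀ δ m} n : ℝ) / n)
        = fun n => (kk L₀ δ n : ℝ) / n := funext fun n => by rw [hkey]
    rw [hfun]
    have hbb : Filter.IsBoundedUnder (· ≥ ·) Filter.atTop (fun n => (kk L₀ δ n : ℝ)/n) :=
      Filter.isBoundedUnder_of ⟨0, fun n => by positivity⟩
    apply le_antisymm
    · apply le_of_forall_pos_le_add
      intro η hη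
      apply Filter.liminf_le_of_frequently_le ?_ hbb
      rw [Filter.frequently_atTop]
      intro K
      obtain ⟨r, hrK, hr⟩ := record_exists L₀ δ (max K (⌈1/η⌉₊ + 1))
      have hrK1 : K ≤ r := le_trans (le_max_left _ _) hrK
      have hr1 : 1 ≤ r := by
        have := le_trans (le_max_right _ _) hrK; omega
      have hr0 : (0:ℝ) < r := by exact_mod_cast hr1
      refine ⟨r, hrK1, ?_⟩
      have h1 : kk L₀ δ r ≤ ceilc δ r := kk_record_le L₀ δ hδ0 hc hr
      have h2 : (ceilc δ r : ℝ) < δ * r + 1 := Nat.ceil_lt_add_one (by positivity)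
      have h3 : (1:ℝ)/r ≤ η := by
        rw [div_le_iff₀ hr0]
        have hceil : (1:ℝ)/η ≤ ((⌈1/η⌉₊ : ℕ) : ℝ) := Nat.le_ceil _
        have hrr : ((⌈1/η⌉₊ + 1 : ℕ) : ℝ) ≤ (r:ℝ) := by
          exact_mod_cast le_trans (le_max_right _ _) hrK
        have : (1:ℝ)/η ≤ r := by push_cast at hrr ⊢; linarith
        calc (1:ℝ) = η * (1/η) := by field_simp
        _ ≤ η * r := by apply mul_le_mul_of_nonneg_left this hη.le
      have h4 : (kk L₀ δ r : ℝ) ≤ δ * r + 1 := by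
        calc (kk L₀ δ r : ℝ) ≤ (ceilc δ r : ℝ) := by exact_mod_cast h1
        _ ≤ δ * r + 1 := h2.le
      rw [div_le_iff₀ hr0]
      calc (kk L₀ δ r : ℝ) ≤ δ * r + 1 := h4
      _ = (δ + 1/r) * r := by field_simp
      _ ≤ (δ + η) * r := by
        apply mul_le_mul_of_nonneg_right _ hr0.le
        linarith
    · have hten : Filter.Tendsto (fun n : ℕ => δ - 1/(n:ℝ)) Filter.atTop (nhds δ) := by
        simpa using (tendsto_const_nhds (x := δ)).sub tendsto_one_div_atTop_nhds_zero_nat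
      have hev : ∀ᶠ n : ℕ in Filter.atTop, δ - 1/(n:ℝ) ≤ (kk L₀ δ n : ℝ)/n :=
        Filter.eventually_atTop.mpr ⟨1, hlow⟩
      have hcb : Filter.IsBoundedUnder (· ≤ ·) Filter.atTop (fun n : ℕ => δ - 1/(n:ℝ)) :=
        Filter.isBoundedUnder_of ⟨δ, fun n => by
          have h0 : (0:ℝ) ≤ 1/(n:ℝ) := by positivity
          linarith⟩
      have hu : Filter.IsBoundedUnder (· ≥ ·) Filter.atTop (fun n : ℕ => δ - 1/(n:ℝ)) :=
        Filter.isBoundedUnder_of ⟨δ - 1, fun n => by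
          have h1 : 1/(n:ℝ) ≤ 1 := by
            rcases Nat.eq_zero_or_pos n with h|h
            · simp [h]
            · rw [div_le_one (by exact_mod_cast h)]; exact_mod_cast h
          simp only [ge_iff_le]; linarith⟩
      have hv : Filter.IsCoboundedUnder (· ≥ ·) Filter.atTop (fun n : ℕ => (kk L₀ δ n : ℝ)/n) :=
        (Filter.isBoundedUnder_of ⟨1, fun n => by
          rcases Nat.eq_zero_or_pos n with h|h
          · simp [h]
          · rw [div_le_one (by exact_mod_cast h)]
            exact_mod_cast le_trans (kk_le_cnt L₀ δ hc n) (cnt_le L₀ n)⟩).isCoboundedUnder_flip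
      calc δ = Filter.atTop.liminf (fun n : ℕ => δ - 1/(n:ℝ)) := hten.liminf_eq.symm
      _ ≤ _ := Filter.liminf_le_liminf hev hu hv
end Thin


lemma Wc_zero_left (A : Set ℕ) (N : ℕ) : Wc A 0 N = cnt A N := by
  unfold Wc
  congr 1
  ext l; simp

lemma rangeFilter_le (S : Set ℕ) (N : ℕ) :
    ((Finset.range N).filter (fun v => v ∈ S)).card ≤ cnt S N + 1 := by
  have hsub : (Finset.range N).filter (fun v => v ∈ S)
      ⊆ insert 0 ((Finset.Icc 1 N).filter (fun v => v ∈ S)) := by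
    intro v hv
    simp only [Finset.mem_filter, Finset.mem_range] at hv
    rcases Nat.eq_zero_or_pos v with h | h
    · simp [h]
    · apply Finset.mem_insert_of_mem
      simp only [Finset.mem_filter, Finset.mem_Icc]
      exact ⟨⟨h, by omega⟩, hv.2⟩
  calc ((Finset.range N).filter (fun v => v ∈ S)).card
      ≤ (insert 0 ((Finset.Icc 1 N).filter (fun v => v ∈ S))).card := Finset.card_le_card hsub
  _ ≤ _ + 1 := Finset.card_insert_le _ _

noncomputable def AF (A : Set ℕ) (F : Finset ℕ) : Set ℕ := ⋂ l ∈ F, {a : ℕ | a + l ∈ A}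

lemma mem_AF {A : Set ℕ} {F : Finset ℕ} {n : ℕ} : n ∈ AF A F ↔ ∀ l ∈ F, n + l ∈ A := by
  simp [AF]

noncomputable def decF (m : ℕ) : Finset ℕ := (Encodable.decode m).getD ∅

lemma decF_encode (F : Finset ℕ) : decF (Encodable.encode F) = F := by
  simp [decF, Encodable.encodek]

lemma exists_pt (A : Set ℕ) (hA : 0 < upperDensity A) (hA1 : upperDensity A ≤ 1) (i : ℕ) :
    ∃ n : ℕ, GoodPt A (upperDensity A - min (1/(i+1:ℝ)) (upperDensity A / 2)) (i+1) n ∧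
      ∀ m, m ≤ i → upperDensity (AF A (decF m)) ≤ 0 → n ∉ AF A (decF m) := by
  set δ := upperDensity A with hδdef
  set ε : ℝ := min (1/(i+1:ℝ)) (δ/2) with hεdef
  have hε0 : 0 < ε := lt_min (by positivity) (by positivity)
  have hεδ2 : ε ≤ δ/2 := min_le_right _ _
  set θ : ℝ := δ - ε with hθdef
  have hθ0 : 0 ≤ θ := by simp only [hθdef]; linarith
  have hθ1 : θ ≤ 1 := by simp only [hθdef]; linarith
  set Mb : ℕ := i + 1 with hMbdef
  set η : ℝ := ε / (4 * (i+1)) with hηdef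
  have hη0 : 0 < η := by positivity
  have hrare : ∀ᶠ N : ℕ in Filter.atTop, ∀ m ∈ Finset.range (i+1),
      upperDensity (AF A (decF m)) ≤ 0 → (cnt (AF A (decF m)) N : ℝ) < η * N := by
    rw [eventually_all_finset]
    intro m _
    by_cases hm : upperDensity (AF A (decF m)) ≤ 0
    · have hlt : Filter.atTop.limsup (fun N : ℕ => (cnt (AF A (decF m)) N : ℝ)/N) < η := by
        rw [← uD_eq]; linarith
      have hev := Filter.eventually_lt_of_limsup_lt hlt (isBddAbove _)
      filter_upwards [hev, Filter.eventually_ge_atTop 1] with N h1 h2 _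
      have hN : (0:ℝ) < N := by exact_mod_cast h2
      calc (cnt (AF A (decF m)) N : ℝ) = (cnt (AF A (decF m)) N : ℝ)/N * N := by field_simp
      _ < η * N := mul_lt_mul_of_pos_right h1 hN
    · filter_upwards with N h; exact absurd h hm
  have hfreq : ∃ᶠ N : ℕ in Filter.atTop, δ - ε/2 < (cnt A N : ℝ)/N := by
    apply Filter.frequently_lt_of_lt_limsup (isCobddAbove A)
    rw [← uD_eq]; linarith
  have hev2 : ∀ᶠ N : ℕ in Filter.atTop, (8*(i+1) : ℝ) < ε * N := by
    have ht : Filter.Tendsto (fun N : ℕ => ε * N) Filter.atTop Filter.atTop :=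
      (tendsto_natCast_atTop_atTop (R := ℝ)).const_mul_atTop hε0
    exact ht.eventually_gt_atTop _
  obtain ⟨N, hNratio, hNrare, hN1, hNbig⟩ :=
    (hfreq.and_eventually (hrare.and ((Filter.eventually_ge_atTop 1).and hev2))).exists
  have hN0 : (0:ℝ) < N := by exact_mod_cast hN1
  rw [lt_div_iff₀ hN0] at hNratio
  have hcov := covering A θ Mb hθ0 hθ1 N 0
  rw [Wc_zero_left] at hcov
  -- lower bound on number of good points
  have hgcnt : (ε/2) * N - Mb ≤ (gcnt A θ Mb 0 N : ℝ) := by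
    have : θ * N = (δ - ε) * N := by rw [hθdef]
    nlinarith
  -- the set of good points avoiding all rare sets
  set Gf := (Finset.range N).filter (fun v => GoodPt A θ Mb v ∧
      ∀ m, m ≤ i → upperDensity (AF A (decF m)) ≤ 0 → v ∉ AF A (decF m)) with hGfdef
  have hgeq : gcnt A θ Mb 0 N = ((Finset.range N).filter (fun v => GoodPt A θ Mb v)).card := by
    unfold gcnt
    simp only [zero_add]
  have hsubset : (Finset.range N).filter (fun v => GoodPt A θ Mb v) ⊆
      Gf ∪ (Finset.range (i+1)).biUnion (fun m => (Finset.range N).filter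
        (fun v => upperDensity (AF A (decF m)) ≤ 0 ∧ v ∈ AF A (decF m))) := by
    intro v hv
    simp only [Finset.mem_filter, Finset.mem_range] at hv
    by_cases hav : ∀ m, m ≤ i → upperDensity (AF A (decF m)) ≤ 0 → v ∉ AF A (decF m)
    · apply Finset.mem_union_left
      rw [hGfdef]
      simp only [Finset.mem_filter, Finset.mem_range]
      exact ⟨hv.1, hv.2, hav⟩
    · push_neg at hav
      obtain ⟨m, hmi, hmrare, hmmem⟩ := hav
      apply Finset.mem_union_right
      apply Finset.mem_biUnion.mpr
      exact ⟨m, by simp [Finset.mem_range]; omega,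
        by simp only [Finset.mem_filter, Finset.mem_range]; exact ⟨hv.1, hmrare, hmmem⟩⟩
  have hcell : ∀ m ∈ Finset.range (i+1),
      (((Finset.range N).filter
        (fun v => upperDensity (AF A (decF m)) ≤ 0 ∧ v ∈ AF A (decF m))).card : ℝ)
      ≤ η * N + 1 := by
    intro m hm
    by_cases hmr : upperDensity (AF A (decF m)) ≤ 0
    · have hsub2 : (Finset.range N).filter
          (fun v => upperDensity (AF A (decF m)) ≤ 0 ∧ v ∈ AF A (decF m))
          ⊆ (Finset.range N).filter (fun v => v ∈ AF A (decF m)) := by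
        apply Finset.monotone_filter_right
        intro v _ hv
        exact hv.2
      have h1 := Finset.card_le_card hsub2
      have h2 := rangeFilter_le (AF A (decF m)) N
      have h3 := hNrare m hm hmr
      have : (((Finset.range N).filter (fun v => v ∈ AF A (decF m))).card : ℝ)
          ≤ (cnt (AF A (decF m)) N : ℝ) + 1 := by exact_mod_cast h2
      have h4 : (((Finset.range N).filter
          (fun v => upperDensity (AF A (decF m)) ≤ 0 ∧ v ∈ AF A (decF m))).card : ℝ)
          ≤ (((Finset.range N).filter (fun v => v ∈ AF A (decF m))).card : ℝ) := by
        exact_mod_cast h1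
      linarith
    · have : (Finset.range N).filter
          (fun v => upperDensity (AF A (decF m)) ≤ 0 ∧ v ∈ AF A (decF m)) = ∅ := by
        apply Finset.filter_false_of_mem
        intro v _ hv
        exact hmr hv.1
      rw [this]
      simp
      positivity
  have hbiu : ((((Finset.range (i+1)).biUnion (fun m => (Finset.range N).filter
      (fun v => upperDensity (AF A (decF m)) ≤ 0 ∧ v ∈ AF A (decF m)))).card : ℝ))
      ≤ (i+1) * (η * N + 1) := by
    have h1 := Finset.card_biUnion_le (s := Finset.range (i+1))
      (t := fun m => (Finset.range N).filter
        (fun v => upperDensity (AF A (decF m)) ≤ 0 ∧ v ∈ AF A (decF m)))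
    have h2 : ((∑ m ∈ Finset.range (i+1), ((Finset.range N).filter
        (fun v => upperDensity (AF A (decF m)) ≤ 0 ∧ v ∈ AF A (decF m))).card : ℕ) : ℝ)
        ≤ (i+1) * (η * N + 1) := by
      push_cast
      calc (∑ m ∈ Finset.range (i+1), (((Finset.range N).filter
          (fun v => upperDensity (AF A (decF m)) ≤ 0 ∧ v ∈ AF A (decF m))).card : ℝ))
          ≤ ∑ m ∈ Finset.range (i+1), (η * N + 1) := Finset.sum_le_sum hcell
      _ = (i+1) * (η * N + 1) := by
          rw [Finset.sum_const, Finset.card_range]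
          push_cast
          ring
    calc _ ≤ ((∑ m ∈ Finset.range (i+1), ((Finset.range N).filter
        (fun v => upperDensity (AF A (decF m)) ≤ 0 ∧ v ∈ AF A (decF m))).card : ℕ) : ℝ) := by
          exact_mod_cast h1
    _ ≤ _ := h2
  have hkey : (0:ℝ) < Gf.card := by
    have h1 : ((Finset.range N).filter (fun v => GoodPt A θ Mb v)).card
        ≤ Gf.card + ((Finset.range (i+1)).biUnion (fun m => (Finset.range N).filter
          (fun v => upperDensity (AF A (decF m)) ≤ 0 ∧ v ∈ AF A (decF m)))).card := by
      calc _ ≤ (Gf ∪ (Finset.range (i+1)).biUnion _).card := Finset.card_le_card hsubset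
      _ ≤ _ := Finset.card_union_le _ _
    have h1' : (gcnt A θ Mb 0 N : ℝ) ≤ (Gf.card : ℝ) +
        ((((Finset.range (i+1)).biUnion (fun m => (Finset.range N).filter
          (fun v => upperDensity (AF A (decF m)) ≤ 0 ∧ v ∈ AF A (decF m)))).card : ℝ)) := by
      rw [hgeq]
      exact_mod_cast h1
    have hη2 : ((i:ℝ)+1) * η = ε / 4 := by
      rw [hηdef]
      field_simp
    have hMb' : (Mb : ℝ) = (i:ℝ) + 1 := by rw [hMbdef]; push_cast; ring
    nlinarith
  have hGf : Gf.Nonempty := by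
    rw [← Finset.card_pos]
    exact_mod_cast hkey
  obtain ⟨v, hv⟩ := hGf
  rw [hGfdef] at hv
  simp only [Finset.mem_filter, Finset.mem_range] at hv
  exact ⟨v, hv.2.1, hv.2.2⟩

end ELUD

theorem exists_L_upper_density (A : Set ℕ) (hA : 0 < upperDensity A) :
    ∃ L : Set ℕ, lowerDensity L = upperDensity A ∧
      ∀ F : Finset ℕ, ↑F ⊆ L →
        0 < upperDensity (⋂ l ∈ F, {a : ℕ | a + l ∈ A}) := by
  classical
  have hδ1 : upperDensity A ≤ 1 := ELUD.uD_le_one A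
  set δ := upperDensity A with hδdef
  have hex : ∀ i : ℕ, ∃ n : ℕ, ELUD.GoodPt A (δ - min (1/(i+1:ℝ)) (δ/2)) (i+1) n ∧
      ∀ m, m ≤ i → upperDensity (ELUD.AF A (ELUD.decF m)) ≤ 0 → n ∉ ELUD.AF A (ELUD.decF m) :=
    fun i => ELUD.exists_pt A hA hδ1 i
  choose ns hgood havoid using hex
  set 𝒰 : Ultrafilter ℕ := Filter.hyperfilter ℕ with hUdef
  set L₀ : Set ℕ := {l | {i | ns i + l ∈ A} ∈ 𝒰} with hL₀def
  have hcnt : ∀ M : ℕ, δ * M ≤ (ELUD.cnt L₀ M : ℝ) := by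
    intro M
    rcases Nat.eq_zero_or_pos M with hM | hM
    · simp [hM, ELUD.cnt_zero]
    have hM0 : (0:ℝ) < M := by exact_mod_cast hM
    set Z : Set ℕ := ⋂ l ∈ Finset.Icc 1 M, {i | l ∈ L₀ ↔ ns i + l ∈ A} with hZdef
    have hZ : Z ∈ 𝒰 := by
      rw [hZdef, ← Ultrafilter.mem_coe, Filter.biInter_finset_mem]
      intro l _
      by_cases hl : l ∈ L₀
      · have hmem : {i | ns i + l ∈ A} ∈ 𝒰 := hl
        exact Filter.mem_of_superset hmem (fun i hi => iff_of_true hl hi)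
      · have hmem : {i | ns i + l ∈ A}ᶜ ∈ 𝒰 := Ultrafilter.compl_mem_iff_notMem.mpr hl
        exact Filter.mem_of_superset hmem (fun i hi => iff_of_false hl hi)
    have hZinf : Z.Infinite := by
      by_contra h
      rw [Set.not_infinite] at h
      exact h.notMem_hyperfilter hZ
    have hkey : ∀ j : ℕ, (δ - 1/(j+1:ℝ)) * M ≤ (ELUD.cnt L₀ M : ℝ) := by
      intro j
      obtain ⟨i, hiZ, hij⟩ := hZinf.exists_gt (max j (M-1))
      have hiM : M ≤ i + 1 := by
        have := le_trans (le_max_right j (M-1)) hij.le; omega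
      have hij' : j ≤ i := le_trans (le_max_left _ _) hij.le
      have hW := hgood i M hM hiM
      have heq : ELUD.cnt L₀ M = ELUD.Wc A (ns i) M := by
        unfold ELUD.cnt ELUD.Wc
        apply congrArg
        apply Finset.filter_congr
        intro l hl
        have hiff := Set.mem_iInter₂.mp hiZ l hl
        simpa using hiff
      rw [heq]
      have hminle : min (1/(i+1:ℝ)) (δ/2) ≤ 1/(j+1:ℝ) := by
        apply le_trans (min_le_left _ _)
        apply one_div_le_one_div_of_le (by positivity)
        have : (j:ℝ) ≤ (i:ℝ) := by exact_mod_cast hij'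
        linarith
      calc (δ - 1/(j+1:ℝ)) * M ≤ (δ - min (1/(i+1:ℝ)) (δ/2)) * M := by
            apply mul_le_mul_of_nonneg_right _ hM0.le
            linarith
      _ ≤ _ := hW
    by_contra hlt
    push_neg at hlt
    set gap : ℝ := δ * M - (ELUD.cnt L₀ M : ℝ) with hgapdef
    have hgap0 : 0 < gap := by rw [hgapdef]; linarith
    obtain ⟨j, hj⟩ := exists_nat_gt ((M:ℝ)/gap)
    have hjM : (M:ℝ)/gap < (j:ℝ) + 1 := by linarith [Nat.cast_nonneg (α := ℝ) j]
    have hj1 : (M:ℝ) < gap * ((j:ℝ)+1) := by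
      rw [div_lt_iff₀ hgap0] at hjM
      linarith
    have := hkey j
    have hj0 : (0:ℝ) < (j:ℝ) + 1 := by positivity
    have hexp : (δ - 1/(j+1:ℝ)) * M = δ * M - (M:ℝ)/((j:ℝ)+1) := by
      field_simp
    rw [hexp] at this
    have : (M:ℝ)/((j:ℝ)+1) ≥ gap := by rw [hgapdef] at *; linarith
    rw [ge_iff_le, le_div_iff₀ hj0] at this
    linarith
  obtain ⟨L, hLsub, hLlim⟩ := ELUD.thinning L₀ δ hA hcnt
  refine ⟨L, ?_, ?_⟩
  · rw [ELUD.lD_eq]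
    exact hLlim
  · intro F hF
    by_contra hpos
    have hrare : upperDensity (ELUD.AF A F) ≤ 0 := by
      apply le_of_not_gt
      exact hpos
    set idx := Encodable.encode F with hidxdef
    have hdec : ELUD.decF idx = F := ELUD.decF_encode F
    have hZF : {i | ∀ l ∈ F, ns i + l ∈ A} ∈ 𝒰 := by
      have hiz : {i | ∀ l ∈ F, ns i + l ∈ A} = ⋂ l ∈ F, {i | ns i + l ∈ A} := by
        ext i; simp
      rw [hiz, ← Ultrafilter.mem_coe, Filter.biInter_finset_mem]
      intro l hl
      exact hLsub (hF hl)
    have hsub : {i | ∀ l ∈ F, ns i + l ∈ A} ⊆ {i | i < idx} := by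
      intro i hi
      by_contra hge
      have hge' : idx ≤ i := by
        simp only [Set.mem_setOf_eq] at hge
        omega
      have hav := havoid i idx hge' (by rw [hdec]; exact hrare)
      rw [hdec] at hav
      exact hav (ELUD.mem_AF.mpr hi)
    have hfin : ({i : ℕ | i < idx}).Finite := Set.finite_Iio idx
    exact absurd hZF ((hfin.subset hsub).notMem_hyperfilter)
end

section
/- Let A ⊆ ℕ satisfy BD(A) > 0. Then for every ε > 0 there exists n ∈ ℕ such that BD(A_[n]) ≥ 1 − ε, where A_[n] ⊆ ℕ is defined by: k ∈ A_[n] if and only if [kn, kn + n − 1] ∩ A ≠ ∅. -/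
/-- `A_[n]`: the set of `k` such that the block `[kn, kn + n - 1]` meets `A`. -/
def blockSet (A : Set ℕ) (n : ℕ) : Set ℕ :=
  {k : ℕ | (A ∩ Set.Icc (k * n) (k * n + n - 1)).Nonempty}

open Filter Set

lemma banachDensity_eq (A : Set ℕ) :
    banachDensity A = Filter.atTop.limsup fun L : ℕ =>
      ⨆ m : ℕ, ((A ∩ Set.Icc m (m + L)).ncard : ℝ) / L := by
  simp only [banachDensity, Nat.card_coe_set_eq]

lemma window_card_le (A : Set ℕ) (m L : ℕ) : (A ∩ Set.Icc m (m + L)).ncard ≤ L + 1 := by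
  have h1 : (A ∩ Set.Icc m (m + L)).ncard ≤ (Set.Icc m (m + L)).ncard :=
    Set.ncard_le_ncard Set.inter_subset_right (Set.finite_Icc _ _)
  have h2 : (Set.Icc m (m + L)).ncard = L + 1 := by
    rw [show (Set.Icc m (m + L) : Set ℕ) = ↑(Finset.Icc m (m + L)) from by simp,
      Set.ncard_coe_finset, Nat.card_Icc]
    omega
  omega

lemma g_nonneg (A : Set ℕ) (L : ℕ) :
    0 ≤ ⨆ m : ℕ, ((A ∩ Set.Icc m (m + L)).ncard : ℝ) / L :=
  Real.iSup_nonneg fun m => div_nonneg (Nat.cast_nonneg _) (Nat.cast_nonneg _)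

lemma g_bddAbove (A : Set ℕ) (L : ℕ) :
    BddAbove (Set.range fun m : ℕ => ((A ∩ Set.Icc m (m + L)).ncard : ℝ) / L) := by
  refine ⟨((L : ℝ) + 1) / L, ?_⟩
  rintro x ⟨m, rfl⟩
  apply div_le_div_of_nonneg_right _ (Nat.cast_nonneg L)
  exact_mod_cast window_card_le A m L

    
lemma g_le_two (A : Set ℕ) {L : ℕ} (hL : 1 ≤ L) :
    (⨆ m : ℕ, ((A ∩ Set.Icc m (m + L)).ncard : ℝ) / L) ≤ 2 := by
  apply ciSup_le
  intro m
  rw [div_le_iff₀ (by exact_mod_cast hL : (0:ℝ) < L)]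
  have := window_card_le A m L
  have h2 : ((A ∩ Set.Icc m (m + L)).ncard : ℝ) ≤ (L : ℝ) + 1 := by exact_mod_cast this
  have h3 : (1:ℝ) ≤ L := by exact_mod_cast hL
  linarith

lemma g_bounded (A : Set ℕ) :
    Filter.atTop.IsBoundedUnder (· ≤ ·)
      (fun L : ℕ => ⨆ m : ℕ, ((A ∩ Set.Icc m (m + L)).ncard : ℝ) / L) := by
  refine ⟨2, Filter.eventually_map.mpr ?_⟩
  filter_upwards [Filter.eventually_ge_atTop 1] with L hL
  exact g_le_two A hL

lemma banachDensity_nonneg (A : Set ℕ) : 0 ≤ banachDensity A := by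
  rw [banachDensity_eq]
  exact le_limsup_of_frequently_le
    ((Filter.Eventually.of_forall (g_nonneg A)).frequently) (g_bounded A)

/-- splitting an aligned window into blocks -/
lemma sum_blocks (A : Set ℕ) (n : ℕ) : ∀ K a : ℕ,
    (A ∩ Set.Ico (a * n) ((a + K) * n)).ncard ≤
      ∑ k ∈ Finset.Ico a (a + K), (A ∩ Set.Ico (k * n) (k * n + n)).ncard := by
  intro K
  induction K with
  | zero => simp
  | succ K ih =>
    intro a
    have hsplit : Set.Ico (a * n) ((a + (K + 1)) * n) =
        Set.Ico (a * n) ((a + K) * n) ∪ Set.Ico ((a + K) * n) ((a + K) * n + n) := by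
      rw [Set.Ico_union_Ico_eq_Ico (by nlinarith) (by nlinarith)]
      congr 1
      ring
    have hsum : Finset.Ico a (a + (K + 1)) = Finset.Ico a (a + K) ∪ {a + K} := by
      rw [show a + (K+1) = (a+K) + 1 by ring]
      ext x
      simp [Finset.mem_Ico]
    rw [hsplit, Set.inter_union_distrib_left, hsum]
    calc ((A ∩ Set.Ico (a * n) ((a + K) * n)) ∪
          (A ∩ Set.Ico ((a + K) * n) ((a + K) * n + n))).ncard
        ≤ (A ∩ Set.Ico (a * n) ((a + K) * n)).ncard +
          (A ∩ Set.Ico ((a + K) * n) ((a + K) * n + n)).ncard := Set.ncard_union_le _ _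
      _ ≤ _ := by
          rw [Finset.sum_union (by simp [Finset.disjoint_singleton_right])]
          simp only [Finset.sum_singleton]
          exact Nat.add_le_add (ih a) le_rfl

lemma mem_blockSet_iff (A : Set ℕ) {n : ℕ} (hn : 0 < n) (k : ℕ) :
    k ∈ blockSet A n ↔ (A ∩ Set.Ico (k * n) (k * n + n)).Nonempty := by
  unfold blockSet
  rw [Set.mem_setOf_eq]
  have : Set.Icc (k * n) (k * n + n - 1) = Set.Ico (k * n) (k * n + n) := by
    ext x; simp only [Set.mem_Icc, Set.mem_Ico]; omega
  rw [this]

/-- the key iteration step -/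
lemma step (A : Set ℕ) {c e : ℝ} (hc : 0 ≤ c) (he : 0 ≤ e) {n : ℕ} (hn : 0 < n)
    (hP : ∀ m, ((A ∩ Set.Ico (m * n) (m * n + n)).ncard : ℝ) ≤ c * n)
    (hbd : banachDensity (blockSet A n) < e) :
    ∃ N, 0 < N ∧ ∀ m, ((A ∩ Set.Ico (m * N) (m * N + N)).ncard : ℝ) ≤ (e * c) * N := by
  classical
  set B := blockSet A n with hB
  rw [banachDensity_eq] at hbd
  have hev := eventually_lt_of_limsup_lt hbd (g_bounded B)
  obtain ⟨L₀, hL₀⟩ := Filter.eventually_atTop.mp hev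
  set L' := L₀ + 1 with hL'def
  set L := L₀ + 2 with hLdef
  refine ⟨n * L, by positivity, ?_⟩
  intro m
  -- the window card bound on B at scale L'
  have hwin : ((B ∩ Set.Icc (m * L) (m * L + L')).ncard : ℝ) ≤ e * L' := by
    have h1 := hL₀ L' (by omega)
    have h2 : ((B ∩ Set.Icc (m * L) (m * L + L')).ncard : ℝ) / L' ≤
        ⨆ m' : ℕ, ((B ∩ Set.Icc m' (m' + L')).ncard : ℝ) / L' :=
      le_ciSup (g_bddAbove B L') (m * L)
    have hL'pos : (0:ℝ) < L' := by positivity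
    have := (h2.trans h1.le)
    rw [div_le_iff₀ hL'pos] at this
    linarith [this]
  -- decompose the big block
  have e1 : m * (n * L) = (m * L) * n := by ring
  have e2 : m * (n * L) + n * L = ((m * L) + L) * n := by ring
  have hsb := sum_blocks A n L (m * L)
  -- restrict the sum to nonempty blocks
  set S := (Finset.Ico (m * L) (m * L + L)).filter (· ∈ B) with hS
  have hsum_eq : ∑ k ∈ Finset.Ico (m * L) (m * L + L), (A ∩ Set.Ico (k * n) (k * n + n)).ncard
      = ∑ k ∈ S, (A ∩ Set.Ico (k * n) (k * n + n)).ncard := by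
    rw [hS]
    rw [Finset.sum_filter_of_ne]
    intro k _ hne
    rw [mem_blockSet_iff A hn]
    rw [Set.nonempty_iff_ne_empty]
    intro hemp
    apply hne
    rw [hemp, Set.ncard_empty]
  -- card of S bounded
  have hScard : (S.card : ℝ) ≤ e * L' := by
    have hsub : (↑S : Set ℕ) ⊆ B ∩ Set.Icc (m * L) (m * L + L') := by
      intro k hk
      simp only [hS, Finset.coe_filter, Set.mem_setOf_eq, Finset.mem_Ico] at hk
      refine ⟨hk.2, hk.1.1, ?_⟩
      have : k < m * L + L := hk.1.2
      rw [hLdef] at this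
      rw [hL'def]
      omega
    have hfin : (B ∩ Set.Icc (m * L) (m * L + L')).Finite :=
      (Set.finite_Icc _ _).inter_of_right _
    have := Set.ncard_le_ncard hsub hfin
    rw [Set.ncard_coe_finset] at this
    calc (S.card : ℝ) ≤ ((B ∩ Set.Icc (m * L) (m * L + L')).ncard : ℝ) := by exact_mod_cast this
      _ ≤ e * L' := hwin
  -- combine
  calc ((A ∩ Set.Ico (m * (n * L)) (m * (n * L) + n * L)).ncard : ℝ)
      = ((A ∩ Set.Ico ((m * L) * n) (((m * L) + L) * n)).ncard : ℝ) := by rw [e2, e1]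
    _ ≤ (∑ k ∈ Finset.Ico (m * L) (m * L + L), (A ∩ Set.Ico (k * n) (k * n + n)).ncard : ℕ) := by
        exact_mod_cast hsb
    _ = ((∑ k ∈ S, (A ∩ Set.Ico (k * n) (k * n + n)).ncard : ℕ) : ℝ) := by rw [hsum_eq]
    _ = ∑ k ∈ S, ((A ∩ Set.Ico (k * n) (k * n + n)).ncard : ℝ) := by push_cast; ring
    _ ≤ ∑ _k ∈ S, c * n := Finset.sum_le_sum fun k _ => hP k
    _ = (S.card : ℝ) * (c * n) := by rw [Finset.sum_const, nsmul_eq_mul]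
    _ ≤ (e * L') * (c * n) := by
        apply mul_le_mul_of_nonneg_right hScard (by positivity)
    _ ≤ (e * (L : ℝ)) * (c * n) := by
        have hL'L : (L' : ℝ) ≤ L := by exact_mod_cast Nat.le_succ L'
        exact mul_le_mul_of_nonneg_right (mul_le_mul_of_nonneg_left hL'L he)
          (mul_nonneg hc (Nat.cast_nonneg n))
    _ = (e * c) * ((n * L : ℕ) : ℝ) := by push_cast; ring

/-- from an aligned per-block bound, a bound on the Banach density -/
lemma final (A : Set ℕ) {c : ℝ} (hc : 0 ≤ c) {n : ℕ} (hn : 0 < n)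
    (hP : ∀ m, ((A ∩ Set.Ico (m * n) (m * n + n)).ncard : ℝ) ≤ c * n) :
    banachDensity A ≤ c := by
  rw [banachDensity_eq]
  refine le_of_forall_pos_le_add ?_
  intro δ hδ
  apply Filter.limsup_le_of_le (isCoboundedUnder_le_of_le _ fun L => g_nonneg A L)
  filter_upwards [Filter.eventually_ge_atTop (max 1 ⌈2 * c * n / δ⌉₊)] with L hL
  have hL1 : 1 ≤ L := le_trans (le_max_left _ _) hL
  have hLpos : (0:ℝ) < L := by exact_mod_cast hL1
  apply ciSup_le
  intro m
  -- cover the window by K = L/n + 2 blocks starting at q = m/n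
  set q := m / n with hq
  set K := L / n + 2 with hK
  have hsub : A ∩ Set.Icc m (m + L) ⊆ A ∩ Set.Ico (q * n) ((q + K) * n) := by
    intro x hx
    refine ⟨hx.1, ?_⟩
    have hx2 := hx.2
    simp only [Set.mem_Icc] at hx2
    simp only [Set.mem_Ico]
    have h1 : q * n ≤ m := Nat.div_mul_le_self m n
    have h2 : m < q * n + n := by
      have h := (Nat.div_lt_iff_lt_mul hn).mp (Nat.lt_succ_self (m / n))
      simpa [Nat.succ_mul, add_mul, one_mul] using h
    have h3 : L < (L / n) * n + n := by
      have h := (Nat.div_lt_iff_lt_mul hn).mp (Nat.lt_succ_self (L / n))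
      simpa [Nat.succ_mul, add_mul, one_mul] using h
    have h4 : (q + K) * n = q * n + (L / n) * n + 2 * n := by rw [hK]; ring
    rw [h4]
    generalize q * n = X at h1 h2 ⊢
    generalize (L / n) * n = Y at h3 ⊢
    omega
  have hcard : ((A ∩ Set.Icc m (m + L)).ncard : ℝ) ≤ c * L + 2 * c * n := by
    have h5 : (A ∩ Set.Icc m (m + L)).ncard ≤ (A ∩ Set.Ico (q * n) ((q + K) * n)).ncard :=
      Set.ncard_le_ncard hsub ((Set.finite_Ico _ _).inter_of_right _)
    have h6 := sum_blocks A n K q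
    have h7 : ((∑ k ∈ Finset.Ico q (q + K), (A ∩ Set.Ico (k * n) (k * n + n)).ncard : ℕ) : ℝ)
        ≤ (K : ℝ) * (c * n) := by
      rw [Nat.cast_sum]
      calc ∑ k ∈ Finset.Ico q (q + K), ((A ∩ Set.Ico (k * n) (k * n + n)).ncard : ℝ)
          ≤ ∑ _k ∈ Finset.Ico q (q + K), c * n := Finset.sum_le_sum fun k _ => hP k
        _ = ((Finset.Ico q (q + K)).card : ℝ) * (c * n) := by
            rw [Finset.sum_const, nsmul_eq_mul]
        _ = (K : ℝ) * (c * n) := by rw [Nat.card_Ico, Nat.add_sub_cancel_left]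
    have h8 : ((L / n : ℕ) : ℝ) * n ≤ (L : ℝ) := by exact_mod_cast Nat.div_mul_le_self L n
    have h9 : (K : ℝ) = ((L / n : ℕ) : ℝ) + 2 := by rw [hK]; push_cast; ring
    have h10 : ((A ∩ Set.Icc m (m + L)).ncard : ℝ) ≤
        ((∑ k ∈ Finset.Ico q (q + K), (A ∩ Set.Ico (k * n) (k * n + n)).ncard : ℕ) : ℝ) := by
      exact_mod_cast le_trans h5 h6
    calc ((A ∩ Set.Icc m (m + L)).ncard : ℝ) ≤ (K : ℝ) * (c * n) := le_trans h10 h7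
      _ = ((L / n : ℕ) : ℝ) * n * c + 2 * c * n := by rw [h9]; ring
      _ ≤ c * L + 2 * c * n := by nlinarith [h8]
  rw [div_le_iff₀ hLpos]
  have h11 : 2 * c * n ≤ δ * L := by
    have h12 : (⌈2 * c * n / δ⌉₊ : ℝ) ≤ L := by
      exact_mod_cast le_trans (le_max_right _ _) hL
    have h13 : 2 * c * n / δ ≤ (L : ℝ) := le_trans (Nat.le_ceil _) h12
    rw [div_le_iff₀ hδ] at h13
    linarith
  linarith

lemma base (A : Set ℕ) : ∀ m, ((A ∩ Set.Ico (m * 1) (m * 1 + 1)).ncard : ℝ) ≤ 1 * 1 := by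
  intro m
  have h2 : (Set.Ico (m * 1) (m * 1 + 1) : Set ℕ) = {m} := by
    ext x; simp only [Set.mem_Ico, Set.mem_singleton_iff]; omega
  rw [h2]
  have h3 : (A ∩ {m}).ncard ≤ ({m} : Set ℕ).ncard :=
    Set.ncard_le_ncard Set.inter_subset_right (Set.finite_singleton m)
  rw [Set.ncard_singleton] at h3
  calc ((A ∩ ({m} : Set ℕ)).ncard : ℝ) ≤ 1 := by exact_mod_cast h3
    _ ≤ 1 * 1 := by norm_num

theorem blockSet_density (A : Set ℕ) (hA : 0 < banachDensity A) :
    ∀ ε : ℝ, 0 < ε → ∃ n : ℕ, 0 < n ∧ banachDensity (blockSet A n) ≥ 1 - ε := by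
  intro ε hε
  rcases le_or_gt (1:ℝ) ε with h1 | h1
  · exact ⟨1, one_pos, le_trans (by linarith) (banachDensity_nonneg _)⟩
  by_contra hcon
  push_neg at hcon
  have hcon' : ∀ n : ℕ, 0 < n → banachDensity (blockSet A n) < 1 - ε := fun n hn =>
    hcon n hn
  have he : 0 ≤ 1 - ε := by linarith
  have key : ∀ k : ℕ, ∃ n, 0 < n ∧
      ∀ m, ((A ∩ Set.Ico (m * n) (m * n + n)).ncard : ℝ) ≤ (1 - ε) ^ k * n := by
    intro k
    induction k with
    | zero => exact ⟨1, one_pos, by simpa using base A⟩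
    | succ k ih =>
      obtain ⟨n, hn, hPn⟩ := ih
      obtain ⟨N, hN, hPN⟩ := step A (pow_nonneg he k) he hn hPn (hcon' n hn)
      refine ⟨N, hN, fun m => ?_⟩
      calc ((A ∩ Set.Ico (m * N) (m * N + N)).ncard : ℝ) ≤ ((1 - ε) * (1 - ε) ^ k) * N := hPN m
        _ = (1 - ε) ^ (k + 1) * N := by rw [← pow_succ']
  obtain ⟨k, hk⟩ := exists_pow_lt_of_lt_one hA (by linarith : (1:ℝ) - ε < 1)
  obtain ⟨n, hn, hP⟩ := key k
  have := final A (pow_nonneg he k) hn hP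
  linarith
end
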